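/- arXiv:0904.2507 — 5 statements merged into one kernel-verified Lean document; each statement's English description precedes it below -/
import Mathlib

section
/- Let E be a real Banach space, let v_1, …, v_n ∈ E, and let σ be the weak ℓ²-norm of (v_1, …, v_n). Then for all real numbers x_1, …, x_n and x'_1, …, x'_n with |x_j| ≤ 1 and |x'_j| ≤ 1 for all j, setting z = ‖Σ_{j=1}^n x_j v_j‖ and z'_i = ‖Σ_{j≠i} x_j v_j + x'_i v_i‖ for 1 ≤ i ≤ n, one has Σ_{i : z > z'_i} (z − z'_i)² ≤ 4σ². -/
/-- **Key verification in the proof of the one-sided concentration inequality.**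
Let `E` be a real Banach space, `v 1, …, v n ∈ E`, and let `σ` be the weak `ℓ²`-norm of
`(v 1, …, v n)`. For real numbers `x j, x' j` with `|x j| ≤ 1` and `|x' j| ≤ 1`, set
`z = ‖∑ x j • v j‖` and `z' i = ‖∑_{j ≠ i} x j • v j + x' i • v i‖`. Then
`∑_{i : z > z' i} (z - z' i)² ≤ 4 σ²`. -/
theorem sum_sq_dev_le_four_weak_l2_sq
    {E : Type} [NormedAddCommGroup E] [NormedSpace ℝ E] [CompleteSpace E]
    {n : ℕ} (v : Fin n → E) (σ : ℝ)
    (hσ : σ = sSup {r : ℝ | ∃ a : Fin n → ℝ,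
      (∑ j, |a j| ^ 2) ≤ 1 ∧ r = ‖∑ j, a j • v j‖})
    (x x' : Fin n → ℝ) (hx : ∀ j, |x j| ≤ 1) (hx' : ∀ j, |x' j| ≤ 1)
    (z : ℝ) (hz : z = ‖∑ j, x j • v j‖)
    (z' : Fin n → ℝ)
    (hz' : ∀ i, z' i = ‖∑ j, Function.update x i (x' i) j • v j‖) :
    (∑ i, if z' i < z then (z - z' i) ^ 2 else 0) ≤ 4 * σ ^ 2 := by
  set S : Set ℝ := {r : ℝ | ∃ a : Fin n → ℝ,
      (∑ j, |a j| ^ 2) ≤ 1 ∧ r = ‖∑ j, a j • v j‖} with hS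
  -- S is bounded above
  have hbdd : BddAbove S := by
    refine ⟨∑ j, ‖v j‖, ?_⟩
    rintro r ⟨a, ha, rfl⟩
    calc ‖∑ j, a j • v j‖ ≤ ∑ j, ‖a j • v j‖ := norm_sum_le _ _
      _ ≤ ∑ j, ‖v j‖ := by
          refine Finset.sum_le_sum fun j _ => ?_
          rw [norm_smul, Real.norm_eq_abs]
          have h1 : |a j| ≤ 1 := by
            have h2 : |a j| ^ 2 ≤ ∑ k, |a k| ^ 2 :=
              Finset.single_le_sum (f := fun k => |a k| ^ 2)
                (fun k _ => by positivity) (Finset.mem_univ j)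
            nlinarith [abs_nonneg (a j)]
          nlinarith [norm_nonneg (v j), abs_nonneg (a j)]
  have hmem0 : (0 : ℝ) ∈ S := ⟨0, by simp, by simp⟩
  have hσ0 : 0 ≤ σ := hσ ▸ le_csSup hbdd hmem0
  by_cases hSz : (∑ j, x j • v j) = 0
  · have hz0 : z = 0 := by rw [hz, hSz, norm_zero]
    have hall : ∀ i : Fin n, (if z' i < z then (z - z' i) ^ 2 else 0) = 0 := by
      intro i
      have h : ¬ z' i < z := by
        rw [hz0, hz' i]; exact not_lt.2 (norm_nonneg _)
      simp [h]
    rw [Finset.sum_congr rfl fun i _ => hall i, Finset.sum_const, smul_zero]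
    positivity
  · obtain ⟨φ, hφ1, hφS⟩ := exists_dual_vector ℝ (∑ j, x j • v j) (norm_ne_zero_iff.2 hSz)
    have hφnorm : ∀ y : E, φ y ≤ ‖y‖ := fun y => by
      calc φ y ≤ |φ y| := le_abs_self _
        _ = ‖φ y‖ := (Real.norm_eq_abs _).symm
        _ ≤ ‖φ‖ * ‖y‖ := φ.le_opNorm y
        _ = ‖y‖ := by rw [hφ1, one_mul]
    have hφSreal : φ (∑ j, x j • v j) = z := by
      rw [hz]; exact_mod_cast hφS
    -- key: ∑ φ(v j)^2 ≤ σ^2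
    have hkey : (∑ j, (φ (v j)) ^ 2) ≤ σ ^ 2 := by
      set T : ℝ := Real.sqrt (∑ j, (φ (v j)) ^ 2) with hT
      have hsum_nonneg : 0 ≤ ∑ j, (φ (v j)) ^ 2 :=
        Finset.sum_nonneg fun j _ => sq_nonneg _
      have hT2 : T ^ 2 = ∑ j, (φ (v j)) ^ 2 := Real.sq_sqrt hsum_nonneg
      by_cases hT0 : T = 0
      · rw [← hT2, hT0]; simpa using sq_nonneg σ
      · have hTpos : 0 < T := lt_of_le_of_ne (Real.sqrt_nonneg _) (Ne.symm hT0)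
        have hcoef : (∑ j, |φ (v j) / T| ^ 2) ≤ 1 := by
          have heq : (∑ j, |φ (v j) / T| ^ 2) = (∑ j, (φ (v j)) ^ 2) / T ^ 2 := by
            rw [Finset.sum_div]
            exact Finset.sum_congr rfl fun j _ => by rw [sq_abs, div_pow]
          rw [heq, ← hT2, div_self (by positivity)]
        have hle : T ≤ ‖∑ j, (φ (v j) / T) • v j‖ := by
          have h1 := hφnorm (∑ j, (φ (v j) / T) • v j)
          have heq : φ (∑ j, (φ (v j) / T) • v j) = T := by
            rw [map_sum]
            have h2 : (∑ j, φ ((φ (v j) / T) • v j)) = (∑ j, (φ (v j)) ^ 2) / T := by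
              rw [Finset.sum_div]
              refine Finset.sum_congr rfl fun j _ => ?_
              rw [map_smul, smul_eq_mul]; ring
            rw [h2, ← hT2, sq]
            field_simp
          linarith [heq ▸ h1]
        have hge : ‖∑ j, (φ (v j) / T) • v j‖ ≤ σ := by
          rw [hσ]
          exact le_csSup hbdd ⟨fun j => φ (v j) / T, hcoef, rfl⟩
        have hTle : T ≤ σ := le_trans hle hge
        calc (∑ j, (φ (v j)) ^ 2) = T ^ 2 := hT2.symm
          _ ≤ σ ^ 2 := by nlinarith
    -- termwise bound
    have hterm : ∀ i : Fin n,
        (if z' i < z then (z - z' i) ^ 2 else 0) ≤ 4 * (φ (v i)) ^ 2 := by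
      intro i
      by_cases hi : z' i < z
      · simp only [hi, if_true]
        have hdiff : (∑ j, x j • v j) - (∑ j, Function.update x i (x' i) j • v j)
            = (x i - x' i) • v i := by
          rw [← Finset.sum_sub_distrib, Finset.sum_eq_single i]
          · rw [Function.update_self, ← sub_smul]
          · intro j _ hj
            rw [Function.update_of_ne hj, sub_self]
          · intro h; exact absurd (Finset.mem_univ i) h
        have hle : z - z' i ≤ (x i - x' i) * φ (v i) := by
          have h1 : φ (∑ j, Function.update x i (x' i) j • v j) ≤ z' i := by
            rw [hz' i]; exact hφnorm _
          have h3 : φ (∑ j, x j • v j) - φ (∑ j, Function.update x i (x' i) j • v j)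
              = (x i - x' i) * φ (v i) := by
            rw [← map_sub, hdiff, map_smul, smul_eq_mul]
          linarith [hφSreal ▸ h3]
        have habs : |x i - x' i| ≤ 2 := by
          have h1 := abs_le.1 (hx i); have h2 := abs_le.1 (hx' i)
          rw [abs_le]; constructor <;> linarith [h1.1, h1.2, h2.1, h2.2]
        have hsq4 : (x i - x' i) ^ 2 ≤ 4 := by
          nlinarith [sq_abs (x i - x' i), abs_nonneg (x i - x' i)]
        have hpos : 0 < z - z' i := by linarith
        calc (z - z' i) ^ 2 ≤ ((x i - x' i) * φ (v i)) ^ 2 := by nlinarith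
          _ = (x i - x' i) ^ 2 * (φ (v i)) ^ 2 := by ring
          _ ≤ 4 * (φ (v i)) ^ 2 :=
              mul_le_mul_of_nonneg_right hsq4 (sq_nonneg _)
      · simp only [hi, if_false]
        positivity
    calc (∑ i, if z' i < z then (z - z' i) ^ 2 else 0)
        ≤ ∑ i, 4 * (φ (v i)) ^ 2 := Finset.sum_le_sum fun i _ => hterm i
      _ = 4 * ∑ i, (φ (v i)) ^ 2 := by rw [Finset.mul_sum]
      _ ≤ 4 * σ ^ 2 := by linarith [hkey]
end

section
/- There is a numerical constant C₀ > 0 such that for every finite subset A ⊆ ℤ with n = |A| ≥ 2, every family of complex numbers (a_j)_{j∈A} with Σ_{j∈A} |a_j|² ≤ 1, and every real p ≥ 2, one has ‖Σ_{j∈A} a_j e_j‖_{L^p(𝕋)} ≤ C₀ √p · √(n / log n). -/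
open Real MeasureTheory intervalIntegral

private lemma int_exp_integral (m : ℤ) :
    (∫ t in (0:ℝ)..(2 * π), Complex.exp (m * t * Complex.I)) =
      if m = 0 then ((2 * π : ℝ) : ℂ) else 0 := by
  split_ifs with hm
  · simp [hm]
  · have hc : (m : ℂ) * Complex.I ≠ 0 := by
      simp [Complex.I_ne_zero, hm]
    have h : ∀ t : ℝ, (m : ℂ) * t * Complex.I = ((m : ℂ) * Complex.I) * t := fun t => by ring
    simp_rw [h]
    rw [integral_exp_mul_complex hc]
    have h1 : Complex.exp ((m : ℂ) * Complex.I * (2 * (π:ℂ))) = 1 := by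
      rw [show (m : ℂ) * Complex.I * (2 * (π:ℂ)) = m * (2 * π * Complex.I) by ring]
      exact Complex.exp_int_mul_two_pi_mul_I m
    simp [h1]

private lemma l2_identity (A : Finset ℤ) (a : ℤ → ℂ) :
    (∫ t in (0:ℝ)..(2 * π), ‖∑ j ∈ A, a j * Complex.exp (j * t * Complex.I)‖ ^ 2) =
      2 * π * ∑ j ∈ A, ‖a j‖ ^ 2 := by
  set G : ℝ → ℂ := fun t => ∑ j ∈ A, ∑ k ∈ A,
      a j * (starRingEnd ℂ) (a k) * Complex.exp (((j : ℂ) - k) * t * Complex.I) with hG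
  have hGcont : Continuous G := by
    apply continuous_finset_sum; intro j _; apply continuous_finset_sum; intro k _
    exact continuous_const.mul (Complex.continuous_exp.comp (by continuity))
  have key : ∀ t : ℝ, (‖∑ j ∈ A, a j * Complex.exp (j * t * Complex.I)‖ : ℝ) ^ 2 = (G t).re := by
    intro t
    have h1 : ((‖∑ j ∈ A, a j * Complex.exp (j * t * Complex.I)‖ : ℝ) ^ 2 : ℝ)
        = ((∑ j ∈ A, a j * Complex.exp (j * t * Complex.I)) *
            (starRingEnd ℂ) (∑ k ∈ A, a k * Complex.exp (k * t * Complex.I))).re := by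
      rw [Complex.mul_conj]
      simp [Complex.normSq_eq_norm_sq, ← Complex.ofReal_pow]
    rw [h1, hG]
    congr 1
    rw [map_sum, Finset.sum_mul_sum]
    refine Finset.sum_congr rfl fun j _ => Finset.sum_congr rfl fun k _ => ?_
    rw [map_mul]
    have h2 : (starRingEnd ℂ) (Complex.exp (k * t * Complex.I))
        = Complex.exp (-((k:ℂ) * t * Complex.I)) := by
      rw [← Complex.exp_conj]
      congr 1
      simp only [map_mul, Complex.conj_I, Complex.conj_ofReal, map_intCast]
      ring
    rw [h2, mul_mul_mul_comm, ← Complex.exp_add]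
    congr 2
    ring
  calc (∫ t in (0:ℝ)..(2 * π), ‖∑ j ∈ A, a j * Complex.exp (j * t * Complex.I)‖ ^ 2)
      = ∫ t in (0:ℝ)..(2 * π), (G t).re := by
        apply intervalIntegral.integral_congr; intro t _; exact key t
    _ = (∫ t in (0:ℝ)..(2 * π), G t).re := by
        have h := Complex.reCLM.intervalIntegral_comp_comm (μ := MeasureTheory.volume)
          (hGcont.intervalIntegrable 0 (2 * π))
        simpa using h
    _ = 2 * π * ∑ j ∈ A, ‖a j‖ ^ 2 := by
        have hsplit : (∫ t in (0:ℝ)..(2 * π), G t)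
            = ∑ j ∈ A, ∑ k ∈ A, a j * (starRingEnd ℂ) (a k) *
                (if (j - k : ℤ) = 0 then ((2 * π : ℝ) : ℂ) else 0) := by
          rw [hG, intervalIntegral.integral_finset_sum]
          · refine Finset.sum_congr rfl fun j _ => ?_
            rw [intervalIntegral.integral_finset_sum]
            · refine Finset.sum_congr rfl fun k _ => ?_
              rw [intervalIntegral.integral_const_mul]
              congr 1
              have : ∀ t : ℝ, ((j : ℂ) - k) * t * Complex.I
                  = ((j - k : ℤ) : ℂ) * t * Complex.I := by intro t; push_cast; ring
              simp_rw [this]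
              exact int_exp_integral (j - k)
            · intro k _
              exact (continuous_const.mul (Complex.continuous_exp.comp
                (by continuity))).intervalIntegrable 0 (2 * π)
          · intro j _
            apply Continuous.intervalIntegrable
            apply continuous_finset_sum; intro k _
            exact continuous_const.mul (Complex.continuous_exp.comp (by continuity))
        rw [hsplit]
        have hdiag : ∀ j ∈ A, (∑ k ∈ A, a j * (starRingEnd ℂ) (a k) *
            (if (j - k : ℤ) = 0 then ((2 * π : ℝ) : ℂ) else 0))
            = a j * (starRingEnd ℂ) (a j) * ((2 * π : ℝ) : ℂ) := by
          intro j hj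
          rw [Finset.sum_eq_single j]
          · simp
          · intro k _ hk
            have : (j - k : ℤ) ≠ 0 := sub_ne_zero.mpr (Ne.symm hk)
            simp [this]
          · intro h; exact absurd hj h
        rw [Finset.sum_congr rfl hdiag, Complex.re_sum]
        rw [Finset.mul_sum]
        refine Finset.sum_congr rfl fun j _ => ?_
        rw [Complex.mul_conj]
        rw [← Complex.ofReal_mul]
        rw [Complex.ofReal_re]
        rw [Complex.normSq_eq_norm_sq]
        ring

private lemma sqrt_le_exp' {x : ℝ} (hx : 0 ≤ x) : Real.sqrt x ≤ Real.exp x := by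
  have h1 : Real.sqrt x ≤ Real.sqrt (Real.exp x) :=
    Real.sqrt_le_sqrt (by linarith [Real.add_one_le_exp x])
  have h2 : Real.sqrt (Real.exp x) = Real.exp (x / 2) := by
    rw [← Real.exp_half]
  have h3 : Real.exp (x / 2) ≤ Real.exp x := Real.exp_le_exp.mpr (by linarith)
  linarith [h1, h2 ▸ h1]

private lemma final_ineq {n p : ℝ} (hn : 2 ≤ n) (hp : 2 ≤ p) :
    n ^ ((p - 2) / (2 * p)) ≤ Real.sqrt p * Real.sqrt (n / Real.log n) := by
  have hn0 : (0:ℝ) < n := by linarith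
  have hL : 0 < Real.log n := Real.log_pos (by linarith)
  have hp0 : (0:ℝ) < p := by linarith
  have hX : (0:ℝ) < n ^ ((1:ℝ)/p) := Real.rpow_pos_of_pos hn0 _
  have key : Real.sqrt (Real.log n) ≤ Real.sqrt p * n ^ ((1:ℝ)/p) := by
    have h2 : n ^ ((1:ℝ)/p) = Real.exp (Real.log n / p) := by
      rw [Real.rpow_def_of_pos hn0]; ring_nf
    have h3 : Real.sqrt (Real.log n) = Real.sqrt p * Real.sqrt (Real.log n / p) := by
      rw [← Real.sqrt_mul hp0.le, mul_div_cancel₀ _ (ne_of_gt hp0)]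
    rw [h2, h3]
    exact mul_le_mul_of_nonneg_left (sqrt_le_exp' (by positivity)) (Real.sqrt_nonneg p)
  have e1 : (p - 2) / (2 * p) = 1/2 + (-(1/p)) := by field_simp; ring
  rw [e1, Real.rpow_add hn0, Real.rpow_neg hn0.le, Real.sqrt_div hn0.le,
    ← Real.sqrt_eq_rpow]
  have hLs : 0 < Real.sqrt (Real.log n) := Real.sqrt_pos.mpr hL
  calc Real.sqrt n * (n ^ ((1:ℝ)/p))⁻¹
      ≤ Real.sqrt n * (Real.sqrt p / Real.sqrt (Real.log n)) := by
        refine mul_le_mul_of_nonneg_left ?_ (Real.sqrt_nonneg n)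
        rw [inv_eq_one_div, div_le_div_iff₀ hX hLs, one_mul]
        exact key
    _ = Real.sqrt p * (Real.sqrt n / Real.sqrt (Real.log n)) := by ring

/-- **`L^p` bound for unimodular trigonometric sums (weak `ℓ²`-norm lemma).**
There is a numerical constant `C₀ > 0` such that for every finite `A ⊆ ℤ` with
`n = |A| ≥ 2`, every family `(a_j)_{j ∈ A}` of complex numbers with `∑ |a_j|² ≤ 1`, and
every real `p ≥ 2`, the `L^p(𝕋)` norm (normalized Haar measure on `𝕋 = ℝ/2πℤ`) of
`∑_{j ∈ A} a_j e_j` is at most `C₀ √p √(n / log n)`. -/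
theorem lp_bound_trig_sum_weak_l2 :
    ∃ C₀ : ℝ, 0 < C₀ ∧
      ∀ (A : Finset ℤ), 2 ≤ A.card →
      ∀ (a : ℤ → ℂ), (∑ j ∈ A, ‖a j‖ ^ 2) ≤ 1 →
      ∀ (p : ℝ), 2 ≤ p →
        ((1 / (2 * π)) * ∫ t in (0:ℝ)..(2 * π),
            ‖∑ j ∈ A, a j * Complex.exp (j * t * Complex.I)‖ ^ p) ^ (1 / p)
          ≤ C₀ * Real.sqrt p * Real.sqrt ((A.card : ℝ) / Real.log (A.card : ℝ)) := by
  refine ⟨1, one_pos, fun A hA a ha p hp => ?_⟩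
  set F : ℝ → ℂ := fun t => ∑ j ∈ A, a j * Complex.exp (j * t * Complex.I) with hF
  have hFcont : Continuous F := by
    apply continuous_finset_sum; intro j _
    exact continuous_const.mul (Complex.continuous_exp.comp (by continuity))
  set nR : ℝ := (A.card : ℝ) with hnR
  have hnR2 : (2:ℝ) ≤ nR := by rw [hnR]; exact_mod_cast hA
  have hnR0 : (0:ℝ) < nR := by linarith
  have hp0 : (0:ℝ) < p := by linarith
  have hπ : (0:ℝ) < π := Real.pi_pos
  -- sum of squares nonneg pieces
  have haj_nonneg : (0:ℝ) ≤ ∑ j ∈ A, ‖a j‖ ^ 2 := Finset.sum_nonneg fun j _ => by positivity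
  -- pointwise bound ‖F t‖ ≤ √n
  have hFbound : ∀ t : ℝ, ‖F t‖ ≤ Real.sqrt nR := by
    intro t
    have h1 : ‖F t‖ ≤ ∑ j ∈ A, ‖a j‖ := by
      refine (norm_sum_le _ _).trans (le_of_eq (Finset.sum_congr rfl fun j _ => ?_))
      rw [norm_mul]
      have : ‖Complex.exp ((j:ℂ) * t * Complex.I)‖ = 1 := by
        rw [Complex.norm_exp]
        simp
      rw [this, mul_one]
    have h2 : (∑ j ∈ A, ‖a j‖) ^ 2 ≤ (A.card : ℝ) * ∑ j ∈ A, ‖a j‖ ^ 2 := by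
      exact_mod_cast sq_sum_le_card_mul_sum_sq (s := A) (f := fun j => ‖a j‖)
    have h3 : (∑ j ∈ A, ‖a j‖) ^ 2 ≤ nR := by
      calc (∑ j ∈ A, ‖a j‖) ^ 2 ≤ nR * ∑ j ∈ A, ‖a j‖ ^ 2 := h2
        _ ≤ nR * 1 := mul_le_mul_of_nonneg_left ha hnR0.le
        _ = nR := mul_one nR
    have h4 : ∑ j ∈ A, ‖a j‖ ≤ Real.sqrt nR := by
      have := Real.sqrt_le_sqrt h3
      rwa [Real.sqrt_sq (Finset.sum_nonneg fun j _ => norm_nonneg _)] at this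
    linarith
  -- pointwise rpow bound
  have hpt : ∀ t : ℝ, ‖F t‖ ^ p ≤ Real.sqrt nR ^ (p - 2) * ‖F t‖ ^ 2 := by
    intro t
    rcases eq_or_lt_of_le (norm_nonneg (F t)) with h0 | h0
    · rw [← h0, Real.zero_rpow (by linarith : p ≠ 0)]
      positivity
    · have hsplit : ‖F t‖ ^ p = ‖F t‖ ^ (p - 2) * ‖F t‖ ^ (2:ℕ) := by
        rw [← Real.rpow_natCast (‖F t‖) 2, ← Real.rpow_add h0]
        norm_num
      rw [hsplit]
      exact mul_le_mul_of_nonneg_right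
        (Real.rpow_le_rpow (norm_nonneg _) (hFbound t) (by linarith)) (by positivity)
  -- integrability
  have hIntp : IntervalIntegrable (fun t => ‖F t‖ ^ p) MeasureTheory.volume 0 (2 * π) := by
    apply Continuous.intervalIntegrable
    exact (hFcont.norm).rpow_const fun t => Or.inr (by linarith)
  have hInt2 : IntervalIntegrable (fun t => Real.sqrt nR ^ (p - 2) * ‖F t‖ ^ 2)
      MeasureTheory.volume 0 (2 * π) := by
    apply Continuous.intervalIntegrable
    exact continuous_const.mul ((hFcont.norm).pow 2)
  -- integral bound
  have hIle : (∫ t in (0:ℝ)..(2 * π), ‖F t‖ ^ p)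
      ≤ Real.sqrt nR ^ (p - 2) * (2 * π) := by
    calc (∫ t in (0:ℝ)..(2 * π), ‖F t‖ ^ p)
        ≤ ∫ t in (0:ℝ)..(2 * π), Real.sqrt nR ^ (p - 2) * ‖F t‖ ^ 2 := by
          apply intervalIntegral.integral_mono_on (by positivity) hIntp hInt2
          intro t _; exact hpt t
      _ = Real.sqrt nR ^ (p - 2) * ∫ t in (0:ℝ)..(2 * π), ‖F t‖ ^ 2 :=
          intervalIntegral.integral_const_mul _ _
      _ = Real.sqrt nR ^ (p - 2) * (2 * π * ∑ j ∈ A, ‖a j‖ ^ 2) := by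
          rw [l2_identity A a]
      _ ≤ Real.sqrt nR ^ (p - 2) * (2 * π * 1) := by
          have hc : (0:ℝ) ≤ Real.sqrt nR ^ (p - 2) := by positivity
          apply mul_le_mul_of_nonneg_left _ hc
          have : (0:ℝ) < 2 * π := by linarith
          nlinarith [ha]
      _ = Real.sqrt nR ^ (p - 2) * (2 * π) := by ring
  have hInonneg : (0:ℝ) ≤ ∫ t in (0:ℝ)..(2 * π), ‖F t‖ ^ p := by
    apply intervalIntegral.integral_nonneg (by positivity)
    intro t _; positivity
  set X : ℝ := (1 / (2 * π)) * ∫ t in (0:ℝ)..(2 * π), ‖F t‖ ^ p with hX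
  have hXnonneg : 0 ≤ X := by positivity
  have hXle : X ≤ Real.sqrt nR ^ (p - 2) := by
    rw [hX]
    rw [div_mul_eq_mul_div, one_mul, div_le_iff₀ (by linarith : (0:ℝ) < 2 * π)]
    linarith [hIle]
  have hmain : X ^ (1 / p) ≤ nR ^ ((p - 2) / (2 * p)) := by
    have h1 : X ^ (1 / p) ≤ (Real.sqrt nR ^ (p - 2)) ^ (1 / p) :=
      Real.rpow_le_rpow hXnonneg hXle (by positivity)
    have h2 : (Real.sqrt nR ^ (p - 2)) ^ (1 / p) = nR ^ ((p - 2) / (2 * p)) := by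
      rw [Real.sqrt_eq_rpow, ← Real.rpow_mul hnR0.le, ← Real.rpow_mul hnR0.le]
      congr 1
      field_simp
    linarith [h2 ▸ h1]
  calc X ^ (1 / p) ≤ nR ^ ((p - 2) / (2 * p)) := hmain
    _ ≤ Real.sqrt p * Real.sqrt (nR / Real.log nR) := final_ineq hnR2 hp
    _ = 1 * Real.sqrt p * Real.sqrt (nR / Real.log nR) := by ring
end

section
/- Let α > 1, β > α, and M_n = n^{βn}. Let (ε_k)_{k ≥ 16} be independent {0,1}-valued random variables with E[ε_k] = δ_k = c (log k)^α / (k (log log k)^{α+1}), where c > 0 is small enough that δ_k ≤ 1 for all k ≥ 16, and let Λ(ω) = {k ≥ 16 : ε_k(ω) = 1}. Then there exist constants 0 < c₁ ≤ c₂ (depending only on c, α, β) such that almost surely, for all sufficiently large n: c₁ n^{α+1} ≤ |Λ(ω) ∩ [1, M_n]| ≤ c₂ n^{α+1} and c₁ n^{α} ≤ |Λ(ω) ∩ [M_n, M_{n+1})| ≤ c₂ n^{α}. -/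
open MeasureTheory ProbabilityTheory Real

/-- The selector means `δ_k = c (log k)^α / (k (log log k)^{α+1})`. -/
noncomputable def selectorMean (c α : ℝ) (k : ℕ) : ℝ :=
  c * Real.log (k : ℝ) ^ α / ((k : ℝ) * Real.log (Real.log (k : ℝ)) ^ (α + 1))

/-- The sequence `M_n = n^{βn}`. -/
noncomputable def Mseq (β : ℝ) (n : ℕ) : ℝ := (n : ℝ) ^ (β * n)

lemma rsbg_log_telescope (A B : ℕ) (hA : 1 ≤ A) (h : A ≤ B) :
    ∑ k ∈ Finset.Ico A B, (Real.log (k + 1) - Real.log k) = Real.log B - Real.log A := by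
  induction B, h using Nat.le_induction with
  | base => simp
  | succ B hB ih =>
      rw [Finset.sum_Ico_succ_top hB, ih]
      push_cast
      ring

lemma rsbg_harmonic_lower (A B : ℕ) (hA : 1 ≤ A) (h : A ≤ B) :
    Real.log B - Real.log A ≤ ∑ k ∈ Finset.Ico A B, ((k : ℝ))⁻¹ := by
  rw [← rsbg_log_telescope A B hA h]
  apply Finset.sum_le_sum
  intro k hk
  have hk1 : 1 ≤ k := le_trans hA (Finset.mem_Ico.mp hk).1
  have hkpos : (0:ℝ) < k := by exact_mod_cast hk1
  have h1 : Real.log (k + 1) - Real.log k = Real.log ((k+1)/k) := by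
    rw [Real.log_div (by positivity) (ne_of_gt hkpos)]
  rw [h1]
  have := Real.log_le_sub_one_of_pos (show (0:ℝ) < (k+1)/k by positivity)
  calc Real.log ((k+1)/k) ≤ (k+1)/k - 1 := this
    _ = (k:ℝ)⁻¹ := by field_simp; ring

lemma rsbg_harmonic_upper (A B : ℕ) (hA : 1 ≤ A) (h : A ≤ B) :
    ∑ k ∈ Finset.Ico A B, ((k : ℝ))⁻¹ ≤ 2 * (Real.log B - Real.log A) := by
  rw [← rsbg_log_telescope A B hA h, Finset.mul_sum]
  apply Finset.sum_le_sum
  intro k hk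
  have hk1 : 1 ≤ k := le_trans hA (Finset.mem_Ico.mp hk).1
  have hkpos : (0:ℝ) < k := by exact_mod_cast hk1
  have h2 : Real.log k - Real.log (k+1) ≤ -(1/(k+1)) := by
    have h1 : Real.log k - Real.log (k + 1) = Real.log (k/(k+1)) := by
      rw [Real.log_div (ne_of_gt hkpos) (by positivity)]
    rw [h1]
    have := Real.log_le_sub_one_of_pos (show (0:ℝ) < k/(k+1) by positivity)
    calc Real.log (k/(k+1)) ≤ k/(k+1) - 1 := this
      _ = -(1/(k+1)) := by field_simp; ring
  have h3 : (1:ℝ)/(k+1) ≤ Real.log (k+1) - Real.log k := by linarith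
  have h4 : ((k:ℝ))⁻¹ ≤ 2 * (1/(k+1)) := by
    rw [inv_eq_one_div, mul_one_div, div_le_div_iff₀ hkpos (by positivity)]
    have : (1:ℝ) ≤ k := by exact_mod_cast hk1
    linarith
  calc ((k:ℝ))⁻¹ ≤ 2 * (1/(k+1)) := h4
    _ ≤ 2 * (Real.log (k+1) - Real.log k) := by
        exact mul_le_mul_of_nonneg_left h3 (by norm_num)

lemma rsbg_log_Mseq (β : ℝ) {n : ℕ} (hn : 1 ≤ n) :
    Real.log (Mseq β n) = β * n * Real.log n := by
  have hn0 : (0:ℝ) < n := by exact_mod_cast hn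
  rw [Mseq, Real.log_rpow hn0]

lemma rsbg_Mseq_pos (β : ℝ) {n : ℕ} (hn : 1 ≤ n) : 0 < Mseq β n := by
  have hn0 : (0:ℝ) < n := by exact_mod_cast hn
  exact Real.rpow_pos_of_pos hn0 _

lemma rsbg_Mseq_mono (β : ℝ) (hβ : 0 < β) {m n : ℕ} (hm : 1 ≤ m) (h : m ≤ n) :
    Mseq β m ≤ Mseq β n := by
  have hm0 : (0:ℝ) < m := by exact_mod_cast hm
  have hmn : (m:ℝ) ≤ n := by exact_mod_cast h
  have h1 : (1:ℝ) ≤ n := by exact_mod_cast le_trans hm h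
  calc Mseq β m = (m:ℝ) ^ (β * m) := rfl
    _ ≤ (n:ℝ) ^ (β * m) := by
        exact Real.rpow_le_rpow (le_of_lt hm0) hmn (by positivity)
    _ ≤ (n:ℝ) ^ (β * n) := by
        apply Real.rpow_le_rpow_of_exponent_le h1
        have : (m:ℝ) ≤ n := hmn
        nlinarith
    _ = Mseq β n := rfl

lemma rsbg_sixteen_le_Mseq {β : ℝ} (hβ : 1 ≤ β) {n : ℕ} (hn : 4 ≤ n) :
    (16 : ℝ) ≤ Mseq β n := by
  have h4 : Mseq β 4 ≤ Mseq β n := rsbg_Mseq_mono β (by linarith) (by norm_num) hn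
  refine le_trans ?_ h4
  have : ((4:ℕ):ℝ) ^ ((2:ℕ):ℝ) ≤ ((4:ℕ):ℝ) ^ (β * (4:ℕ)) := by
    apply Real.rpow_le_rpow_of_exponent_le (by norm_num)
    push_cast; nlinarith
  rw [Real.rpow_natCast] at this
  calc (16:ℝ) = ((4:ℕ):ℝ)^(2:ℕ) := by norm_num
    _ ≤ Mseq β 4 := this

lemma rsbg_one_lt_log {n : ℕ} (hn : 4 ≤ n) : 1 < Real.log n := by
  have : Real.exp 1 < 4 := by
    have := Real.exp_one_lt_d9
    linarith
  have h4 : (4:ℝ) ≤ n := by exact_mod_cast hn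
  have := Real.exp_log (show (0:ℝ) < n by linarith)
  rw [show (1:ℝ) = Real.log (Real.exp 1) from (Real.log_exp 1).symm]
  exact Real.log_lt_log (Real.exp_pos 1) (by linarith)

set_option maxHeartbeats 1000000 in
lemma rsbg_block_bounds (α β c : ℝ) (hα : 1 < α) (hβ : α < β) (hc : 0 < c)
    {n : ℕ} (hn : 4 ≤ n) :
    (c * β ^ (α+1) / (2 * (Real.log β + 4) ^ (α+1))) * (n:ℝ) ^ α
      ≤ ∑ k ∈ Finset.Ico ⌈Mseq β n⌉₊ ⌈Mseq β (n+1)⌉₊, selectorMean c α k ∧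
    ∑ k ∈ Finset.Ico ⌈Mseq β n⌉₊ ⌈Mseq β (n+1)⌉₊, selectorMean c α k
      ≤ (2 * (Real.log 2 + 3*β) * c * (4*β) ^ α) * (n:ℝ) ^ α := by
  have hβ1 : 1 < β := lt_trans hα hβ
  have hβ0 : 0 < β := by linarith
  have hα0 : (0:ℝ) ≤ α := by linarith
  have hn1 : 1 ≤ n := by omega
  have hn1' : (1:ℝ) ≤ n := by exact_mod_cast hn1
  have hn4 : (4:ℝ) ≤ n := by exact_mod_cast hn
  have hln : 1 < Real.log n := rsbg_one_lt_log hn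
  have hln0 : 0 < Real.log n := by linarith
  have hlogβ : 0 < Real.log β := Real.log_pos hβ1
  set Mn := Mseq β n with hMn_def
  set Mn1 := Mseq β (n+1) with hMn1_def
  have hM16 : (16:ℝ) ≤ Mn := rsbg_sixteen_le_Mseq (le_of_lt hβ1) hn
  have hM16' : (16:ℝ) ≤ Mn1 := rsbg_sixteen_le_Mseq (le_of_lt hβ1) (by omega)
  have hMpos : 0 < Mn := by linarith
  have hMpos' : 0 < Mn1 := by linarith
  set A := ⌈Mn⌉₊ with hA_def
  set B := ⌈Mn1⌉₊ with hB_def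
  have hMA : Mn ≤ A := Nat.le_ceil _
  have hMB : Mn1 ≤ B := Nat.le_ceil _
  have hA16 : (16:ℝ) ≤ (A:ℝ) := le_trans hM16 hMA
  have hA16' : 16 ≤ A := by exact_mod_cast hA16
  have hA1 : 1 ≤ A := by omega
  have hAB : A ≤ B := Nat.ceil_le_ceil (rsbg_Mseq_mono β hβ0 hn1 (by omega))
  have hAle : (A:ℝ) ≤ 2 * Mn := by
    have := Nat.ceil_lt_add_one (le_of_lt hMpos)
    push_cast at this ⊢
    linarith
  have hBle : (B:ℝ) ≤ 2 * Mn1 := by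
    have := Nat.ceil_lt_add_one (le_of_lt hMpos')
    push_cast at this ⊢
    linarith
  have hlogMn : Real.log Mn = β * n * Real.log n := rsbg_log_Mseq β hn1
  have hlogMn1 : Real.log Mn1 = β * (n+1) * Real.log (n+1) := by
    have := rsbg_log_Mseq β (n := n+1) (by omega)
    push_cast at this ⊢
    linarith [this]
  have hlogn1_lo : Real.log n ≤ Real.log (n+1) := by
    apply Real.log_le_log (by linarith)
    push_cast; linarith
  have l2 : Real.log ((n:ℝ)+1) ≤ 2 * Real.log n := by
    have h1 : ((n:ℝ)+1) ≤ (n:ℝ)^2 := by nlinarith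
    have h2 : Real.log ((n:ℝ)+1) ≤ Real.log ((n:ℝ)^2) := Real.log_le_log (by linarith) h1
    have h3 : Real.log ((n:ℝ)^2) = 2 * Real.log n := by
      rw [show ((n:ℝ)^2 : ℝ) = (n:ℝ)^(2:ℕ) by norm_num, Real.log_pow]
      push_cast; ring
    linarith
  have l1' : (n:ℝ) * Real.log ((n:ℝ)+1) ≤ (n:ℝ) * Real.log n + 1 := by
    have hd : Real.log ((n:ℝ)+1) - Real.log n ≤ 1 / n := by
      have h0 : Real.log (((n:ℝ)+1)/n) ≤ ((n:ℝ)+1)/n - 1 :=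
        Real.log_le_sub_one_of_pos (by positivity)
      rw [Real.log_div (by positivity) (by positivity)] at h0
      have : ((n:ℝ)+1)/n - 1 = 1/n := by field_simp; ring
      linarith
    have := mul_le_mul_of_nonneg_left hd (show (0:ℝ) ≤ n by positivity)
    have hne : (n:ℝ) ≠ 0 := by positivity
    rw [mul_sub] at this
    rw [mul_one_div, div_self hne] at this
    linarith
  have hexpand : ((n:ℝ)+1) * Real.log ((n:ℝ)+1)
      = (n:ℝ) * Real.log ((n:ℝ)+1) + Real.log ((n:ℝ)+1) := by ring
  have inner1 : Real.log n ≤ ((n:ℝ)+1) * Real.log ((n:ℝ)+1) - (n:ℝ) * Real.log n := by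
    have h := mul_le_mul_of_nonneg_left hlogn1_lo (show (0:ℝ) ≤ n by positivity)
    linarith [hexpand, hlogn1_lo]
  have inner2 : ((n:ℝ)+1) * Real.log ((n:ℝ)+1) - (n:ℝ) * Real.log n ≤ 1 + 2 * Real.log n := by
    linarith [hexpand, l1', l2]
  have e1 : β * Real.log n ≤ β * ((n:ℝ)+1) * Real.log ((n:ℝ)+1) - β * n * Real.log n := by
    have h := mul_le_mul_of_nonneg_left inner1 (le_of_lt hβ0)
    linarith only [h]
  have e2 : β * ((n:ℝ)+1) * Real.log ((n:ℝ)+1) - β * n * Real.log n ≤ β * (1 + 2 * Real.log n) := by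
    have h := mul_le_mul_of_nonneg_left inner2 (le_of_lt hβ0)
    linarith only [h]
  have hl2n : 2 * Real.log 2 ≤ Real.log n := by
    have : Real.log 4 ≤ Real.log n := Real.log_le_log (by norm_num) hn4
    have h4 : Real.log 4 = 2 * Real.log 2 := by
      rw [show (4:ℝ) = 2^(2:ℕ) by norm_num, Real.log_pow]; push_cast; ring
    linarith
  have hApos : (0:ℝ) < A := by linarith
  have hBpos : (0:ℝ) < B := by linarith [le_trans hM16' hMB]
  have hlogdiff_lo : (β/2) * Real.log n ≤ Real.log B - Real.log A := by
    have h1 : Real.log A ≤ Real.log (2 * Mn) := Real.log_le_log hApos hAle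
    have h2 : Real.log (2 * Mn) = Real.log 2 + Real.log Mn := Real.log_mul (by norm_num) (ne_of_gt hMpos)
    have h3 : Real.log Mn1 ≤ Real.log B := Real.log_le_log hMpos' hMB
    rw [hlogMn] at h2
    rw [hlogMn1] at h3
    push_cast at h3
    have hb : Real.log n ≤ β * Real.log n :=
      le_mul_of_one_le_left (le_of_lt hln0) (le_of_lt hβ1)
    have hlog2 : Real.log 2 ≤ (1/2) * Real.log n := by linarith [hl2n]
    linarith only [e1, hb, hlog2, h1, h2, h3, hln0]
  have hlogdiff_hi : Real.log B - Real.log A ≤ (Real.log 2 + 3*β) * Real.log n := by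
    have h1 : Real.log B ≤ Real.log (2 * Mn1) := Real.log_le_log hBpos hBle
    have h2 : Real.log (2 * Mn1) = Real.log 2 + Real.log Mn1 := Real.log_mul (by norm_num) (ne_of_gt hMpos')
    have h3 : Real.log Mn ≤ Real.log A := Real.log_le_log hMpos hMA
    rw [hlogMn] at h3
    rw [hlogMn1] at h2
    push_cast at h2
    have hlog2pos : 0 < Real.log 2 := Real.log_pos (by norm_num)
    have ha : Real.log 2 * 1 ≤ Real.log 2 * Real.log n :=
      mul_le_mul_of_nonneg_left (le_of_lt hln) (le_of_lt hlog2pos)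
    have hb : β * 1 ≤ β * Real.log n :=
      mul_le_mul_of_nonneg_left (le_of_lt hln) (le_of_lt hβ0)
    linarith only [e2, ha, hb, h1, h2, h3]
  set Cβ := Real.log β + 4 with hCβ_def
  have hCβ0 : 0 < Cβ := by positivity
  set L := c * (β * n * Real.log n) ^ α / ((Cβ * Real.log n) ^ (α+1)) with hL_def
  set U := c * (4 * β * n * Real.log n) ^ α / ((Real.log n) ^ (α+1)) with hU_def
  have hβnl : 0 < β * n * Real.log n := by positivity
  have hL0 : 0 ≤ L := by positivity
  have hU0 : 0 ≤ U := by positivity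
  -- pointwise bounds
  have hpt : ∀ k ∈ Finset.Ico A B,
      L * ((k:ℝ))⁻¹ ≤ selectorMean c α k ∧ selectorMean c α k ≤ U * ((k:ℝ))⁻¹ := by
    intro k hk
    obtain ⟨hkA, hkB⟩ := Finset.mem_Ico.mp hk
    have hk16 : (16:ℝ) ≤ k := le_trans hA16 (by exact_mod_cast hkA)
    have hk0 : (0:ℝ) < k := by linarith
    have hkMn : Mn ≤ k := le_trans hMA (by exact_mod_cast hkA)
    have hkMn1 : (k:ℝ) < Mn1 := by
      have h1 : (k:ℝ) + 1 ≤ B := by exact_mod_cast hkB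
      have h2 : (B:ℝ) < Mn1 + 1 := by
        have := Nat.ceil_lt_add_one (le_of_lt hMpos')
        exact_mod_cast this
      linarith
    have hlogk_lo : β * n * Real.log n ≤ Real.log k := by
      rw [← hlogMn]; exact Real.log_le_log hMpos hkMn
    have hlogk0 : 0 < Real.log k := lt_of_lt_of_le (by positivity) hlogk_lo
    have hlogk_hi : Real.log k ≤ 4 * β * n * Real.log n := by
      have h1 : Real.log k ≤ Real.log Mn1 := Real.log_le_log hk0 (le_of_lt hkMn1)
      rw [hlogMn1] at h1
      have s1 : β * ((n:ℝ)+1) * Real.log ((n:ℝ)+1) ≤ β * ((n:ℝ)+1) * (2 * Real.log n) := by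
        rw [mul_assoc, mul_assoc]
        exact mul_le_mul_of_nonneg_left (by
          exact mul_le_mul_of_nonneg_left l2 (by positivity)) (le_of_lt hβ0)
      have s2 : β * ((n:ℝ)+1) * (2 * Real.log n) ≤ β * (2*(n:ℝ)) * (2 * Real.log n) := by
        apply mul_le_mul_of_nonneg_right _ (by positivity)
        have h : ((n:ℝ)+1) ≤ 2*(n:ℝ) := by linarith only [hn1']
        exact mul_le_mul_of_nonneg_left h (le_of_lt hβ0)
      linarith only [h1, s1, s2]
    have hloglog_lo : Real.log n ≤ Real.log (Real.log k) := by
      apply Real.log_le_log (by linarith)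
      have h1 : (1:ℝ) * 1 ≤ β * Real.log n :=
        mul_le_mul (le_of_lt hβ1) (le_of_lt hln) zero_le_one (le_of_lt hβ0)
      have h2 := mul_le_mul_of_nonneg_left h1 (show (0:ℝ) ≤ n by positivity)
      have h3 : β * (n:ℝ) * Real.log n = (n:ℝ) * (β * Real.log n) := by ring
      linarith only [h2, hlogk_lo, h3]
    have hloglog_hi : Real.log (Real.log k) ≤ Cβ * Real.log n := by
      have h1 : Real.log k ≤ β * ((n:ℝ)+1)^2 := by
        have h2 : Real.log k ≤ Real.log Mn1 := Real.log_le_log hk0 (le_of_lt hkMn1)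
        rw [hlogMn1] at h2
        have h3 : Real.log ((n:ℝ)+1) ≤ (n:ℝ)+1 := by
          have := Real.log_le_sub_one_of_pos (show (0:ℝ) < (n:ℝ)+1 by positivity)
          linarith only [this]
        have h4 : β * ((n:ℝ)+1) * Real.log ((n:ℝ)+1) ≤ β * ((n:ℝ)+1) * ((n:ℝ)+1) := by
          rw [mul_assoc, mul_assoc]
          exact mul_le_mul_of_nonneg_left
            (mul_le_mul_of_nonneg_left h3 (by positivity)) (le_of_lt hβ0)
        have h5 : β * ((n:ℝ)+1) * ((n:ℝ)+1) = β * ((n:ℝ)+1)^2 := by ring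
        linarith only [h2, h4, h5]
      have h2 : Real.log (Real.log k) ≤ Real.log (β * ((n:ℝ)+1)^2) :=
        Real.log_le_log hlogk0 h1
      have h3 : Real.log (β * ((n:ℝ)+1)^2) = Real.log β + 2 * Real.log ((n:ℝ)+1) := by
        rw [Real.log_mul (ne_of_gt hβ0) (by positivity), Real.log_pow]
        push_cast; ring
      have h4 : Real.log β + 2 * Real.log ((n:ℝ)+1) ≤ Cβ * Real.log n := by
        rw [hCβ_def]
        have h5 : Real.log β * 1 ≤ Real.log β * Real.log n :=
          mul_le_mul_of_nonneg_left (le_of_lt hln) (le_of_lt hlogβ)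
        have h6 : (Real.log β + 4) * Real.log n = Real.log β * Real.log n + 4 * Real.log n := by
          ring
        linarith only [l2, h5, h6, hln0]
      linarith
    have hY0 : 0 < Real.log (Real.log k) := lt_of_lt_of_le hln0 hloglog_lo
    have hXa_lo : (β * n * Real.log n) ^ α ≤ Real.log k ^ α :=
      Real.rpow_le_rpow (le_of_lt hβnl) hlogk_lo hα0
    have hXa_hi : Real.log k ^ α ≤ (4 * β * n * Real.log n) ^ α :=
      Real.rpow_le_rpow (le_of_lt hlogk0) hlogk_hi hα0
    have hYa_lo : (Real.log n) ^ (α+1) ≤ Real.log (Real.log k) ^ (α+1) :=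
      Real.rpow_le_rpow (le_of_lt hln0) hloglog_lo (by linarith)
    have hYa_hi : Real.log (Real.log k) ^ (α+1) ≤ (Cβ * Real.log n) ^ (α+1) :=
      Real.rpow_le_rpow (le_of_lt hY0) hloglog_hi (by linarith)
    have hYpow0 : 0 < Real.log (Real.log k) ^ (α+1) := Real.rpow_pos_of_pos hY0 _
    have hlnpow0 : 0 < (Real.log n) ^ (α+1) := Real.rpow_pos_of_pos hln0 _
    have hCpow0 : 0 < (Cβ * Real.log n) ^ (α+1) := Real.rpow_pos_of_pos (by positivity) _
    constructor
    · have heq : L * ((k:ℝ))⁻¹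
          = c * (β * n * Real.log n) ^ α / ((k:ℝ) * (Cβ * Real.log n) ^ (α+1)) := by
        rw [hL_def]; field_simp
      rw [heq, selectorMean]
      apply div_le_div₀ (by positivity)
      · exact mul_le_mul_of_nonneg_left hXa_lo (le_of_lt hc)
      · positivity
      · exact mul_le_mul_of_nonneg_left hYa_hi (le_of_lt hk0)
    · have heq : U * ((k:ℝ))⁻¹
          = c * (4 * β * n * Real.log n) ^ α / ((k:ℝ) * (Real.log n) ^ (α+1)) := by
        rw [hU_def]; field_simp
      rw [heq, selectorMean]
      apply div_le_div₀ (by positivity)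
      · exact mul_le_mul_of_nonneg_left hXa_hi (le_of_lt hc)
      · positivity
      · exact mul_le_mul_of_nonneg_left hYa_lo (le_of_lt hk0)
  have hsum_lo : L * (Real.log B - Real.log A) ≤ ∑ k ∈ Finset.Ico A B, selectorMean c α k := by
    calc L * (Real.log B - Real.log A) ≤ L * ∑ k ∈ Finset.Ico A B, ((k:ℝ))⁻¹ :=
          mul_le_mul_of_nonneg_left (rsbg_harmonic_lower A B hA1 hAB) hL0
      _ = ∑ k ∈ Finset.Ico A B, L * ((k:ℝ))⁻¹ := Finset.mul_sum _ _ _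
      _ ≤ ∑ k ∈ Finset.Ico A B, selectorMean c α k :=
          Finset.sum_le_sum (fun k hk => (hpt k hk).1)
  have hsum_hi : ∑ k ∈ Finset.Ico A B, selectorMean c α k ≤ U * (2 * (Real.log B - Real.log A)) := by
    calc ∑ k ∈ Finset.Ico A B, selectorMean c α k ≤ ∑ k ∈ Finset.Ico A B, U * ((k:ℝ))⁻¹ :=
          Finset.sum_le_sum (fun k hk => (hpt k hk).2)
      _ = U * ∑ k ∈ Finset.Ico A B, ((k:ℝ))⁻¹ := (Finset.mul_sum _ _ _).symm
      _ ≤ U * (2 * (Real.log B - Real.log A)) :=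
          mul_le_mul_of_nonneg_left (rsbg_harmonic_upper A B hA1 hAB) hU0
  -- final algebra
  have hmulβ : (β * n * Real.log n) ^ α = β ^ α * (n:ℝ) ^ α * (Real.log n) ^ α := by
    rw [Real.mul_rpow (by positivity) (le_of_lt hln0), Real.mul_rpow (le_of_lt hβ0) (by positivity)]
  have hmul4β : (4 * β * n * Real.log n) ^ α = (4*β) ^ α * (n:ℝ) ^ α * (Real.log n) ^ α := by
    rw [Real.mul_rpow (by positivity) (le_of_lt hln0), Real.mul_rpow (by positivity) (by positivity)]
  have hmulC : (Cβ * Real.log n) ^ (α+1) = Cβ ^ (α+1) * (Real.log n) ^ (α+1) :=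
    Real.mul_rpow (le_of_lt hCβ0) (le_of_lt hln0)
  have hlnsplit : (Real.log n) ^ (α+1) = (Real.log n) ^ α * Real.log n :=
    Real.rpow_add_one (ne_of_gt hln0) α
  have hβsplit : β ^ (α+1) = β ^ α * β := Real.rpow_add_one (ne_of_gt hβ0) α
  have hlnpow_ne : (Real.log n) ^ α ≠ 0 := ne_of_gt (Real.rpow_pos_of_pos hln0 _)
  have hCβpow_ne : Cβ ^ (α+1) ≠ 0 := ne_of_gt (Real.rpow_pos_of_pos hCβ0 _)
  constructor
  · calc (c * β ^ (α+1) / (2 * Cβ ^ (α+1))) * (n:ℝ) ^ α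
        = L * ((β/2) * Real.log n) := by
          rw [hL_def, hmulβ, hmulC, hlnsplit, hβsplit]
          field_simp
      _ ≤ L * (Real.log B - Real.log A) :=
          mul_le_mul_of_nonneg_left hlogdiff_lo hL0
      _ ≤ ∑ k ∈ Finset.Ico A B, selectorMean c α k := hsum_lo
  · calc ∑ k ∈ Finset.Ico A B, selectorMean c α k
        ≤ U * (2 * (Real.log B - Real.log A)) := hsum_hi
      _ ≤ U * (2 * ((Real.log 2 + 3*β) * Real.log n)) := by
          apply mul_le_mul_of_nonneg_left _ hU0
          linarith
      _ = (2 * (Real.log 2 + 3*β) * c * (4*β) ^ α) * (n:ℝ) ^ α := by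
          rw [hU_def, hmul4β, hlnsplit]
          field_simp

lemma rsbg_delta_nonneg {c α : ℝ} (hc : 0 < c) (hα0 : 0 ≤ α) {k : ℕ} (hk : 16 ≤ k) :
    0 ≤ selectorMean c α k := by
  have hk3 : (3:ℝ) ≤ k := by
    have : (16:ℝ) ≤ k := by exact_mod_cast hk
    linarith
  have hlogk : 1 < Real.log k := by
    have h1 : Real.exp 1 < 3 := by have := Real.exp_one_lt_d9; linarith
    rw [show (1:ℝ) = Real.log (Real.exp 1) from (Real.log_exp 1).symm]
    exact Real.log_lt_log (Real.exp_pos 1) (by linarith)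
  have hloglogk : 0 < Real.log (Real.log k) := Real.log_pos hlogk
  have hk0 : (0:ℝ) < k := by linarith
  rw [selectorMean]
  apply div_nonneg
  · positivity
  · positivity

lemma rsbg_Mseq_lt {β : ℝ} (hβ1 : 1 < β) {n : ℕ} (hn : 4 ≤ n) :
    Mseq β n < Mseq β (n+1) := by
  have hβ0 : 0 < β := by linarith
  have hn1 : 1 ≤ n := by omega
  have hMpos : 0 < Mseq β n := rsbg_Mseq_pos β hn1
  have hMpos' : 0 < Mseq β (n+1) := rsbg_Mseq_pos β (by omega)
  have hln : 1 < Real.log n := rsbg_one_lt_log hn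
  have hn0 : (0:ℝ) < n := by positivity
  have hlog1 : Real.log (Mseq β n) = β * n * Real.log n := rsbg_log_Mseq β hn1
  have hlog2 : Real.log (Mseq β (n+1)) = β * (n+1) * Real.log (n+1) := by
    have := rsbg_log_Mseq β (n := n+1) (by omega)
    push_cast at this ⊢; exact this
  have hlt : β * (n:ℝ) * Real.log n < β * ((n:ℝ)+1) * Real.log ((n:ℝ)+1) := by
    have h1 : Real.log (n:ℝ) ≤ Real.log ((n:ℝ)+1) := Real.log_le_log (by linarith) (by linarith)
    have h2 : β * (n:ℝ) < β * ((n:ℝ)+1) := by nlinarith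
    have h3 : 0 < Real.log ((n:ℝ)+1) := by linarith
    have h4 : β * (n:ℝ) * Real.log (n:ℝ) ≤ β * (n:ℝ) * Real.log ((n:ℝ)+1) :=
      mul_le_mul_of_nonneg_left h1 (by positivity)
    have h5 : β * (n:ℝ) * Real.log ((n:ℝ)+1) < β * ((n:ℝ)+1) * Real.log ((n:ℝ)+1) :=
      mul_lt_mul_of_pos_right h2 h3
    linarith only [h4, h5]
  have : Real.log (Mseq β n) < Real.log (Mseq β (n+1)) := by
    rw [hlog1, hlog2]; push_cast; exact hlt
  exact (Real.log_lt_log_iff hMpos hMpos').mp this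

lemma rsbg_decomp (β c αa : ℝ) (hβ1 : 1 < β) {n : ℕ} (hn : 4 ≤ n) :
    ∑ k ∈ Finset.Ico ⌈Mseq β 4⌉₊ ⌈Mseq β n⌉₊, selectorMean c αa k
      = ∑ j ∈ Finset.Ico 4 n, ∑ k ∈ Finset.Ico ⌈Mseq β j⌉₊ ⌈Mseq β (j+1)⌉₊, selectorMean c αa k := by
  induction n, hn using Nat.le_induction with
  | base => simp
  | succ m hm ih =>
      have hceil : ⌈Mseq β 4⌉₊ ≤ ⌈Mseq β m⌉₊ :=
        Nat.ceil_le_ceil (rsbg_Mseq_mono β (by linarith) (by norm_num) hm)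
      have hceil2 : ⌈Mseq β m⌉₊ ≤ ⌈Mseq β (m+1)⌉₊ :=
        Nat.ceil_le_ceil (rsbg_Mseq_mono β (by linarith) (by omega) (by omega))
      rw [← Finset.sum_Ico_consecutive _ hceil hceil2, ih,
        Finset.sum_Ico_succ_top hm]

lemma rsbg_pow_sum_lower (αa : ℝ) (hαa : 0 ≤ αa) {n : ℕ} (hn : 16 ≤ n) :
    ((n:ℝ)/4) ^ (αa+1) ≤ ∑ j ∈ Finset.Ico 4 n, (j:ℝ) ^ αa := by
  have hn0 : (0:ℝ) < n := by positivity
  have hsub : Finset.Ico (n/2) n ⊆ Finset.Ico 4 n := by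
    apply Finset.Ico_subset_Ico _ le_rfl
    omega
  have hlow : ∀ j ∈ Finset.Ico (n/2) n, ((n:ℝ)/4) ^ αa ≤ (j:ℝ) ^ αa := by
    intro j hj
    obtain ⟨h1, h2⟩ := Finset.mem_Ico.mp hj
    apply Real.rpow_le_rpow (by positivity) _ hαa
    have hh : n ≤ 2 * (n/2) + 1 := by omega
    have hj2 : n/2 ≤ j := h1
    have hcast : (n:ℝ) ≤ 2 * ((n/2 : ℕ):ℝ) + 1 := by exact_mod_cast hh
    have hcast2 : ((n/2:ℕ):ℝ) ≤ (j:ℝ) := by exact_mod_cast hj2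
    have hn16 : (16:ℝ) ≤ (n:ℝ) := by exact_mod_cast hn
    linarith
  have hcard : ((n:ℝ)/4) ≤ ((Finset.Ico (n/2) n).card : ℝ) := by
    rw [Nat.card_Ico]
    have hh : 2 * (n - n/2) ≥ n := by omega
    have hcast : (n:ℝ) ≤ 2 * ((n - n/2 : ℕ):ℝ) := by exact_mod_cast hh
    linarith
  calc ((n:ℝ)/4) ^ (αa+1) = ((n:ℝ)/4) ^ αa * ((n:ℝ)/4) := Real.rpow_add_one (by positivity) αa
    _ ≤ ((n:ℝ)/4) ^ αa * ((Finset.Ico (n/2) n).card : ℝ) :=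
        mul_le_mul_of_nonneg_left hcard (by positivity)
    _ = ((Finset.Ico (n/2) n).card : ℝ) * ((n:ℝ)/4) ^ αa := by ring
    _ ≤ ∑ j ∈ Finset.Ico (n/2) n, (j:ℝ) ^ αa := by
        have := Finset.card_nsmul_le_sum (Finset.Ico (n/2) n)
          (fun j => (j:ℝ) ^ αa) (((n:ℝ)/4) ^ αa) hlow
        rwa [nsmul_eq_mul] at this
    _ ≤ ∑ j ∈ Finset.Ico 4 n, (j:ℝ) ^ αa := by
        apply Finset.sum_le_sum_of_subset_of_nonneg hsub
        intro j hj _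
        positivity

lemma rsbg_pow_sum_upper (αa : ℝ) (hαa : 0 ≤ αa) {n : ℕ} (hn : 4 ≤ n) :
    ∑ j ∈ Finset.Ico 4 (n+1), (j:ℝ) ^ αa ≤ (n:ℝ) ^ (αa+1) := by
  have hn0 : (0:ℝ) < n := by positivity
  have hhi : ∀ j ∈ Finset.Ico 4 (n+1), (j:ℝ) ^ αa ≤ (n:ℝ) ^ αa := by
    intro j hj
    obtain ⟨h1, h2⟩ := Finset.mem_Ico.mp hj
    apply Real.rpow_le_rpow (by positivity) _ hαa
    exact_mod_cast Nat.lt_succ_iff.mp h2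
  calc ∑ j ∈ Finset.Ico 4 (n+1), (j:ℝ) ^ αa
      ≤ ((Finset.Ico 4 (n+1)).card : ℝ) * (n:ℝ) ^ αa := by
        have := Finset.sum_le_card_nsmul (Finset.Ico 4 (n+1))
          (fun j => (j:ℝ) ^ αa) ((n:ℝ) ^ αa) hhi
        rwa [nsmul_eq_mul] at this
    _ ≤ (n:ℝ) * (n:ℝ) ^ αa := by
        apply mul_le_mul_of_nonneg_right _ (by positivity)
        rw [Nat.card_Ico]
        have : ((n + 1 - 4 : ℕ):ℝ) ≤ (n:ℝ) := by
          have : n + 1 - 4 ≤ n := by omega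
          exact_mod_cast this
        exact this
    _ = (n:ℝ) ^ (αa+1) := by
        rw [Real.rpow_add_one (ne_of_gt hn0) αa]; ring

lemma rsbg_mean_bounds (α β c : ℝ) (hα : 1 < α) (hβ : α < β) (hc : 0 < c) :
    ∃ (K₁ K₂ : ℝ) (N : ℕ), 0 < K₁ ∧ K₁ ≤ K₂ ∧ 16 ≤ N ∧ ∀ n : ℕ, N ≤ n →
      (K₁ * (n:ℝ) ^ (α+1) ≤ ∑ k ∈ Finset.Icc 16 ⌊Mseq β n⌋₊, selectorMean c α k ∧
        ∑ k ∈ Finset.Icc 16 ⌊Mseq β n⌋₊, selectorMean c α k ≤ K₂ * (n:ℝ) ^ (α+1)) ∧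
      (K₁ * (n:ℝ) ^ α ≤ ∑ k ∈ Finset.Ico ⌈Mseq β n⌉₊ ⌈Mseq β (n+1)⌉₊, selectorMean c α k ∧
        ∑ k ∈ Finset.Ico ⌈Mseq β n⌉₊ ⌈Mseq β (n+1)⌉₊, selectorMean c α k ≤ K₂ * (n:ℝ) ^ α) := by
  have hβ1 : 1 < β := lt_trans hα hβ
  have hβ0 : 0 < β := by linarith
  have hα0 : (0:ℝ) ≤ α := by linarith
  have hlogβ : 0 < Real.log β := Real.log_pos hβ1
  set Kb₁ := c * β ^ (α+1) / (2 * (Real.log β + 4) ^ (α+1)) with hKb₁_def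
  set Kb₂ := 2 * (Real.log 2 + 3*β) * c * (4*β) ^ α with hKb₂_def
  have hKb₁0 : 0 < Kb₁ := by
    rw [hKb₁_def]
    have h1 : 0 < β ^ (α+1) := Real.rpow_pos_of_pos hβ0 _
    have h2 : 0 < (Real.log β + 4) ^ (α+1) := Real.rpow_pos_of_pos (by linarith) _
    positivity
  have hKb₂0 : 0 < Kb₂ := by
    rw [hKb₂_def]
    have h1 : 0 < (4*β) ^ α := Real.rpow_pos_of_pos (by linarith) _
    have h2 : 0 < Real.log 2 := Real.log_pos (by norm_num)
    positivity
  set C₀ := ∑ k ∈ Finset.Ico 16 ⌈Mseq β 4⌉₊, selectorMean c α k with hC₀_def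
  have hC₀0 : 0 ≤ C₀ := by
    apply Finset.sum_nonneg
    intro k hk
    exact rsbg_delta_nonneg hc hα0 (Finset.mem_Ico.mp hk).1
  set q : ℝ := ((4:ℝ)) ^ (-(α+1)) with hq_def
  have hq0 : 0 < q := Real.rpow_pos_of_pos (by norm_num) _
  have hq1 : q ≤ 1 := by
    rw [hq_def]
    apply Real.rpow_le_one_of_one_le_of_nonpos (by norm_num) (by linarith)
  refine ⟨Kb₁ * q, Kb₂ + Kb₁ + 1, max 16 (⌈C₀⌉₊ + 1), by positivity, ?_, le_max_left _ _, ?_⟩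
  · nlinarith [hKb₁0, hKb₂0, hq0, hq1]
  intro n hn
  have hn16 : 16 ≤ n := le_trans (le_max_left _ _) hn
  have hn4 : 4 ≤ n := by omega
  have hnC : C₀ ≤ (n:ℝ) := by
    have h1 : ⌈C₀⌉₊ + 1 ≤ n := le_trans (le_max_right _ _) hn
    have h2 : C₀ ≤ (⌈C₀⌉₊ : ℝ) := Nat.le_ceil _
    have h3 : ((⌈C₀⌉₊:ℕ):ℝ) ≤ (n:ℝ) := by exact_mod_cast le_trans (Nat.le_succ _) h1
    linarith
  have hn1' : (1:ℝ) ≤ n := by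
    have : (16:ℝ) ≤ n := by exact_mod_cast hn16
    linarith
  have hn0 : (0:ℝ) < n := by linarith
  have hnpow : (n:ℝ) ≤ (n:ℝ) ^ (α+1) := by
    calc (n:ℝ) = (n:ℝ) ^ (1:ℝ) := (Real.rpow_one _).symm
      _ ≤ (n:ℝ) ^ (α+1) := Real.rpow_le_rpow_of_exponent_le hn1' (by linarith)
  have hM16_4 : (16:ℝ) ≤ Mseq β 4 := rsbg_sixteen_le_Mseq (le_of_lt hβ1) le_rfl
  have hceil16 : 16 ≤ ⌈Mseq β 4⌉₊ := by
    have := Nat.le_ceil (Mseq β 4)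
    exact_mod_cast le_trans hM16_4 this
  have hblock : ∀ j : ℕ, 4 ≤ j →
      Kb₁ * (j:ℝ) ^ α ≤ ∑ k ∈ Finset.Ico ⌈Mseq β j⌉₊ ⌈Mseq β (j+1)⌉₊, selectorMean c α k ∧
      ∑ k ∈ Finset.Ico ⌈Mseq β j⌉₊ ⌈Mseq β (j+1)⌉₊, selectorMean c α k ≤ Kb₂ * (j:ℝ) ^ α :=
    fun j hj => rsbg_block_bounds α β c hα hβ hc hj
  -- block part for this n
  have hblockn := hblock n hn4
  have hnα0 : (0:ℝ) ≤ (n:ℝ) ^ α := by positivity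
  constructor
  · -- full interval
    have hfloor : Finset.Icc 16 ⌊Mseq β n⌋₊ = Finset.Ico 16 (⌊Mseq β n⌋₊ + 1) :=
      (Finset.Ico_add_one_right_eq_Icc _ _).symm
    constructor
    · -- lower bound
      have hsub : Finset.Ico ⌈Mseq β 4⌉₊ ⌈Mseq β n⌉₊ ⊆ Finset.Ico 16 (⌊Mseq β n⌋₊ + 1) := by
        apply Finset.Ico_subset_Ico hceil16
        exact Nat.ceil_le_floor_add_one _
      have h1 : ∑ k ∈ Finset.Ico ⌈Mseq β 4⌉₊ ⌈Mseq β n⌉₊, selectorMean c α k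
          ≤ ∑ k ∈ Finset.Ico 16 (⌊Mseq β n⌋₊ + 1), selectorMean c α k := by
        apply Finset.sum_le_sum_of_subset_of_nonneg hsub
        intro k hk _
        exact rsbg_delta_nonneg hc hα0 (Finset.mem_Ico.mp hk).1
      have h2 : ∑ j ∈ Finset.Ico 4 n, Kb₁ * (j:ℝ) ^ α
          ≤ ∑ k ∈ Finset.Ico ⌈Mseq β 4⌉₊ ⌈Mseq β n⌉₊, selectorMean c α k := by
        rw [rsbg_decomp β c α hβ1 hn4]
        exact Finset.sum_le_sum (fun j hj => (hblock j (Finset.mem_Ico.mp hj).1).1)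
      have h3 : Kb₁ * q * (n:ℝ) ^ (α+1) ≤ ∑ j ∈ Finset.Ico 4 n, Kb₁ * (j:ℝ) ^ α := by
        rw [← Finset.mul_sum]
        have h4 := rsbg_pow_sum_lower α hα0 hn16
        have h5 : ((n:ℝ)/4) ^ (α+1) = q * (n:ℝ) ^ (α+1) := by
          rw [hq_def, Real.div_rpow (by positivity) (by norm_num),
            Real.rpow_neg (by norm_num), div_eq_mul_inv]
          ring
        rw [mul_assoc]
        apply mul_le_mul_of_nonneg_left _ (le_of_lt hKb₁0)
        rw [← h5]; exact h4
      rw [hfloor]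
      linarith
    · -- upper bound
      have hlt : ⌊Mseq β n⌋₊ + 1 ≤ ⌈Mseq β (n+1)⌉₊ := by
        have h1 : (⌊Mseq β n⌋₊ : ℝ) ≤ Mseq β n := Nat.floor_le (le_of_lt (rsbg_Mseq_pos β (by omega)))
        have h2 : Mseq β n < Mseq β (n+1) := rsbg_Mseq_lt hβ1 hn4
        have h3 : Mseq β (n+1) ≤ (⌈Mseq β (n+1)⌉₊ : ℝ) := Nat.le_ceil _
        have : (⌊Mseq β n⌋₊ : ℝ) < (⌈Mseq β (n+1)⌉₊ : ℝ) := by linarith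
        exact_mod_cast this
      have hsub : Finset.Ico 16 (⌊Mseq β n⌋₊ + 1) ⊆ Finset.Ico 16 ⌈Mseq β (n+1)⌉₊ :=
        Finset.Ico_subset_Ico le_rfl hlt
      have h1 : ∑ k ∈ Finset.Ico 16 (⌊Mseq β n⌋₊ + 1), selectorMean c α k
          ≤ ∑ k ∈ Finset.Ico 16 ⌈Mseq β (n+1)⌉₊, selectorMean c α k := by
        apply Finset.sum_le_sum_of_subset_of_nonneg hsub
        intro k hk _
        exact rsbg_delta_nonneg hc hα0 (Finset.mem_Ico.mp hk).1
      have hceilmono : ⌈Mseq β 4⌉₊ ≤ ⌈Mseq β (n+1)⌉₊ :=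
        Nat.ceil_le_ceil (rsbg_Mseq_mono β hβ0 (by norm_num) (by omega))
      have h2 : ∑ k ∈ Finset.Ico 16 ⌈Mseq β (n+1)⌉₊, selectorMean c α k
          = C₀ + ∑ k ∈ Finset.Ico ⌈Mseq β 4⌉₊ ⌈Mseq β (n+1)⌉₊, selectorMean c α k := by
        rw [hC₀_def, Finset.sum_Ico_consecutive _ hceil16 hceilmono]
      have h3 : ∑ k ∈ Finset.Ico ⌈Mseq β 4⌉₊ ⌈Mseq β (n+1)⌉₊, selectorMean c α k
          ≤ Kb₂ * (n:ℝ) ^ (α+1) := by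
        rw [rsbg_decomp β c α hβ1 (show 4 ≤ n+1 by omega)]
        calc ∑ j ∈ Finset.Ico 4 (n+1), ∑ k ∈ Finset.Ico ⌈Mseq β j⌉₊ ⌈Mseq β (j+1)⌉₊, selectorMean c α k
            ≤ ∑ j ∈ Finset.Ico 4 (n+1), Kb₂ * (j:ℝ) ^ α :=
              Finset.sum_le_sum (fun j hj => (hblock j (Finset.mem_Ico.mp hj).1).2)
          _ = Kb₂ * ∑ j ∈ Finset.Ico 4 (n+1), (j:ℝ) ^ α := (Finset.mul_sum _ _ _).symm
          _ ≤ Kb₂ * (n:ℝ) ^ (α+1) :=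
              mul_le_mul_of_nonneg_left (rsbg_pow_sum_upper α hα0 hn4) (le_of_lt hKb₂0)
      rw [hfloor]
      have hfin : C₀ + Kb₂ * (n:ℝ) ^ (α+1) ≤ (Kb₂ + Kb₁ + 1) * (n:ℝ) ^ (α+1) := by
        have : C₀ ≤ (n:ℝ) ^ (α+1) := le_trans hnC hnpow
        nlinarith [hKb₁0, Real.rpow_pos_of_pos hn0 (α+1)]
      linarith
  · -- block
    constructor
    · calc Kb₁ * q * (n:ℝ) ^ α ≤ Kb₁ * 1 * (n:ℝ) ^ α := by
            apply mul_le_mul_of_nonneg_right _ hnα0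
            exact mul_le_mul_of_nonneg_left hq1 (le_of_lt hKb₁0)
        _ = Kb₁ * (n:ℝ) ^ α := by ring
        _ ≤ _ := hblockn.1
    · calc ∑ k ∈ Finset.Ico ⌈Mseq β n⌉₊ ⌈Mseq β (n+1)⌉₊, selectorMean c α k
          ≤ Kb₂ * (n:ℝ) ^ α := hblockn.2
        _ ≤ (Kb₂ + Kb₁ + 1) * (n:ℝ) ^ α := by nlinarith [hKb₁0, hnα0]

lemma rsbg_cheb {Ω : Type} [MeasurableSpace Ω] {P : Measure Ω} [IsProbabilityMeasure P]
    (α c : ℝ) (ε : ℕ → Ω → ℝ) (hmeas : ∀ k, Measurable (ε k))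
    (hindep : iIndepFun (fun k : {k : ℕ // 16 ≤ k} => ε k) P)
    (hval : ∀ k : ℕ, 16 ≤ k → ∀ ω, ε k ω = 0 ∨ ε k ω = 1)
    (hmean : ∀ k : ℕ, 16 ≤ k → ∫ ω, ε k ω ∂P = selectorMean c α k)
    (t : Finset ℕ) (ht : ∀ k ∈ t, 16 ≤ k)
    {m : ℝ} (hm : m = ∑ k ∈ t, selectorMean c α k) (hm0 : 0 < m) :
    P {ω | m/2 ≤ |(∑ k ∈ t, ε k) ω - m|} ≤ ENNReal.ofReal (4/m) := by
  have hL2 : ∀ k ∈ t, MemLp (ε k) 2 P := by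
    intro k hk
    apply MemLp.of_bound (hmeas k).aestronglyMeasurable 1
    apply ae_of_all
    intro ω
    rcases hval k (ht k hk) ω with h | h <;> rw [h] <;> norm_num
  have hint : ∀ k ∈ t, Integrable (ε k) P := fun k hk => (hL2 k hk).integrable one_le_two
  have hES : (∫ ω, (∑ k ∈ t, ε k) ω ∂P) = m := by
    have h1 : ∀ ω, (∑ k ∈ t, ε k) ω = ∑ k ∈ t, ε k ω := by
      intro ω; simp [Finset.sum_apply]
    rw [integral_congr_ae (ae_of_all _ h1), integral_finset_sum t hint, hm]
    exact Finset.sum_congr rfl (fun k hk => hmean k (ht k hk))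
  have hvar_each : ∀ k ∈ t, variance (ε k) P ≤ selectorMean c α k := by
    intro k hk
    have h1 := variance_le_expectation_sq (X := ε k) (hmeas k).aestronglyMeasurable (μ := P)
    have h2 : (∫ ω, ((ε k) ^ 2) ω ∂P) = ∫ ω, ε k ω ∂P := by
      apply integral_congr_ae
      apply ae_of_all
      intro ω
      rcases hval k (ht k hk) ω with h | h <;> simp [h]
    rw [← hmean k (ht k hk), ← h2]
    exact h1
  have hpairwise : Set.Pairwise ↑t fun i j => IndepFun (ε i) (ε j) P := by
    intro i hi j hj hij
    have h16i : 16 ≤ i := ht i (Finset.mem_coe.mp hi)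
    have h16j : 16 ≤ j := ht j (Finset.mem_coe.mp hj)
    exact hindep.indepFun (i := ⟨i, h16i⟩) (j := ⟨j, h16j⟩)
      (by simp [Subtype.ext_iff]; exact hij)
  have hvar : variance (∑ k ∈ t, ε k) P ≤ m := by
    rw [IndepFun.variance_sum hL2 hpairwise, hm]
    exact Finset.sum_le_sum hvar_each
  have hm2 : (0:ℝ) < m/2 := by linarith
  have hcheb := meas_ge_le_variance_div_sq (μ := P)
    (X := ∑ k ∈ t, ε k) (memLp_finset_sum' t hL2) hm2
  rw [show (P[∑ k ∈ t, ε k] : ℝ) = m from hES] at hcheb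
  refine le_trans hcheb (ENNReal.ofReal_le_ofReal ?_)
  have h4 : m / (m/2)^2 = 4/m := by field_simp; ring
  calc variance (∑ k ∈ t, ε k) P / (m/2)^2 ≤ m / (m/2)^2 := by
        apply div_le_div_of_nonneg_right hvar (by positivity) |>.trans (le_of_eq rfl)
    _ = 4/m := h4

lemma rsbg_filter_Icc {Ω : Type} (ε : ℕ → Ω → ℝ) (ω : Ω) (M : ℕ) :
    (Finset.Icc 1 M).filter (fun k => 16 ≤ k ∧ ε k ω = 1)
      = (Finset.Icc 16 M).filter (fun k => ε k ω = 1) := by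
  ext k
  simp only [Finset.mem_filter, Finset.mem_Icc]
  constructor
  · rintro ⟨⟨h1, h2⟩, h3, h4⟩; exact ⟨⟨h3, h2⟩, h4⟩
  · rintro ⟨⟨h1, h2⟩, h4⟩; exact ⟨⟨by omega, h2⟩, h1, h4⟩

lemma rsbg_filter_Ico {Ω : Type} (ε : ℕ → Ω → ℝ) (ω : Ω) {A B : ℕ} (hA : 16 ≤ A) :
    (Finset.Ico A B).filter (fun k => 16 ≤ k ∧ ε k ω = 1)
      = (Finset.Ico A B).filter (fun k => ε k ω = 1) := by
  ext k
  simp only [Finset.mem_filter, Finset.mem_Ico]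
  constructor
  · rintro ⟨⟨h1, h2⟩, h3, h4⟩; exact ⟨⟨h1, h2⟩, h4⟩
  · rintro ⟨⟨h1, h2⟩, h4⟩; exact ⟨⟨h1, h2⟩, by omega, h4⟩

lemma rsbg_card_eq {Ω : Type} (ε : ℕ → Ω → ℝ)
    (hval : ∀ k : ℕ, 16 ≤ k → ∀ ω, ε k ω = 0 ∨ ε k ω = 1) (ω : Ω)
    (t : Finset ℕ) (ht : ∀ k ∈ t, 16 ≤ k) :
    ((t.filter (fun k => ε k ω = 1)).card : ℝ) = (∑ k ∈ t, ε k) ω := by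
  have h1 : (∑ k ∈ t, ε k) ω = ∑ k ∈ t, ε k ω := by simp [Finset.sum_apply]
  rw [h1, ← Finset.sum_boole]
  apply Finset.sum_congr rfl
  intro k hk
  rcases hval k (ht k hk) ω with h | h
  · rw [h]; norm_num
  · rw [h]; norm_num

/-- **Lemma 4.3: growth of the random set.** For `α > 1 < β`, `M_n = n^{βn}` and the
random set `Λ(ω)` of selectors of mean `δ_k = c (log k)^α / (k (log log k)^{α+1})`,
almost surely `|Λ(ω) ∩ [1, M_n]| ≈ n^{α+1}` and `|Λ(ω) ∩ [M_n, M_{n+1})| ≈ n^α` for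
large `n`. -/
theorem random_set_block_growth
    {Ω : Type} [MeasurableSpace Ω] {P : Measure Ω} [IsProbabilityMeasure P]
    (α β c : ℝ) (hα : 1 < α) (hβ : α < β)
    (hc : 0 < c) (hcsmall : ∀ k : ℕ, 16 ≤ k → selectorMean c α k ≤ 1)
    (ε : ℕ → Ω → ℝ) (hmeas : ∀ k, Measurable (ε k))
    (hindep : iIndepFun (fun k : {k : ℕ // 16 ≤ k} => ε k) P)
    (hval : ∀ k : ℕ, 16 ≤ k → ∀ ω, ε k ω = 0 ∨ ε k ω = 1)
    (hmean : ∀ k : ℕ, 16 ≤ k → ∫ ω, ε k ω ∂P = selectorMean c α k) :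
    ∃ c₁ c₂ : ℝ, 0 < c₁ ∧ c₁ ≤ c₂ ∧
      ∀ᵐ ω ∂P, ∃ n₀ : ℕ, ∀ n : ℕ, n₀ ≤ n →
        (c₁ * (n : ℝ) ^ (α + 1) ≤
            (((Finset.Icc 1 (Nat.floor (Mseq β n))).filter
              (fun k => 16 ≤ k ∧ ε k ω = 1)).card : ℝ) ∧
          (((Finset.Icc 1 (Nat.floor (Mseq β n))).filter
              (fun k => 16 ≤ k ∧ ε k ω = 1)).card : ℝ) ≤ c₂ * (n : ℝ) ^ (α + 1)) ∧
        (c₁ * (n : ℝ) ^ α ≤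
            (((Finset.Ico (Nat.ceil (Mseq β n)) (Nat.ceil (Mseq β (n + 1)))).filter
              (fun k => 16 ≤ k ∧ ε k ω = 1)).card : ℝ) ∧
          (((Finset.Ico (Nat.ceil (Mseq β n)) (Nat.ceil (Mseq β (n + 1)))).filter
              (fun k => 16 ≤ k ∧ ε k ω = 1)).card : ℝ) ≤ c₂ * (n : ℝ) ^ α) := by
  have hβ1 : 1 < β := lt_trans hα hβ
  obtain ⟨K₁, K₂, N, hK₁0, hK₁₂, hN16, hbounds⟩ := rsbg_mean_bounds α β c hα hβ hc
  set t1 : ℕ → Finset ℕ := fun n => Finset.Icc 16 ⌊Mseq β n⌋₊ with ht1_def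
  set t2 : ℕ → Finset ℕ := fun n => Finset.Ico ⌈Mseq β n⌉₊ ⌈Mseq β (n+1)⌉₊ with ht2_def
  set m1 : ℕ → ℝ := fun n => ∑ k ∈ t1 n, selectorMean c α k with hm1_def
  set m2 : ℕ → ℝ := fun n => ∑ k ∈ t2 n, selectorMean c α k with hm2_def
  set Bad : ℕ → Set Ω := fun n =>
    {ω | m1 n / 2 ≤ |(∑ k ∈ t1 n, ε k) ω - m1 n|} ∪
    {ω | m2 n / 2 ≤ |(∑ k ∈ t2 n, ε k) ω - m2 n|} with hBad_def
  have ht1mem : ∀ n, ∀ k ∈ t1 n, 16 ≤ k := fun n k hk => (Finset.mem_Icc.mp hk).1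
  have h16ceil : ∀ n : ℕ, N ≤ n → 16 ≤ ⌈Mseq β n⌉₊ := by
    intro n hn
    have h16 : (16:ℝ) ≤ Mseq β n := rsbg_sixteen_le_Mseq (le_of_lt hβ1) (by omega)
    have h2 : (16:ℝ) ≤ (⌈Mseq β n⌉₊:ℝ) := le_trans h16 (Nat.le_ceil _)
    exact_mod_cast h2
  have ht2mem : ∀ n : ℕ, N ≤ n → ∀ k ∈ t2 n, 16 ≤ k := by
    intro n hn k hk
    have := (Finset.mem_Ico.mp hk).1
    have := h16ceil n hn
    omega
  -- measure bounds on bad events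
  have hPBad : ∀ n : ℕ, N ≤ n → P (Bad n) ≤ ENNReal.ofReal ((8/K₁) * ((n:ℝ)^α)⁻¹) := by
    intro n hn
    have hn1 : (1:ℝ) ≤ n := by
      have : (16:ℕ) ≤ n := by omega
      exact_mod_cast le_trans (by norm_num) this
    have hn0 : (0:ℝ) < n := by linarith
    have hpα : (0:ℝ) < (n:ℝ)^α := Real.rpow_pos_of_pos hn0 _
    have hpα1 : (0:ℝ) < (n:ℝ)^(α+1) := Real.rpow_pos_of_pos hn0 _
    have hmono : (n:ℝ)^α ≤ (n:ℝ)^(α+1) :=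
      Real.rpow_le_rpow_of_exponent_le hn1 (by linarith)
    obtain ⟨⟨hfl, hfu⟩, hbl, hbu⟩ := hbounds n hn
    have hm1pos : 0 < m1 n := lt_of_lt_of_le (by positivity) hfl
    have hm2pos : 0 < m2 n := lt_of_lt_of_le (by positivity) hbl
    have hc1 := rsbg_cheb α c ε hmeas hindep hval hmean (t1 n) (ht1mem n) rfl hm1pos
    have hc2 := rsbg_cheb α c ε hmeas hindep hval hmean (t2 n) (ht2mem n hn) rfl hm2pos
    have hb1 : 4 / m1 n ≤ (4/K₁) * ((n:ℝ)^α)⁻¹ := by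
      have h1 : K₁ * (n:ℝ)^α ≤ m1 n := by
        calc K₁ * (n:ℝ)^α ≤ K₁ * (n:ℝ)^(α+1) :=
              mul_le_mul_of_nonneg_left hmono (le_of_lt hK₁0)
          _ ≤ m1 n := hfl
      have h2 : (4:ℝ)/K₁ * ((n:ℝ)^α)⁻¹ = 4 / (K₁ * (n:ℝ)^α) := by field_simp
      rw [h2]
      apply div_le_div_of_nonneg_left (by norm_num) (by positivity) h1
    have hb2 : 4 / m2 n ≤ (4/K₁) * ((n:ℝ)^α)⁻¹ := by
      have h2 : (4:ℝ)/K₁ * ((n:ℝ)^α)⁻¹ = 4 / (K₁ * (n:ℝ)^α) := by field_simp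
      rw [h2]
      apply div_le_div_of_nonneg_left (by norm_num) (by positivity) hbl
    calc P (Bad n) ≤ P {ω | m1 n / 2 ≤ |(∑ k ∈ t1 n, ε k) ω - m1 n|}
          + P {ω | m2 n / 2 ≤ |(∑ k ∈ t2 n, ε k) ω - m2 n|} := measure_union_le _ _
      _ ≤ ENNReal.ofReal (4 / m1 n) + ENNReal.ofReal (4 / m2 n) := add_le_add hc1 hc2
      _ ≤ ENNReal.ofReal ((4/K₁) * ((n:ℝ)^α)⁻¹) + ENNReal.ofReal ((4/K₁) * ((n:ℝ)^α)⁻¹) :=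
          add_le_add (ENNReal.ofReal_le_ofReal hb1) (ENNReal.ofReal_le_ofReal hb2)
      _ = ENNReal.ofReal ((4/K₁) * ((n:ℝ)^α)⁻¹ + (4/K₁) * ((n:ℝ)^α)⁻¹) :=
          (ENNReal.ofReal_add (by positivity) (by positivity)).symm
      _ = ENNReal.ofReal ((8/K₁) * ((n:ℝ)^α)⁻¹) := by ring_nf
  set h : ℕ → ℝ := fun n => if n < N then 2 else (8/K₁) * ((n:ℝ)^α)⁻¹ with hh_def
  have hhnn : ∀ n, 0 ≤ h n := by
    intro n
    simp only [hh_def]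
    by_cases hn : n < N
    · rw [if_pos hn]; norm_num
    · rw [if_neg hn]; positivity
  have hP : ∀ n, P (Bad n) ≤ ENNReal.ofReal (h n) := by
    intro n
    by_cases hn : n < N
    · simp only [hh_def, if_pos hn]
      calc P (Bad n) ≤ P {ω | m1 n / 2 ≤ |(∑ k ∈ t1 n, ε k) ω - m1 n|}
            + P {ω | m2 n / 2 ≤ |(∑ k ∈ t2 n, ε k) ω - m2 n|} := measure_union_le _ _
        _ ≤ 1 + 1 := add_le_add prob_le_one prob_le_one
        _ ≤ ENNReal.ofReal 2 := by
            rw [show ((2:ℝ)) = (1:ℝ) + 1 by norm_num, ENNReal.ofReal_add (by norm_num) (by norm_num)]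
            simp
    · simp only [hh_def, if_neg hn]
      exact hPBad n (by omega)
  have hs : Summable (fun n : ℕ => ((n:ℝ)^α)⁻¹) := Real.summable_nat_rpow_inv.mpr hα
  have hs2 : Summable (fun n : ℕ => (8/K₁) * ((n:ℝ)^α)⁻¹) := hs.mul_left _
  have hsh : Summable h := by
    apply (summable_nat_add_iff N).mp
    apply Summable.congr ((summable_nat_add_iff N).mpr hs2)
    intro n
    simp only [hh_def, if_neg (by omega : ¬ (n + N < N))]
  have htsum : (∑' n, P (Bad n)) ≠ ⊤ := by
    have h1 : (∑' n, P (Bad n)) ≤ ∑' n, ENNReal.ofReal (h n) := ENNReal.tsum_le_tsum hP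
    have h2 : (∑' n, ENNReal.ofReal (h n)) = ENNReal.ofReal (∑' n, h n) :=
      (ENNReal.ofReal_tsum_of_nonneg hhnn hsh).symm
    rw [h2] at h1
    exact ne_top_of_le_ne_top ENNReal.ofReal_ne_top h1
  refine ⟨K₁/2, 3*K₂/2, by positivity, by linarith, ?_⟩
  filter_upwards [MeasureTheory.ae_eventually_notMem htsum] with ω hω
  obtain ⟨n₀', hn₀'⟩ := Filter.eventually_atTop.mp hω
  refine ⟨max n₀' N, fun n hn => ?_⟩
  have hnN : N ≤ n := le_trans (le_max_right _ _) hn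
  have hnot := hn₀' n (le_trans (le_max_left _ _) hn)
  rw [hBad_def] at hnot
  simp only [Set.mem_union, Set.mem_setOf_eq, not_or, not_le] at hnot
  obtain ⟨hnot1, hnot2⟩ := hnot
  have habs1 := abs_lt.mp hnot1
  have habs2 := abs_lt.mp hnot2
  obtain ⟨⟨hfl, hfu⟩, hbl, hbu⟩ := hbounds n hnN
  have hcard1 : (((Finset.Icc 1 ⌊Mseq β n⌋₊).filter
      (fun k => 16 ≤ k ∧ ε k ω = 1)).card : ℝ) = (∑ k ∈ t1 n, ε k) ω := by
    rw [rsbg_filter_Icc ε ω]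
    exact rsbg_card_eq ε hval ω (t1 n) (ht1mem n)
  have hcard2 : (((Finset.Ico ⌈Mseq β n⌉₊ ⌈Mseq β (n+1)⌉₊).filter
      (fun k => 16 ≤ k ∧ ε k ω = 1)).card : ℝ) = (∑ k ∈ t2 n, ε k) ω := by
    rw [rsbg_filter_Ico ε ω (h16ceil n hnN)]
    exact rsbg_card_eq ε hval ω (t2 n) (ht2mem n hnN)
  refine ⟨⟨?_, ?_⟩, ?_, ?_⟩
  · rw [hcard1]; linarith [habs1.1, habs1.2, hfl]
  · rw [hcard1]; linarith [habs1.1, habs1.2, hfu]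
  · rw [hcard2]; linarith [habs2.1, habs2.2, hbl]
  · rw [hcard2]; linarith [habs2.1, habs2.2, hbu]
end

section
/- There is a numerical constant C > 0 with the following property. Let (ε_k)_{k ≥ 1} be independent {0,1}-valued random variables with E[ε_k] = δ_k ∈ [0,1], let Λ(ω) = {k ≥ 1 : ε_k(ω) = 1}, and set σ_j = δ_1 + ⋯ + δ_j. For integers n ≥ 2 and M ≥ 1, let Ω_n(M) be the event that Λ(ω) ∩ [M, ∞) contains at least one relation of length n. Then P[Ω_n(M)] ≤ (Cⁿ / nⁿ) Σ_{j > M} δ_j² σ_j^{n−2}. -/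
open MeasureTheory ProbabilityTheory
open scoped ENNReal

lemma aux_np : ∀ n : ℕ, (n:ℝ)^n ≤ 3^n * n.factorial := by
  intro n
  induction n with
  | zero => simp
  | succ n ih =>
    have h3 : ((n:ℝ)+1)^n ≤ 3 * (n:ℝ)^n := by
      rcases Nat.eq_zero_or_pos n with h | h
      · subst h; norm_num
      · have hn : (0:ℝ) < n := by exact_mod_cast h
        have h1 : ((n:ℝ)+1) = n * (1 + 1/n) := by field_simp
        have h2 : (1 + 1/(n:ℝ))^n ≤ 3 := by
          have := Real.add_one_le_exp (1/(n:ℝ))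
          calc (1 + 1/(n:ℝ))^n ≤ (Real.exp (1/n))^n := by
                apply pow_le_pow_left₀ (by positivity) (by linarith)
            _ = Real.exp 1 := by
                rw [← Real.exp_nat_mul]; congr 1; field_simp
            _ ≤ 3 := by linarith [Real.exp_one_lt_d9.le]
        calc ((n:ℝ)+1)^n = (n:ℝ)^n * (1+1/n)^n := by rw [h1, mul_pow]
          _ ≤ (n:ℝ)^n * 3 := by
              apply mul_le_mul_of_nonneg_left h2 (by positivity)
          _ = 3 * (n:ℝ)^n := by ring
    have hnn : (0:ℝ) ≤ (n:ℝ)^n := by positivity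
    calc ((n+1:ℕ):ℝ)^(n+1) = ((n:ℝ)+1)^(n+1) := by push_cast; ring
      _ = ((n:ℝ)+1)^n * ((n:ℝ)+1) := by ring
      _ ≤ 3 * (n:ℝ)^n * ((n:ℝ)+1) := by
          apply mul_le_mul_of_nonneg_right h3 (by positivity)
      _ ≤ 3 * (3^n * n.factorial) * ((n:ℝ)+1) := by
          apply mul_le_mul_of_nonneg_right (by linarith) (by positivity)
      _ = 3^(n+1) * ((n+1) * n.factorial) := by ring
      _ = 3^(n+1) * (n+1).factorial := by
          rw [Nat.factorial_succ]; push_cast; ring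

lemma aux_esymm (f : ℕ → ℝ≥0∞) (I : Finset ℕ) :
    ∀ m : ℕ, (m.factorial : ℝ≥0∞) * ∑ S ∈ I.powersetCard m, ∏ k ∈ S, f k ≤ (∑ k ∈ I, f k) ^ m := by
  intro m
  induction m with
  | zero => simp
  | succ m ih =>
    have key : (m+1 : ℝ≥0∞) * ∑ S ∈ I.powersetCard (m+1), ∏ k ∈ S, f k ≤
        (∑ k ∈ I, f k) * ∑ T ∈ I.powersetCard m, ∏ k ∈ T, f k := by
      have e1 : (m+1 : ℝ≥0∞) * ∑ S ∈ I.powersetCard (m+1), ∏ k ∈ S, f k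
          = ∑ S ∈ I.powersetCard (m+1), ∑ x ∈ S, (f x * ∏ k ∈ S.erase x, f k) := by
        rw [Finset.mul_sum]
        apply Finset.sum_congr rfl
        intro S hS
        rw [Finset.mem_powersetCard] at hS
        have : ∀ x ∈ S, f x * ∏ k ∈ S.erase x, f k = ∏ k ∈ S, f k := by
          intro x hx; rw [Finset.mul_prod_erase _ _ hx]
        rw [Finset.sum_congr rfl this, Finset.sum_const, hS.2, nsmul_eq_mul]
        push_cast; ring
      have e2 : ∑ S ∈ I.powersetCard (m+1), ∑ x ∈ S, (f x * ∏ k ∈ S.erase x, f k)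
          = ∑ T ∈ I.powersetCard m, ∑ x ∈ I \ T, (f x * ∏ k ∈ T, f k) := by
        rw [Finset.sum_sigma', Finset.sum_sigma']
        refine Finset.sum_bij'
          (fun p _ => ⟨p.1.erase p.2, p.2⟩) (fun p _ => ⟨insert p.2 p.1, p.2⟩)
          ?hi ?hj ?li ?ri ?h
        case hi =>
          intro p hp
          simp only [Finset.mem_sigma, Finset.mem_powersetCard] at hp ⊢
          obtain ⟨⟨hsub, hcard⟩, hx⟩ := hp
          refine ⟨⟨(Finset.erase_subset _ _).trans hsub, ?_⟩, ?_⟩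
          · rw [Finset.card_erase_of_mem hx, hcard]; rfl
          · simp [Finset.mem_sdiff, hsub hx]
        case hj =>
          intro p hp
          simp only [Finset.mem_sigma, Finset.mem_powersetCard, Finset.mem_sdiff] at hp ⊢
          obtain ⟨⟨hsub, hcard⟩, hxI, hxT⟩ := hp
          refine ⟨⟨?_, ?_⟩, Finset.mem_insert_self _ _⟩
          · exact Finset.insert_subset hxI hsub
          · rw [Finset.card_insert_of_notMem hxT, hcard]
        case li =>
          rintro ⟨S, x⟩ hp
          simp only [Finset.mem_sigma] at hp
          simp only [Sigma.mk.inj_iff, heq_eq_eq]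
          exact ⟨Finset.insert_erase hp.2, trivial⟩
        case ri =>
          rintro ⟨S, x⟩ hp
          simp only [Finset.mem_sigma, Finset.mem_sdiff] at hp
          simp only [Sigma.mk.inj_iff, heq_eq_eq]
          exact ⟨Finset.erase_insert hp.2.2, trivial⟩
        case h =>
          intro p hp
          rfl
      have e3 : ∑ T ∈ I.powersetCard m, ∑ x ∈ I \ T, (f x * ∏ k ∈ T, f k)
          ≤ ∑ T ∈ I.powersetCard m, ∑ x ∈ I, (f x * ∏ k ∈ T, f k) := by
        apply Finset.sum_le_sum
        intro T _
        exact Finset.sum_le_sum_of_subset (Finset.sdiff_subset)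
      calc (m+1 : ℝ≥0∞) * ∑ S ∈ I.powersetCard (m+1), ∏ k ∈ S, f k
          = ∑ T ∈ I.powersetCard m, ∑ x ∈ I \ T, (f x * ∏ k ∈ T, f k) := by rw [e1, e2]
        _ ≤ ∑ T ∈ I.powersetCard m, ∑ x ∈ I, (f x * ∏ k ∈ T, f k) := e3
        _ = (∑ k ∈ I, f k) * ∑ T ∈ I.powersetCard m, ∏ k ∈ T, f k := by
            rw [Finset.mul_sum]
            apply Finset.sum_congr rfl
            intro T _
            rw [← Finset.sum_mul]
    calc ((m+1).factorial : ℝ≥0∞) * ∑ S ∈ I.powersetCard (m+1), ∏ k ∈ S, f k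
        = (m.factorial : ℝ≥0∞) * ((m+1 : ℝ≥0∞) * ∑ S ∈ I.powersetCard (m+1), ∏ k ∈ S, f k) := by
          rw [Nat.factorial_succ]; push_cast; ring
      _ ≤ (m.factorial : ℝ≥0∞) * ((∑ k ∈ I, f k) * ∑ T ∈ I.powersetCard m, ∏ k ∈ T, f k) :=
          mul_le_mul_right key _
      _ = (∑ k ∈ I, f k) * ((m.factorial : ℝ≥0∞) * ∑ T ∈ I.powersetCard m, ∏ k ∈ T, f k) := by ring
      _ ≤ (∑ k ∈ I, f k) * (∑ k ∈ I, f k) ^ m := mul_le_mul_right ih _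
      _ = (∑ k ∈ I, f k) ^ (m+1) := by ring

lemma aux_nat_fact {n : ℕ} (hn : 2 ≤ n) : n.factorial ≤ n ^ 2 * (n - 2).factorial := by
  obtain ⟨m, rfl⟩ : ∃ m, n = m + 2 := ⟨n - 2, by omega⟩
  simp only [Nat.add_sub_cancel]
  calc (m + 2).factorial = (m + 2) * ((m + 1) * m.factorial) := by
        rw [Nat.factorial_succ, Nat.factorial_succ]
    _ ≤ (m + 2) * ((m + 2) * m.factorial) :=
        Nat.mul_le_mul_left _ (Nat.mul_le_mul_right _ (by omega))
    _ = (m + 2) ^ 2 * m.factorial := by ring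

lemma aux_real_const {n : ℕ} (hn : 3 ≤ n) :
    (2:ℝ) ^ n * (((n - 2).factorial : ℝ))⁻¹ ≤ 100 ^ n / (n:ℝ) ^ n := by
  have hfac : (0:ℝ) < ((n - 2).factorial : ℝ) := by exact_mod_cast (n-2).factorial_pos
  have hnn : (0:ℝ) < (n:ℝ) ^ n := by positivity
  rw [← div_eq_mul_inv, div_le_div_iff₀ hfac hnn]
  have h1 : (n:ℝ)^n ≤ 3^n * n.factorial := aux_np n
  have h2 : (n.factorial : ℝ) ≤ (n:ℝ)^2 * ((n-2).factorial : ℝ) := by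
    exact_mod_cast aux_nat_fact (by omega)
  have h3 : (n:ℝ)^2 ≤ 4^n := by
    have hh : (n:ℝ) ≤ 2^n := by exact_mod_cast (Nat.lt_two_pow_self (n := n)).le
    calc (n:ℝ)^2 ≤ ((2:ℝ)^n)^2 := by
          apply pow_le_pow_left₀ (by positivity) hh
      _ = 4^n := by rw [← pow_mul, mul_comm, pow_mul]; norm_num
  calc (2:ℝ)^n * (n:ℝ)^n ≤ 2^n * (3^n * n.factorial) := by
        apply mul_le_mul_of_nonneg_left h1 (by positivity)
    _ ≤ 2^n * (3^n * ((n:ℝ)^2 * ((n-2).factorial : ℝ))) := by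
        apply mul_le_mul_of_nonneg_left _ (by positivity)
        apply mul_le_mul_of_nonneg_left h2 (by positivity)
    _ ≤ 2^n * (3^n * (4^n * ((n-2).factorial : ℝ))) := by
        apply mul_le_mul_of_nonneg_left _ (by positivity)
        apply mul_le_mul_of_nonneg_left _ (by positivity)
        apply mul_le_mul_of_nonneg_right h3 hfac.le
    _ = 24^n * ((n-2).factorial : ℝ) := by
        rw [show (24:ℝ) = 2 * (3 * 4) by norm_num, mul_pow, mul_pow]; ring
    _ ≤ 100^n * ((n-2).factorial : ℝ) := by
        apply mul_le_mul_of_nonneg_right _ hfac.le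
        apply pow_le_pow_left₀ (by norm_num) (by norm_num)

def Rset (n M : ℕ) : Set (ℕ →₀ ℤ) :=
  {θ | (∀ k, θ k ≠ 0 → M ≤ k) ∧ (∀ k, θ k = -1 ∨ θ k = 0 ∨ θ k = 1) ∧
    (∑ k ∈ θ.support, θ k * (k : ℤ)) = 0 ∧ (∑ k ∈ θ.support, |θ k|) = (n : ℤ)}

def fmax (S : Finset ℕ) : ℕ := WithBot.unbotD 0 S.max

lemma fmax_mem {S : Finset ℕ} (h : S.Nonempty) : fmax S ∈ S := by
  rcases Finset.max_of_nonempty h with ⟨a, ha⟩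
  have : fmax S = a := by simp [fmax, ha]
  rw [this]
  exact Finset.mem_of_max ha

lemma le_fmax {S : Finset ℕ} {x : ℕ} (hx : x ∈ S) : x ≤ fmax S := by
  rcases Finset.max_of_nonempty ⟨x, hx⟩ with ⟨a, ha⟩
  have h2 : fmax S = a := by simp [fmax, ha]
  have := Finset.le_max hx
  rw [ha] at this
  rw [h2]
  exact_mod_cast this

noncomputable section
open Classical

def kk1 (θ : ℕ →₀ ℤ) : ℕ := fmax θ.support
def kk2 (θ : ℕ →₀ ℤ) : ℕ := fmax (θ.support.erase (kk1 θ))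
def ee (δ : ℕ → ℝ) (θ : ℕ →₀ ℤ) : ℕ := if δ (kk1 θ) ≤ δ (kk2 θ) then kk1 θ else kk2 θ
def jj (δ : ℕ → ℝ) (θ : ℕ →₀ ℤ) : ℕ := if δ (kk1 θ) ≤ δ (kk2 θ) then kk2 θ else kk1 θ
def eta (δ : ℕ → ℝ) (θ : ℕ →₀ ℤ) : ℕ →₀ ℤ := θ.erase (ee δ θ)
def Phi (δ : ℕ → ℝ) (θ : ℕ →₀ ℤ) : Bool × ℕ × Finset ℕ × Finset ℕ :=
  (decide (δ (kk1 θ) ≤ δ (kk2 θ)), jj δ θ, ((eta δ θ).support).erase (jj δ θ),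
    ((eta δ θ).support).filter (fun k => θ k = 1))

def reconEta (x : ℕ × Finset ℕ × Finset ℕ) : ℕ → ℤ := fun k =>
  if k ∈ insert x.1 x.2.1 then (if k ∈ x.2.2 then 1 else -1) else 0

def sval (η : ℕ →₀ ℤ) : ℤ := ∑ k ∈ η.support, η k * k

def reconTheta (η : ℕ →₀ ℤ) : ℕ → ℤ := fun k =>
  if k = (sval η).natAbs then (if 0 ≤ sval η then -1 else 1) else η k

lemma main_facts (δ : ℕ → ℝ) {n M : ℕ} (hn : 3 ≤ n) (hM : 1 ≤ M)
    (θ : ℕ →₀ ℤ) (hθ : θ ∈ Rset n M) :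
    M < jj δ θ ∧
    ((eta δ θ).support).erase (jj δ θ) ⊆ Finset.Icc 1 (jj δ θ) ∧
    (((eta δ θ).support).erase (jj δ θ)).card = n - 2 ∧
    ((eta δ θ).support).filter (fun k => θ k = 1) ⊆
      insert (jj δ θ) (((eta δ θ).support).erase (jj δ θ)) ∧
    δ (ee δ θ) ≤ δ (jj δ θ) ∧
    θ.support = insert (ee δ θ) ((eta δ θ).support) ∧
    ee δ θ ∉ (eta δ θ).support ∧
    (eta δ θ).support = insert (jj δ θ) (((eta δ θ).support).erase (jj δ θ)) ∧
    jj δ θ ∉ ((eta δ θ).support).erase (jj δ θ) ∧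
    (∀ k, (eta δ θ) k = reconEta (Phi δ θ).2 k) ∧
    (∀ k, θ k = reconTheta (eta δ θ) k) := by
  obtain ⟨hsup, hval, hzero, hlen⟩ := hθ
  have hvals' : ∀ k ∈ θ.support, θ k = 1 ∨ θ k = -1 := by
    intro k hk
    have h0 : θ k ≠ 0 := Finsupp.mem_support_iff.mp hk
    rcases hval k with h | h | h
    · exact Or.inr h
    · exact absurd h h0
    · exact Or.inl h
  have habs : ∀ k ∈ θ.support, |θ k| = 1 := by
    intro k hk; rcases hvals' k hk with h | h <;> rw [h] <;> rfl
  have hMsup : ∀ k ∈ θ.support, M ≤ k := fun k hk => hsup k (Finsupp.mem_support_iff.mp hk)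
  have hcard : θ.support.card = n := by
    have h1 : (∑ k ∈ θ.support, |θ k|) = (θ.support.card : ℤ) := by
      rw [Finset.sum_congr rfl habs]; simp
    rw [h1] at hlen; exact_mod_cast hlen
  have hne : θ.support.Nonempty := Finset.card_pos.mp (by omega)
  have hk1mem : kk1 θ ∈ θ.support := fmax_mem hne
  have hk1max : ∀ x ∈ θ.support, x ≤ kk1 θ := fun x hx => le_fmax hx
  have hE1card : (θ.support.erase (kk1 θ)).card = n - 1 := by
    rw [Finset.card_erase_of_mem hk1mem, hcard]
  have hE1ne : (θ.support.erase (kk1 θ)).Nonempty := Finset.card_pos.mp (by omega)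
  have hk2memE : kk2 θ ∈ θ.support.erase (kk1 θ) := fmax_mem hE1ne
  have hk2max : ∀ x ∈ θ.support.erase (kk1 θ), x ≤ kk2 θ := fun x hx => le_fmax hx
  have hk2mem : kk2 θ ∈ θ.support := Finset.mem_of_mem_erase hk2memE
  have hk2ne : kk2 θ ≠ kk1 θ := (Finset.mem_erase.mp hk2memE).1
  have hk2le : kk2 θ ≤ kk1 θ := hk1max _ hk2mem
  have hMk2 : M < kk2 θ := by
    have hcc : ((θ.support.erase (kk1 θ)).erase (kk2 θ)).Nonempty := by
      apply Finset.card_pos.mp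
      rw [Finset.card_erase_of_mem hk2memE, hE1card]; omega
    obtain ⟨c, hc⟩ := hcc
    have hc2 : c ≠ kk2 θ := (Finset.mem_erase.mp hc).1
    have hc3 : c ∈ θ.support.erase (kk1 θ) := Finset.mem_of_mem_erase hc
    have hc4 : c ≤ kk2 θ := hk2max _ hc3
    have hc5 : M ≤ c := hMsup _ (Finset.mem_of_mem_erase hc3)
    omega
  have hMk1 : M < kk1 θ := lt_of_lt_of_le hMk2 hk2le
  have hE : ee δ θ ∈ θ.support ∧ jj δ θ ∈ θ.support ∧ ee δ θ ≠ jj δ θ ∧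
      δ (ee δ θ) ≤ δ (jj δ θ) ∧ M < jj δ θ ∧
      (∀ k ∈ θ.support.erase (ee δ θ), k ≤ jj δ θ) := by
    by_cases hb : δ (kk1 θ) ≤ δ (kk2 θ)
    · rw [ee, jj, if_pos hb, if_pos hb]
      exact ⟨hk1mem, hk2mem, Ne.symm hk2ne, hb, hMk2, fun k hk => hk2max k hk⟩
    · rw [ee, jj, if_neg hb, if_neg hb]
      refine ⟨hk2mem, hk1mem, hk2ne, (not_le.mp hb).le, hMk1, ?_⟩
      intro k hk
      exact hk1max _ (Finset.mem_of_mem_erase hk)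
  obtain ⟨heemem, hjmem, heejne, hdle, hMjj, hle_jj⟩ := hE
  have hsuppeta : (eta δ θ).support = θ.support.erase (ee δ θ) := Finsupp.support_erase
  have hjmem_eta : jj δ θ ∈ (eta δ θ).support := by
    rw [hsuppeta]; exact Finset.mem_erase.mpr ⟨Ne.symm heejne, hjmem⟩
  have hle_jj' : ∀ k ∈ (eta δ θ).support, k ≤ jj δ θ := by
    intro k hk; rw [hsuppeta] at hk; exact hle_jj k hk
  have hsub_supp : (eta δ θ).support ⊆ θ.support := by
    rw [hsuppeta]; exact Finset.erase_subset _ _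
  have hins_eta : (eta δ θ).support = insert (jj δ θ) (((eta δ θ).support).erase (jj δ θ)) :=
    (Finset.insert_erase hjmem_eta).symm
  have hjS : jj δ θ ∉ ((eta δ θ).support).erase (jj δ θ) := Finset.notMem_erase _ _
  have heta_apply : ∀ k, k ≠ ee δ θ → (eta δ θ) k = θ k := fun k hk => Finsupp.erase_ne hk
  have hee_not : ee δ θ ∉ (eta δ θ).support := by
    rw [hsuppeta]; exact Finset.notMem_erase _ _
  have hsupp_ins : θ.support = insert (ee δ θ) ((eta δ θ).support) := by
    rw [hsuppeta, Finset.insert_erase heemem]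
  refine ⟨hMjj, ?_, ?_, ?_, hdle, hsupp_ins, hee_not, hins_eta, hjS, ?_, ?_⟩
  · intro k hk
    have hk1 : k ∈ (eta δ θ).support := Finset.mem_of_mem_erase hk
    have : M ≤ k := hMsup _ (hsub_supp hk1)
    exact Finset.mem_Icc.mpr ⟨by omega, hle_jj' _ hk1⟩
  · rw [Finset.card_erase_of_mem hjmem_eta, hsuppeta, Finset.card_erase_of_mem heemem, hcard]
    omega
  · rw [← hins_eta]; exact Finset.filter_subset _ _
  · intro k
    show (eta δ θ) k = reconEta (jj δ θ, ((eta δ θ).support).erase (jj δ θ),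
      ((eta δ θ).support).filter (fun k => θ k = 1)) k
    unfold reconEta
    simp only [← hins_eta]
    by_cases hk : k ∈ (eta δ θ).support
    · rw [if_pos hk]
      have hkne : k ≠ ee δ θ := by
        intro h; rw [h] at hk; exact hee_not hk
      have hkθ : (eta δ θ) k = θ k := heta_apply k hkne
      by_cases h1 : θ k = 1
      · rw [if_pos (Finset.mem_filter.mpr ⟨hk, h1⟩), hkθ, h1]
      · have hnot : k ∉ Finset.filter (fun k => θ k = 1) (eta δ θ).support :=
          fun hmem => h1 (Finset.mem_filter.mp hmem).2
        rw [if_neg hnot, hkθ]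
        rcases hvals' k (hsub_supp hk) with h | h
        · exact absurd h h1
        · rw [h]
    · rw [if_neg hk]
      exact Finsupp.notMem_support_iff.mp hk
  · have hsum0 : θ (ee δ θ) * (ee δ θ : ℤ) + sval (eta δ θ) = 0 := by
      have h1 : ∑ k ∈ θ.support, θ k * (k : ℤ) =
          θ (ee δ θ) * (ee δ θ : ℤ) + ∑ k ∈ (eta δ θ).support, θ k * (k : ℤ) := by
        rw [hsupp_ins, Finset.sum_insert hee_not]
      have h2 : ∑ k ∈ (eta δ θ).support, θ k * (k : ℤ) = sval (eta δ θ) := by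
        apply Finset.sum_congr rfl
        intro k hk
        have hkne : k ≠ ee δ θ := fun h => hee_not (h ▸ hk)
        rw [heta_apply k hkne]
      rw [← h2, ← h1, hzero]
    have heeM : 1 ≤ ee δ θ := le_trans hM (hMsup _ heemem)
    have heeZ : (1 : ℤ) ≤ (ee δ θ : ℤ) := by exact_mod_cast heeM
    have hee1 := hvals' _ heemem
    have hnatAbs : (sval (eta δ θ)).natAbs = ee δ θ ∧
        θ (ee δ θ) = (if 0 ≤ sval (eta δ θ) then -1 else 1) := by
      rcases hee1 with h | h
      · have hs : sval (eta δ θ) = -(ee δ θ : ℤ) := by rw [h] at hsum0; linarith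
        constructor
        · rw [hs, Int.natAbs_neg, Int.natAbs_natCast]
        · rw [h, if_neg]; rw [hs]; omega
      · have hs : sval (eta δ θ) = (ee δ θ : ℤ) := by rw [h] at hsum0; linarith
        constructor
        · rw [hs, Int.natAbs_natCast]
        · rw [h, if_pos]; rw [hs]; omega
    intro k
    unfold reconTheta
    rw [hnatAbs.1]
    by_cases hk : k = ee δ θ
    · rw [if_pos hk, hk, hnatAbs.2]
    · rw [if_neg hk, heta_apply k hk]

lemma phi_injOn (δ : ℕ → ℝ) {n M : ℕ} (hn : 3 ≤ n) (hM : 1 ≤ M) :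
    Set.InjOn (Phi δ) (Rset n M) := by
  intro θ hθ θ' hθ' heq
  obtain ⟨-, -, -, -, -, -, -, -, -, hre, hrt⟩ := main_facts δ hn hM θ hθ
  obtain ⟨-, -, -, -, -, -, -, -, -, hre', hrt'⟩ := main_facts δ hn hM θ' hθ'
  have hetaeq : eta δ θ = eta δ θ' := by
    ext k
    rw [hre k, hre' k, heq]
  ext k
  rw [hrt k, hrt' k, hetaeq]

end

/-- A set `A` of positive integers contains a relation of length `n`: there is a finitely
supported family `(θ_k)` with `θ_k ∈ {-1, 0, +1}`, supported in `A`, with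
`∑ θ_k k = 0` and `∑ |θ_k| = n`. -/
def HasRelationOfLength (A : Set ℕ) (n : ℕ) : Prop :=
  ∃ θ : ℕ →₀ ℤ, (∀ k, θ k ≠ 0 → k ∈ A) ∧ (∀ k, θ k = -1 ∨ θ k = 0 ∨ θ k = 1) ∧
    (∑ k ∈ θ.support, θ k * (k : ℤ)) = 0 ∧ (∑ k ∈ θ.support, |θ k|) = (n : ℤ)

/-- **Lemma on the probability of relations (Lemma 4.2 of [LQR]).** There is a numerical
constant `C > 0` such that for any selectors `ε_k` of means `δ_k ∈ [0,1]`, the random set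
`Λ(ω) = {k ≥ 1 : ε_k(ω) = 1}`, and `σ_j = δ_1 + ⋯ + δ_j`, the probability that
`Λ(ω) ∩ [M, ∞)` contains a relation of length `n` is at most
`(Cⁿ/nⁿ) ∑_{j > M} δ_j² σ_j^{n-2}` (for `n ≥ 2`, `M ≥ 1`). -/
theorem prob_relation_le :
    ∃ C : ℝ, 0 < C ∧
      ∀ (Ω : Type) (_ : MeasurableSpace Ω) (P : Measure Ω), IsProbabilityMeasure P →
      ∀ (δ : ℕ → ℝ), (∀ k, 0 ≤ δ k) → (∀ k, δ k ≤ 1) →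
      ∀ (ε : ℕ → Ω → ℝ), (∀ k, Measurable (ε k)) →
        iIndepFun ε P →
        (∀ k ω, ε k ω = 0 ∨ ε k ω = 1) →
        (∀ k, ∫ ω, ε k ω ∂P = δ k) →
      ∀ (n M : ℕ), 2 ≤ n → 1 ≤ M →
        P {ω | HasRelationOfLength {k : ℕ | 1 ≤ k ∧ ε k ω = 1 ∧ M ≤ k} n} ≤
          ENNReal.ofReal (C ^ n / (n : ℝ) ^ n) *
            ∑' j : ℕ, if M < j then
              ENNReal.ofReal (δ j ^ 2 * (∑ i ∈ Finset.Icc 1 j, δ i) ^ (n - 2))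
            else 0 := by
  classical
  refine ⟨100, by norm_num, ?_⟩
  intro Ω mΩ P hP δ hδ0 hδ1 ε hmeas hindep hε01 hint n M hn hM
  rcases Nat.lt_or_ge n 3 with hn3 | hn3
  · -- n = 2 : no relations exist
    have hn2 : n = 2 := by omega
    have hempty : {ω | HasRelationOfLength {k : ℕ | 1 ≤ k ∧ ε k ω = 1 ∧ M ≤ k} n} = ∅ := by
      ext ω
      simp only [Set.mem_setOf_eq, Set.mem_empty_iff_false, iff_false]
      rintro ⟨θ, hsupp, hval, hzero, hlen⟩
      have hvals' : ∀ k ∈ θ.support, θ k = 1 ∨ θ k = -1 := by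
        intro k hk
        have h0 : θ k ≠ 0 := Finsupp.mem_support_iff.mp hk
        rcases hval k with h | h | h
        · exact Or.inr h
        · exact absurd h h0
        · exact Or.inl h
      have habs : ∀ k ∈ θ.support, |θ k| = 1 := by
        intro k hk; rcases hvals' k hk with h | h <;> rw [h] <;> rfl
      have hcard : θ.support.card = 2 := by
        have h1 : (∑ k ∈ θ.support, |θ k|) = (θ.support.card : ℤ) := by
          rw [Finset.sum_congr rfl habs]; simp
        rw [h1, hn2] at hlen; exact_mod_cast hlen
      obtain ⟨a, b, hab, hs⟩ := Finset.card_eq_two.mp hcard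
      have hamem : a ∈ θ.support := by rw [hs]; exact Finset.mem_insert_self _ _
      have hbmem : b ∈ θ.support := by rw [hs]; simp
      rw [hs, Finset.sum_pair hab] at hzero
      have habs2 : |θ a * (a:ℤ)| = |θ b * (b:ℤ)| := by
        have : θ a * (a:ℤ) = -(θ b * (b:ℤ)) := by linarith
        rw [this, abs_neg]
      rw [abs_mul, abs_mul, habs a hamem, habs b hbmem, one_mul, one_mul,
        Int.abs_natCast, Int.abs_natCast] at habs2
      exact hab (by exact_mod_cast habs2)
    rw [hempty, measure_empty]
    exact zero_le
  -- main case : n ≥ 3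
  set d : ℕ → ℝ≥0∞ := fun k => ENNReal.ofReal (δ k) with hd
  set w : (ℕ →₀ ℤ) → ℝ≥0∞ :=
    fun θ => if θ ∈ Rset n M then ∏ k ∈ θ.support, d k else 0 with hw
  set G : Bool × ℕ × Finset ℕ × Finset ℕ → ℝ≥0∞ := fun x =>
    if M < x.2.1 ∧ x.2.2.1 ⊆ Finset.Icc 1 x.2.1 ∧ x.2.2.1.card = n - 2 ∧
        x.2.2.2 ⊆ insert x.2.1 x.2.2.1
    then d x.2.1 ^ 2 * ∏ k ∈ x.2.2.1, d k else 0 with hG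
  -- step 0 : event is contained in the union over relations
  have hsub : {ω | HasRelationOfLength {k : ℕ | 1 ≤ k ∧ ε k ω = 1 ∧ M ≤ k} n} ⊆
      ⋃ θ : ℕ →₀ ℤ, {ω | θ ∈ Rset n M ∧ ∀ k ∈ θ.support, ε k ω = 1} := by
    intro ω hω
    obtain ⟨θ, hsupp, hval, hzero, hlen⟩ := hω
    refine Set.mem_iUnion.mpr ⟨θ, ⟨⟨fun k hk => (hsupp k hk).2.2, hval, hzero, hlen⟩, ?_⟩⟩
    intro k hk
    exact (hsupp k (Finsupp.mem_support_iff.mp hk)).2.1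
  -- step 1 : probability of each "all selectors 1" event
  have hone : ∀ k, P (ε k ⁻¹' {1}) = d k := by
    intro k
    have hms : MeasurableSet (ε k ⁻¹' {1}) := (hmeas k) (measurableSet_singleton 1)
    have hind : ε k = Set.indicator (ε k ⁻¹' {1}) (fun _ => (1:ℝ)) := by
      funext ω
      by_cases h : ε k ω = 1
      · rw [Set.indicator_of_mem (by exact h : ω ∈ ε k ⁻¹' {1})]
        exact h
      · rw [Set.indicator_of_notMem (by exact h : ω ∉ ε k ⁻¹' {1})]
        rcases hε01 k ω with h0 | h1
        · exact h0
        · exact absurd h1 h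
    have hInt : δ k = (P (ε k ⁻¹' {1})).toReal := by
      rw [← hint k]
      conv_lhs => rw [hind]
      rw [MeasureTheory.integral_indicator_const (1:ℝ) hms]
      simp
      rfl
    have : d k = ENNReal.ofReal (δ k) := rfl
    rw [this, hInt, ENNReal.ofReal_toReal (measure_ne_top P _)]
  -- step 2 : bound for the probability of each intersection event
  have hA : ∀ θ : ℕ →₀ ℤ, P {ω | θ ∈ Rset n M ∧ ∀ k ∈ θ.support, ε k ω = 1} ≤ w θ := by
    intro θ
    by_cases hθ : θ ∈ Rset n M
    · have hwθ : w θ = ∏ k ∈ θ.support, d k := if_pos hθ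
      rw [hwθ]
      have hset : {ω | θ ∈ Rset n M ∧ ∀ k ∈ θ.support, ε k ω = 1} =
          ⋂ k ∈ θ.support, ε k ⁻¹' {1} := by
        ext ω
        simp only [Set.mem_setOf_eq, Set.mem_iInter, Set.mem_preimage, Set.mem_singleton_iff]
        exact ⟨fun h => h.2, fun h => ⟨hθ, h⟩⟩
      rw [hset, hindep.meas_biInter (fun i _ => ⟨{1}, measurableSet_singleton 1, rfl⟩)]
      exact le_of_eq (Finset.prod_congr rfl (fun k _ => hone k))
    · have hset : {ω | θ ∈ Rset n M ∧ ∀ k ∈ θ.support, ε k ω = 1} = ∅ := by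
        ext ω; simp [hθ]
      rw [hset, measure_empty]
      exact zero_le
  -- step 3 : union bound
  have step3 : P {ω | HasRelationOfLength {k : ℕ | 1 ≤ k ∧ ε k ω = 1 ∧ M ≤ k} n} ≤
      ∑' θ : ℕ →₀ ℤ, w θ :=
    (measure_mono hsub).trans ((measure_iUnion_le _).trans (ENNReal.tsum_le_tsum hA))
  -- step 4 : restrict to the relation set and inject into tuples
  have hwsupp : Function.support w ⊆ Rset n M := by
    intro θ hθ
    by_contra hc
    exact hθ (if_neg hc)
  have hwG : ∀ θ : ℕ →₀ ℤ, θ ∈ Rset n M → w θ ≤ G (Phi δ θ) := by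
    intro θ hθ
    obtain ⟨hMjj, hSsub, hScard, hTsub, hdle, hsupp_ins, hee_not, hins_eta, hjS, -, -⟩ :=
      main_facts δ hn3 hM θ hθ
    have hGval : G (Phi δ θ) =
        d (jj δ θ) ^ 2 * ∏ k ∈ ((eta δ θ).support).erase (jj δ θ), d k :=
      if_pos ⟨hMjj, hSsub, hScard, hTsub⟩
    have hjmem_eta : jj δ θ ∈ (eta δ θ).support := by
      rw [hins_eta]; exact Finset.mem_insert_self _ _
    have hprod : ∏ k ∈ (eta δ θ).support, d k =
        d (jj δ θ) * ∏ k ∈ ((eta δ θ).support).erase (jj δ θ), d k :=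
      (Finset.mul_prod_erase _ _ hjmem_eta).symm
    have hwθ : w θ = ∏ k ∈ θ.support, d k := if_pos hθ
    rw [hwθ, hGval, hsupp_ins, Finset.prod_insert hee_not, hprod]
    have hdd : d (ee δ θ) ≤ d (jj δ θ) := ENNReal.ofReal_le_ofReal hdle
    calc d (ee δ θ) * (d (jj δ θ) * ∏ k ∈ ((eta δ θ).support).erase (jj δ θ), d k)
        ≤ d (jj δ θ) * (d (jj δ θ) * ∏ k ∈ ((eta δ θ).support).erase (jj δ θ), d k) :=
          mul_le_mul_left hdd _
      _ = d (jj δ θ) ^ 2 * ∏ k ∈ ((eta δ θ).support).erase (jj δ θ), d k := by ring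
  have step4 : ∑' θ : ℕ →₀ ℤ, w θ ≤ ∑' x : Bool × ℕ × Finset ℕ × Finset ℕ, G x := by
    rw [← tsum_subtype_eq_of_support_subset hwsupp]
    calc ∑' θ : (Rset n M), w θ ≤ ∑' θ : (Rset n M), G (Phi δ θ.1) :=
          ENNReal.tsum_le_tsum (fun θ => hwG θ.1 θ.2)
      _ ≤ ∑' x : Bool × ℕ × Finset ℕ × Finset ℕ, G x := by
          apply ENNReal.tsum_comp_le_tsum_of_injective
          intro a b hab
          exact Subtype.ext (phi_injOn δ hn3 hM a.2 b.2 hab)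
  -- step 5 : evaluate the sum over tuples
  have hTsum : ∀ j S : _, ∑' T : Finset ℕ, G (false, j, S, T) ≤
      (2:ℝ≥0∞)^(n-1) *
        (if M < j ∧ S ⊆ Finset.Icc 1 j ∧ S.card = n - 2 then d j ^ 2 * ∏ k ∈ S, d k else 0) := by
    intro j S
    by_cases hS : M < j ∧ S ⊆ Finset.Icc 1 j ∧ S.card = n - 2
    · rw [if_pos hS]
      have hGT : ∀ T, G (false, j, S, T) =
          if T ⊆ insert j S then d j ^ 2 * ∏ k ∈ S, d k else 0 := by
        intro T
        by_cases hT : T ⊆ insert j S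
        · rw [if_pos hT]
          exact if_pos ⟨hS.1, hS.2.1, hS.2.2, hT⟩
        · rw [if_neg hT]
          exact if_neg (fun hcon => hT hcon.2.2.2)
      rw [tsum_congr hGT, tsum_eq_sum (s := (insert j S).powerset)
        (fun T hT => if_neg (fun hc => hT (Finset.mem_powerset.mpr hc)))]
      have : ∀ T ∈ (insert j S).powerset,
          (if T ⊆ insert j S then d j ^ 2 * ∏ k ∈ S, d k else 0) =
          d j ^ 2 * ∏ k ∈ S, d k := by
        intro T hT
        exact if_pos (Finset.mem_powerset.mp hT)
      rw [Finset.sum_congr rfl this, Finset.sum_const, Finset.card_powerset, nsmul_eq_mul]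
      apply mul_le_mul_left
      have hc1 : (insert j S).card ≤ n - 1 := by
        calc (insert j S).card ≤ S.card + 1 := Finset.card_insert_le _ _
          _ = n - 1 := by omega
      calc ((2 ^ (insert j S).card : ℕ) : ℝ≥0∞) = (2:ℝ≥0∞) ^ (insert j S).card := by push_cast; rfl
        _ ≤ (2:ℝ≥0∞) ^ (n-1) := pow_le_pow_right₀ (by norm_num) hc1
    · rw [if_neg hS]
      have hGT : ∀ T : Finset ℕ, G (false, j, S, T) = 0 := by
        intro T
        exact if_neg (fun hcon => hS ⟨hcon.1, hcon.2.1, hcon.2.2.1⟩)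
      rw [tsum_congr hGT]
      simp
  have hSsum : ∀ j : ℕ, (∑' S : Finset ℕ,
      (if M < j ∧ S ⊆ Finset.Icc 1 j ∧ S.card = n - 2 then d j ^ 2 * ∏ k ∈ S, d k else 0)) =
      if M < j then
        ∑ S ∈ (Finset.Icc 1 j).powersetCard (n-2), d j ^ 2 * ∏ k ∈ S, d k
      else 0 := by
    intro j
    by_cases hMj : M < j
    · rw [if_pos hMj]
      rw [tsum_eq_sum (s := (Finset.Icc 1 j).powersetCard (n-2))]
      · apply Finset.sum_congr rfl
        intro S hS
        rw [Finset.mem_powersetCard] at hS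
        exact if_pos ⟨hMj, hS.1, hS.2⟩
      · intro S hS
        apply if_neg
        rintro ⟨-, h1, h2⟩
        exact hS (Finset.mem_powersetCard.mpr ⟨h1, h2⟩)
    · rw [if_neg hMj]
      have : ∀ S : Finset ℕ, (if M < j ∧ S ⊆ Finset.Icc 1 j ∧ S.card = n - 2
          then d j ^ 2 * ∏ k ∈ S, d k else 0) = 0 :=
        fun S => if_neg (fun hc => hMj hc.1)
      rw [tsum_congr this]
      simp
  -- step 6 : the elementary symmetric function bound
  have hesym2 : ∀ j : ℕ, ∑ S ∈ (Finset.Icc 1 j).powersetCard (n-2), ∏ k ∈ S, d k ≤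
      (∑ i ∈ Finset.Icc 1 j, d i) ^ (n-2) * (((n-2).factorial : ℕ) : ℝ≥0∞)⁻¹ := by
    intro j
    have h := aux_esymm d (Finset.Icc 1 j) (n-2)
    rw [mul_comm] at h
    rw [← ENNReal.le_div_iff_mul_le (Or.inl (by exact_mod_cast (n-2).factorial_pos.ne'))
      (Or.inl (ENNReal.natCast_ne_top _)), ENNReal.div_eq_inv_mul] at h
    calc ∑ S ∈ (Finset.Icc 1 j).powersetCard (n-2), ∏ k ∈ S, d k
        ≤ (((n-2).factorial : ℕ) : ℝ≥0∞)⁻¹ * (∑ i ∈ Finset.Icc 1 j, d i) ^ (n-2) := h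
      _ = (∑ i ∈ Finset.Icc 1 j, d i) ^ (n-2) * (((n-2).factorial : ℕ) : ℝ≥0∞)⁻¹ := by
          ring
  -- step 7 : per-j comparison with the target
  have keyj : ∀ j : ℕ, 2 * ((2:ℝ≥0∞)^(n-1) *
      (if M < j then ∑ S ∈ (Finset.Icc 1 j).powersetCard (n-2), d j ^ 2 * ∏ k ∈ S, d k else 0))
      ≤ ENNReal.ofReal ((100:ℝ) ^ n / (n:ℝ) ^ n) *
        (if M < j then ENNReal.ofReal (δ j ^ 2 * (∑ i ∈ Finset.Icc 1 j, δ i) ^ (n - 2)) else 0) := by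
    intro j
    by_cases hMj : M < j
    · rw [if_pos hMj, if_pos hMj]
      have hfct : (0:ℝ) < ((n-2).factorial : ℝ) := by exact_mod_cast (n-2).factorial_pos
      have e0 : ∑ S ∈ (Finset.Icc 1 j).powersetCard (n-2), d j ^ 2 * ∏ k ∈ S, d k =
          d j ^ 2 * ∑ S ∈ (Finset.Icc 1 j).powersetCard (n-2), ∏ k ∈ S, d k := by
        rw [Finset.mul_sum]
      have e1 : 2 * ((2:ℝ≥0∞)^(n-1) *
          (∑ S ∈ (Finset.Icc 1 j).powersetCard (n-2), d j ^ 2 * ∏ k ∈ S, d k)) =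
          (2:ℝ≥0∞)^n * (d j ^ 2 * ∑ S ∈ (Finset.Icc 1 j).powersetCard (n-2), ∏ k ∈ S, d k) := by
        rw [e0, ← mul_assoc]
        congr 1
        rw [← pow_succ']
        congr 1
        omega
      rw [e1]
      have e2 : (2:ℝ≥0∞)^n * (d j ^ 2 * ∑ S ∈ (Finset.Icc 1 j).powersetCard (n-2), ∏ k ∈ S, d k)
          ≤ (2:ℝ≥0∞)^n * (d j ^ 2 * ((∑ i ∈ Finset.Icc 1 j, d i) ^ (n-2) *
            (((n-2).factorial : ℕ) : ℝ≥0∞)⁻¹)) := by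
        apply mul_le_mul_right
        apply mul_le_mul_right
        exact hesym2 j
      refine e2.trans ?_
      have e3 : d j ^ 2 * (∑ i ∈ Finset.Icc 1 j, d i) ^ (n-2) =
          ENNReal.ofReal (δ j ^ 2 * (∑ i ∈ Finset.Icc 1 j, δ i) ^ (n - 2)) := by
        have hσ : (∑ i ∈ Finset.Icc 1 j, d i) = ENNReal.ofReal (∑ i ∈ Finset.Icc 1 j, δ i) :=
          (ENNReal.ofReal_sum_of_nonneg (fun i _ => hδ0 i)).symm
        have hσ0 : (0:ℝ) ≤ ∑ i ∈ Finset.Icc 1 j, δ i := Finset.sum_nonneg (fun i _ => hδ0 i)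
        rw [hσ, ← ENNReal.ofReal_pow hσ0, ← ENNReal.ofReal_pow (hδ0 j),
          ← ENNReal.ofReal_mul (by positivity)]
      have e4 : (2:ℝ≥0∞)^n * (((n-2).factorial : ℕ) : ℝ≥0∞)⁻¹ ≤
          ENNReal.ofReal ((100:ℝ) ^ n / (n:ℝ) ^ n) := by
        have h2 : (2:ℝ≥0∞)^n = ENNReal.ofReal ((2:ℝ)^n) := by
          rw [ENNReal.ofReal_pow (by norm_num)]
          norm_num
        have hinv : (((n-2).factorial : ℕ) : ℝ≥0∞)⁻¹ =
            ENNReal.ofReal ((((n-2).factorial : ℝ))⁻¹) := by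
          rw [ENNReal.ofReal_inv_of_pos hfct, ENNReal.ofReal_natCast]
        rw [h2, hinv, ← ENNReal.ofReal_mul (by positivity)]
        exact ENNReal.ofReal_le_ofReal (aux_real_const hn3)
      calc (2:ℝ≥0∞)^n * (d j ^ 2 * ((∑ i ∈ Finset.Icc 1 j, d i) ^ (n-2) *
              (((n-2).factorial : ℕ) : ℝ≥0∞)⁻¹))
          = ((2:ℝ≥0∞)^n * (((n-2).factorial : ℕ) : ℝ≥0∞)⁻¹) *
              (d j ^ 2 * (∑ i ∈ Finset.Icc 1 j, d i) ^ (n-2)) := by ring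
        _ ≤ ENNReal.ofReal ((100:ℝ) ^ n / (n:ℝ) ^ n) *
              (d j ^ 2 * (∑ i ∈ Finset.Icc 1 j, d i) ^ (n-2)) := mul_le_mul_left e4 _
        _ = ENNReal.ofReal ((100:ℝ) ^ n / (n:ℝ) ^ n) *
              ENNReal.ofReal (δ j ^ 2 * (∑ i ∈ Finset.Icc 1 j, δ i) ^ (n - 2)) := by rw [e3]
    · rw [if_neg hMj, if_neg hMj]
      simp
  -- step 8 : split the tuple sum
  have hsplit : ∑' x : Bool × ℕ × Finset ℕ × Finset ℕ, G x =
      2 * ∑' j : ℕ, ∑' S : Finset ℕ, ∑' T : Finset ℕ, G (false, j, S, T) := by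
    rw [ENNReal.tsum_prod', tsum_bool, two_mul]
    congr 1
    · rw [ENNReal.tsum_prod']
      apply tsum_congr
      intro j
      rw [ENNReal.tsum_prod']
    · rw [ENNReal.tsum_prod']
      apply tsum_congr
      intro j
      rw [ENNReal.tsum_prod']
  -- final assembly
  calc P {ω | HasRelationOfLength {k : ℕ | 1 ≤ k ∧ ε k ω = 1 ∧ M ≤ k} n}
      ≤ ∑' θ : ℕ →₀ ℤ, w θ := step3
    _ ≤ ∑' x : Bool × ℕ × Finset ℕ × Finset ℕ, G x := step4
    _ = 2 * ∑' j : ℕ, ∑' S : Finset ℕ, ∑' T : Finset ℕ, G (false, j, S, T) := hsplit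
    _ = ∑' j : ℕ, 2 * ∑' S : Finset ℕ, ∑' T : Finset ℕ, G (false, j, S, T) :=
        ENNReal.tsum_mul_left.symm
    _ ≤ ∑' j : ℕ, ENNReal.ofReal ((100:ℝ) ^ n / (n:ℝ) ^ n) *
          (if M < j then ENNReal.ofReal (δ j ^ 2 * (∑ i ∈ Finset.Icc 1 j, δ i) ^ (n - 2))
           else 0) := by
        apply ENNReal.tsum_le_tsum
        intro j
        refine le_trans ?_ (keyj j)
        apply mul_le_mul_right
        calc ∑' S : Finset ℕ, ∑' T : Finset ℕ, G (false, j, S, T)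
            ≤ ∑' S : Finset ℕ, (2:ℝ≥0∞)^(n-1) *
              (if M < j ∧ S ⊆ Finset.Icc 1 j ∧ S.card = n - 2
               then d j ^ 2 * ∏ k ∈ S, d k else 0) := ENNReal.tsum_le_tsum (hTsum j)
          _ = (2:ℝ≥0∞)^(n-1) * ∑' S : Finset ℕ,
              (if M < j ∧ S ⊆ Finset.Icc 1 j ∧ S.card = n - 2
               then d j ^ 2 * ∏ k ∈ S, d k else 0) := ENNReal.tsum_mul_left
          _ = (2:ℝ≥0∞)^(n-1) *
              (if M < j then ∑ S ∈ (Finset.Icc 1 j).powersetCard (n-2), d j ^ 2 * ∏ k ∈ S, d k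
               else 0) := by rw [hSsum j]
    _ = ENNReal.ofReal ((100:ℝ) ^ n / (n:ℝ) ^ n) *
          ∑' j : ℕ, (if M < j then
            ENNReal.ofReal (δ j ^ 2 * (∑ i ∈ Finset.Icc 1 j, δ i) ^ (n - 2)) else 0) :=
        ENNReal.tsum_mul_left
end

section
/- Let α > 1, β > α, and M_n = n^{βn}. Let (ε_k)_{k ≥ 16} be independent {0,1}-valued random variables with E[ε_k] = δ_k = c (log k)^α / (k (log log k)^{α+1}), where c > 0 is small enough that δ_k ≤ 1 for all k ≥ 16, and let Λ(ω) = {k ≥ 16 : ε_k(ω) = 1}. Then almost surely, for all sufficiently large n, the set Λ(ω) ∩ [M_n, ∞) contains no relation of length n. -/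
open MeasureTheory ProbabilityTheory Real

open scoped ENNReal

section Helpers
open Filter

lemma exp_one_lt_log_sixteen : Real.exp 1 < Real.log 16 := by
  have h2 : (0.6931471803 : ℝ) < Real.log 2 := Real.log_two_gt_d9
  have he : Real.exp 1 < 2.7182818286 := Real.exp_one_lt_d9
  have h16 : (16:ℝ) = 2^(4:ℕ) := by norm_num
  rw [h16, Real.log_pow]
  push_cast
  nlinarith

lemma one_lt_log {x : ℝ} (hx : 16 ≤ x) : 1 < Real.log x := by
  have h := exp_one_lt_log_sixteen
  have : Real.log 16 ≤ Real.log x := Real.log_le_log (by norm_num) hx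
  nlinarith [Real.exp_one_gt_d9]

lemma one_le_loglog {x : ℝ} (hx : 16 ≤ x) : 1 ≤ Real.log (Real.log x) := by
  have h1 : Real.exp 1 ≤ Real.log x :=
    le_trans exp_one_lt_log_sixteen.le (Real.log_le_log (by norm_num) hx)
  calc (1:ℝ) = Real.log (Real.exp 1) := (Real.log_exp 1).symm
    _ ≤ Real.log (Real.log x) := Real.log_le_log (Real.exp_pos 1) h1

lemma selectorMean_nonneg {c α : ℝ} (hc : 0 < c) {k : ℕ} (hk : 16 ≤ k) :
    0 ≤ selectorMean c α k := by
  have hk' : (16:ℝ) ≤ (k:ℝ) := by exact_mod_cast hk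
  have h1 : (0:ℝ) < Real.log k := lt_trans one_pos (one_lt_log hk')
  have h2 : (0:ℝ) < Real.log (Real.log k) := lt_of_lt_of_le one_pos (one_le_loglog hk')
  unfold selectorMean
  positivity

lemma selectorMean_le {c α : ℝ} (hc : 0 < c) (hα : 0 ≤ α) {k : ℕ} (hk : 16 ≤ k) :
    selectorMean c α k ≤ c * Real.log k ^ α / k := by
  have hk' : (16:ℝ) ≤ (k:ℝ) := by exact_mod_cast hk
  have h1 : (0:ℝ) < Real.log k := lt_trans one_pos (one_lt_log hk')
  have h2 : (1:ℝ) ≤ Real.log (Real.log k) := one_le_loglog hk'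
  have hkpos : (0:ℝ) < k := by linarith
  have hpow : (1:ℝ) ≤ Real.log (Real.log k) ^ (α+1) :=
    Real.one_le_rpow h2 (by linarith)
  unfold selectorMean
  apply div_le_div_of_nonneg_left (mul_nonneg hc.le (Real.rpow_nonneg h1.le α)) hkpos
  nlinarith [hkpos, hpow]

/-- Key monotonicity: `(log y)^γ * x ≤ (log x)^γ * y` when `γ ≤ log x`. -/
lemma logpow_mono {γ x y : ℝ} (hγ : 0 ≤ γ) (hx : 16 ≤ x) (hxy : x ≤ y)
    (hγx : γ ≤ Real.log x) : Real.log y ^ γ * x ≤ Real.log x ^ γ * y := by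
  have hx0 : (0:ℝ) < x := by linarith
  have hy0 : (0:ℝ) < y := by linarith
  have hlx : (0:ℝ) < Real.log x := lt_trans one_pos (one_lt_log hx)
  have hly : Real.log x ≤ Real.log y := Real.log_le_log hx0 hxy
  have hratio : (0:ℝ) < Real.log y / Real.log x := div_pos (lt_of_lt_of_le hlx hly) hlx
  have h2 : (Real.log y / Real.log x) ^ γ ≤ y / x := by
    rw [Real.rpow_def_of_pos hratio]
    have h3 : Real.log (Real.log y / Real.log x) ≤
        (Real.log y - Real.log x) / Real.log x := by
      have := Real.log_le_sub_one_of_pos hratio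
      have heq : Real.log y / Real.log x - 1 = (Real.log y - Real.log x) / Real.log x := by
        field_simp
      linarith [heq ▸ this]
    have h4 : Real.log (Real.log y / Real.log x) * γ ≤ Real.log y - Real.log x := by
      have h5 : Real.log (Real.log y / Real.log x) * γ ≤
          ((Real.log y - Real.log x) / Real.log x) * γ := mul_le_mul_of_nonneg_right h3 hγ
      have h6 : ((Real.log y - Real.log x) / Real.log x) * γ ≤ Real.log y - Real.log x := by
        rw [div_mul_eq_mul_div, div_le_iff₀ hlx]
        nlinarith [sub_nonneg.mpr hly]
      linarith
    calc Real.exp (Real.log (Real.log y / Real.log x) * γ)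
        ≤ Real.exp (Real.log y - Real.log x) := Real.exp_le_exp.mpr h4
      _ = y / x := by rw [Real.exp_sub, Real.exp_log hy0, Real.exp_log hx0]
  have key : Real.log y ^ γ ≤ Real.log x ^ γ * (y / x) := by
    have h1 : Real.log y ^ γ = Real.log x ^ γ * (Real.log y / Real.log x) ^ γ := by
      rw [← Real.mul_rpow hlx.le hratio.le, mul_div_cancel₀ _ (ne_of_gt hlx)]
    rw [h1]
    exact mul_le_mul_of_nonneg_left h2 (Real.rpow_nonneg hlx.le γ)
  calc Real.log y ^ γ * x ≤ (Real.log x ^ γ * (y / x)) * x :=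
        mul_le_mul_of_nonneg_right key hx0.le
    _ = Real.log x ^ γ * y := by field_simp

lemma logpow_div_mono {γ x y : ℝ} (hγ : 0 ≤ γ) (hx : 16 ≤ x) (hxy : x ≤ y)
    (hγx : γ ≤ Real.log x) : Real.log y ^ γ / y ≤ Real.log x ^ γ / x := by
  have hx0 : (0:ℝ) < x := by linarith
  have hy0 : (0:ℝ) < y := by linarith
  rw [div_le_div_iff₀ hy0 hx0]
  exact logpow_mono hγ hx hxy hγx

end Helpers

section Sums
open Filter

/-- `1/k ≤ log k - log (k-1)` for natural `k ≥ 2`. -/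
lemma one_div_le_log_sub {k : ℕ} (hk : 2 ≤ k) :
    1 / (k:ℝ) ≤ Real.log k - Real.log ((k-1 : ℕ) : ℝ) := by
  have hk1 : (1:ℝ) ≤ (k:ℝ) := by exact_mod_cast Nat.one_le_of_lt hk
  have hcast : ((k-1 : ℕ) : ℝ) = (k:ℝ) - 1 := by
    have h1 : 1 ≤ k := by omega
    push_cast [Nat.cast_sub h1]
    ring
  rw [hcast]
  have hk2 : (2:ℝ) ≤ (k:ℝ) := by exact_mod_cast hk
  have hpos : (0:ℝ) < ((k:ℝ)-1)/(k:ℝ) := by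
    apply div_pos <;> linarith
  have h := Real.log_le_sub_one_of_pos hpos
  have hlog : Real.log (((k:ℝ)-1)/(k:ℝ)) = Real.log ((k:ℝ)-1) - Real.log k :=
    Real.log_div (by linarith) (by linarith)
  rw [hlog] at h
  have : ((k:ℝ)-1)/(k:ℝ) - 1 = -(1/(k:ℝ)) := by field_simp; ring
  rw [this] at h
  linarith

lemma telescoping_log {M₀ : ℕ} (hM : 1 ≤ M₀) : ∀ m, M₀ ≤ m →
    ∑ k ∈ Finset.Ico M₀ m, (Real.log k - Real.log ((k-1:ℕ):ℝ))
      = Real.log ((m-1:ℕ):ℝ) - Real.log ((M₀-1:ℕ):ℝ) := by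
  intro m hm
  induction m, hm using Nat.le_induction with
  | base => simp
  | succ m hm ih =>
    rw [Finset.sum_Ico_succ_top hm, ih]
    have : (m + 1 - 1 : ℕ) = m := by omega
    rw [this]
    ring

/-- Partial sums of `c (log k)^α / k` over `[M₀, m)` are at most `c (log m)^(α+1)`. -/
lemma partial_sum_le {c α : ℝ} (hc : 0 < c) (hα : 0 ≤ α) {M₀ m : ℕ}
    (hM : 16 ≤ M₀) (hm : 16 ≤ m) :
    ∑ k ∈ Finset.Ico M₀ m, c * Real.log k ^ α / k ≤ c * Real.log m ^ (α+1) := by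
  have hm' : (16:ℝ) ≤ (m:ℝ) := by exact_mod_cast hm
  have hlm : (0:ℝ) < Real.log m := lt_trans one_pos (one_lt_log hm')
  have step : ∀ k ∈ Finset.Ico M₀ m,
      c * Real.log k ^ α / k ≤ c * Real.log m ^ α * (Real.log k - Real.log ((k-1:ℕ):ℝ)) := by
    intro k hkmem
    rw [Finset.mem_Ico] at hkmem
    have hk16 : 16 ≤ k := le_trans hM hkmem.1
    have hk' : (16:ℝ) ≤ (k:ℝ) := by exact_mod_cast hk16
    have hlk : (0:ℝ) < Real.log k := lt_trans one_pos (one_lt_log hk')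
    have hkR : (0:ℝ) < (k:ℝ) := by linarith
    have h1 : Real.log k ^ α ≤ Real.log m ^ α := by
      apply Real.rpow_le_rpow hlk.le _ hα
      exact Real.log_le_log hkR (by exact_mod_cast (le_of_lt hkmem.2))
    have h2 : 1/(k:ℝ) ≤ Real.log k - Real.log ((k-1:ℕ):ℝ) := one_div_le_log_sub (by omega)
    calc c * Real.log k ^ α / k = (c * Real.log k ^ α) * (1/(k:ℝ)) := by ring
      _ ≤ (c * Real.log m ^ α) * (Real.log k - Real.log ((k-1:ℕ):ℝ)) := by
          apply mul_le_mul _ h2 (by positivity) (by positivity)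
          exact mul_le_mul_of_nonneg_left h1 hc.le
      _ = c * Real.log m ^ α * (Real.log k - Real.log ((k-1:ℕ):ℝ)) := by ring
  have hrw : c * Real.log m ^ (α+1) = c * Real.log m ^ α * Real.log m := by
    rw [Real.rpow_add_one (ne_of_gt hlm)]
    ring
  rw [hrw]
  calc ∑ k ∈ Finset.Ico M₀ m, c * Real.log k ^ α / k
      ≤ ∑ k ∈ Finset.Ico M₀ m, c * Real.log m ^ α * (Real.log k - Real.log ((k-1:ℕ):ℝ)) :=
        Finset.sum_le_sum step
    _ ≤ c * Real.log m ^ α * Real.log m := by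
        rcases le_or_gt m M₀ with h | h
        · rw [Finset.Ico_eq_empty (by omega)]
          simp
          positivity
        · rw [← Finset.mul_sum]
          apply mul_le_mul_of_nonneg_left _ (by positivity)
          rw [telescoping_log (by omega) m h.le]
          have h1 : Real.log ((m-1:ℕ):ℝ) ≤ Real.log m := by
            apply Real.log_le_log
            · have : 15 ≤ m - 1 := by omega
              have : (15:ℝ) ≤ ((m-1:ℕ):ℝ) := by exact_mod_cast this
              linarith
            · have : m - 1 ≤ m := by omega
              exact_mod_cast this
          have h2 : 0 ≤ Real.log ((M₀-1:ℕ):ℝ) := by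
            apply Real.log_nonneg
            have : 1 ≤ M₀ - 1 := by omega
            exact_mod_cast this
          linarith

/-- Elementary symmetric bound: `j! * e_j(f) ≤ (∑ f)^j` in `ℝ≥0∞`. -/
lemma esymm_le (f : ℕ → ENNReal) (F : Finset ℕ) : ∀ j : ℕ,
    (j.factorial : ENNReal) * ∑ T ∈ F.powersetCard j, ∏ k ∈ T, f k
      ≤ (∑ k ∈ F, f k) ^ j := by
  classical
  induction F using Finset.induction_on with
  | empty =>
    intro j
    cases j with
    | zero => simp
    | succ j => simp
  | insert a F ha ih =>
    intro j
    cases j with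
    | zero => simp
    | succ j =>
      rw [Finset.powersetCard_succ_insert ha]
      have hdisj : Disjoint (Finset.powersetCard (j+1) F)
          (Finset.image (insert a) (Finset.powersetCard j F)) := by
        rw [Finset.disjoint_left]
        intro T hT hT'
        rw [Finset.mem_powersetCard] at hT
        obtain ⟨T', hT', rfl⟩ := Finset.mem_image.mp hT'
        exact ha (hT.1 (Finset.mem_insert_self a T'))
      rw [Finset.sum_union hdisj]
      have himg : ∑ T ∈ Finset.image (insert a) (Finset.powersetCard j F), ∏ k ∈ T, f k
          = f a * ∑ T ∈ Finset.powersetCard j F, ∏ k ∈ T, f k := by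
        rw [Finset.sum_image, Finset.mul_sum]
        · apply Finset.sum_congr rfl
          intro T hT
          rw [Finset.mem_powersetCard] at hT
          rw [Finset.prod_insert (fun hmem => ha (hT.1 hmem))]
        · intro T hT T' hT' hins
          rw [Finset.mem_coe, Finset.mem_powersetCard] at hT hT'
          have h1 : a ∉ T := fun hmem => ha (hT.1 hmem)
          have h2 : a ∉ T' := fun hmem => ha (hT'.1 hmem)
          have : T = (insert a T).erase a := by rw [Finset.erase_insert h1]
          rw [this, hins, Finset.erase_insert h2]
      rw [himg, Finset.sum_insert ha]
      set A := ∑ T ∈ Finset.powersetCard (j+1) F, ∏ k ∈ T, f k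
      set B := ∑ T ∈ Finset.powersetCard j F, ∏ k ∈ T, f k
      set S := ∑ k ∈ F, f k
      have ihA : ((j+1).factorial : ENNReal) * A ≤ S ^ (j+1) := ih (j+1)
      have ihB : (j.factorial : ENNReal) * B ≤ S ^ j := ih j
      have binom : S^(j+1) + (j+1) * f a * S^j ≤ (f a + S)^(j+1) := by
        rw [add_pow]
        have hsub : ({0, 1} : Finset ℕ) ⊆ Finset.range (j+1+1) := by
          intro x hx
          fin_cases hx <;> simp
        calc S^(j+1) + (j+1) * f a * S^j
            = ∑ k ∈ ({0,1} : Finset ℕ), f a ^ k * S ^ (j+1-k) * (j+1).choose k := by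
              rw [Finset.sum_pair (by norm_num)]
              simp [pow_one]
              ring
          _ ≤ _ := Finset.sum_le_sum_of_subset hsub
      calc ((j+1).factorial : ENNReal) * (A + f a * B)
          = ((j+1).factorial : ENNReal) * A
            + (j+1) * f a * ((j.factorial : ENNReal) * B) := by
            rw [Nat.factorial_succ]
            push_cast
            ring
        _ ≤ S^(j+1) + (j+1) * f a * S^j := by
            apply add_le_add ihA
            exact mul_le_mul_right ihB _
        _ ≤ (f a + S)^(j+1) := binom

end Sums

section Tail
open Filter

lemma telescoping_Ico (f : ℕ → ℝ) {M₀ : ℕ} : ∀ m, M₀ ≤ m →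
    ∑ k ∈ Finset.Ico M₀ m, (f (k-1) - f k) = f (M₀-1) - f (m-1) := by
  intro m hm
  induction m, hm using Nat.le_induction with
  | base => simp
  | succ m hm ih =>
    rw [Finset.sum_Ico_succ_top hm, ih]
    have h1 : (m + 1 - 1 : ℕ) = m := by omega
    rw [h1]
    ring

lemma telescoping_sqrt {M₀ m : ℕ} (h : M₀ ≤ m) :
    ∑ k ∈ Finset.Ico M₀ m, (1/Real.sqrt ((k-1:ℕ):ℝ) - 1/Real.sqrt (k:ℝ))
      = 1/Real.sqrt ((M₀-1:ℕ):ℝ) - 1/Real.sqrt ((m-1:ℕ):ℝ) :=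
  telescoping_Ico (fun i => 1/Real.sqrt ((i:ℕ):ℝ)) m h

lemma sqrt_term_le {m : ℕ} (hm : 2 ≤ m) :
    Real.sqrt m / (m:ℝ)^2 ≤ 2 * (1/Real.sqrt ((m-1:ℕ):ℝ) - 1/Real.sqrt m) := by
  have hu2 : (2:ℝ) ≤ (m:ℝ) := by exact_mod_cast hm
  have hcast : ((m-1 : ℕ) : ℝ) = (m:ℝ) - 1 := by
    have h1 : 1 ≤ m := by omega
    push_cast [Nat.cast_sub h1]; ring
  rw [hcast]
  set u := (m:ℝ) with hu
  set a := Real.sqrt (u - 1) with hadef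
  set b := Real.sqrt u with hbdef
  have ha2 : a^2 = u - 1 := Real.sq_sqrt (by linarith)
  have hb2 : b^2 = u := Real.sq_sqrt (by linarith)
  have hapos : 0 < a := Real.sqrt_pos.mpr (by linarith)
  have hbpos : 0 < b := Real.sqrt_pos.mpr (by linarith)
  have hab : a ≤ b := Real.sqrt_le_sqrt (by linarith)
  have h1 : 1/a - 1/b = (b-a)/(a*b) := by
    field_simp
  have h2 : (b-a)*(a+b) = 1 := by nlinarith
  rw [h1, mul_div_assoc']
  rw [div_le_div_iff₀ (by positivity) (by positivity)]
  have hu4 : u^2 = b^4 := by nlinarith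
  have hab0 : (0:ℝ) < a + b := by linarith
  have hA : a^2*b^2 ≤ b^2*b^2 := by nlinarith
  have hB : a*b^3 ≤ b*b^3 := by nlinarith
  have goal2 : (b * (a*b)) * (a+b) ≤ (2*(b-a) * u^2) * (a+b) := by
    have hx : (2*(b-a) * u^2) * (a+b) = 2 * b^4 := by
      rw [hu4]; nlinarith [h2]
    rw [hx]
    nlinarith [hA, hB]
  exact le_of_mul_le_mul_right goal2 hab0

lemma tail_real_le {γ : ℝ} (hγ : 0 ≤ γ) {M₀ : ℕ} (hM : 16 ≤ M₀)
    (hlog : γ + γ ≤ Real.log M₀) (s : Finset ℕ) :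
    ∑ m ∈ s, (if M₀ ≤ m then Real.log m ^ γ / (m:ℝ)^2 else 0)
      ≤ 3 * Real.log M₀ ^ γ / M₀ := by
  have hM' : (16:ℝ) ≤ (M₀:ℝ) := by exact_mod_cast hM
  have hlM : (0:ℝ) < Real.log M₀ := lt_trans one_pos (one_lt_log hM')
  have hMpos : (0:ℝ) < (M₀:ℝ) := by linarith
  have hsqM : (0:ℝ) < Real.sqrt M₀ := Real.sqrt_pos.mpr hMpos
  set C := Real.log M₀ ^ γ / Real.sqrt M₀ with hC
  have hCpos : 0 ≤ C := by positivity
  have hterm : ∀ m : ℕ, M₀ ≤ m → Real.log m ^ γ / (m:ℝ)^2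
      ≤ C * (2 * (1/Real.sqrt ((m-1:ℕ):ℝ) - 1/Real.sqrt m)) := by
    intro m hm
    have hm16 : (16:ℝ) ≤ (m:ℝ) := by
      have : 16 ≤ m := le_trans hM hm
      exact_mod_cast this
    have hmpos : (0:ℝ) < (m:ℝ) := by linarith
    have hlm : (0:ℝ) < Real.log m := lt_trans one_pos (one_lt_log hm16)
    have hMm : (M₀:ℝ) ≤ (m:ℝ) := by exact_mod_cast hm
    have hsq : ((Real.log m ^ γ))^2 ≤ (Real.log M₀ ^ γ * (Real.sqrt m / Real.sqrt M₀))^2 := by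
      have hkey : Real.log m ^ (γ+γ) * M₀ ≤ Real.log M₀ ^ (γ+γ) * m :=
        logpow_mono (by linarith) hM' hMm hlog
      have e1 : (Real.log m ^ γ)^2 = Real.log m ^ (γ+γ) := by
        rw [Real.rpow_add hlm]; ring
      have e2 : (Real.log M₀ ^ γ)^2 = Real.log M₀ ^ (γ+γ) := by
        rw [Real.rpow_add hlM]; ring
      have e3 : (Real.sqrt m / Real.sqrt M₀)^2 = (m:ℝ)/(M₀:ℝ) := by
        rw [div_pow, Real.sq_sqrt hmpos.le, Real.sq_sqrt hMpos.le]
      rw [e1, mul_pow, e2, e3, ← mul_div_assoc, le_div_iff₀ hMpos]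
      exact hkey
    have hmono : Real.log m ^ γ ≤ Real.log M₀ ^ γ * (Real.sqrt m / Real.sqrt M₀) := by
      have hL : 0 ≤ Real.log m ^ γ := Real.rpow_nonneg hlm.le γ
      have hR : 0 ≤ Real.log M₀ ^ γ * (Real.sqrt m / Real.sqrt M₀) := by positivity
      nlinarith [hsq]
    have hst := sqrt_term_le (m := m) (by omega)
    calc Real.log m ^ γ / (m:ℝ)^2
        ≤ (Real.log M₀ ^ γ * (Real.sqrt m / Real.sqrt M₀)) / (m:ℝ)^2 := by
          gcongr
      _ = C * (Real.sqrt m / (m:ℝ)^2) := by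
          rw [hC]; field_simp
      _ ≤ C * (2 * (1/Real.sqrt ((m-1:ℕ):ℝ) - 1/Real.sqrt m)) := by
          apply mul_le_mul_of_nonneg_left hst hCpos
  rw [← Finset.sum_filter]
  set s' := s.filter (fun m => M₀ ≤ m) with hs'
  have hsub : s' ⊆ Finset.Ico M₀ (s.sup id + 1) := by
    intro m hmmem
    rw [hs', Finset.mem_filter] at hmmem
    rw [Finset.mem_Ico]
    refine ⟨hmmem.2, ?_⟩
    have h := Finset.le_sup (f := id) hmmem.1
    simp only [id] at h
    omega
  have hg : ∀ m ∈ Finset.Ico M₀ (s.sup id + 1),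
      0 ≤ C * (2 * (1/Real.sqrt ((m-1:ℕ):ℝ) - 1/Real.sqrt m)) := by
    intro m hmmem
    rw [Finset.mem_Ico] at hmmem
    have h1 : (1:ℝ) ≤ ((m-1:ℕ):ℝ) := by
      have : 1 ≤ m - 1 := by omega
      exact_mod_cast this
    have h2 : ((m-1:ℕ):ℝ) ≤ (m:ℝ) := by
      have : m - 1 ≤ m := by omega
      exact_mod_cast this
    have h3 : 0 < Real.sqrt ((m-1:ℕ):ℝ) := Real.sqrt_pos.mpr (by linarith)
    have h4 : Real.sqrt ((m-1:ℕ):ℝ) ≤ Real.sqrt m := Real.sqrt_le_sqrt h2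
    have h5 : 1/Real.sqrt m ≤ 1/Real.sqrt ((m-1:ℕ):ℝ) :=
      one_div_le_one_div_of_le h3 h4
    have h6 : 0 ≤ 1/Real.sqrt ((m-1:ℕ):ℝ) - 1/Real.sqrt m := by linarith
    positivity
  have hrw : ∀ m : ℕ, C * (2 * (1/Real.sqrt ((m-1:ℕ):ℝ) - 1/Real.sqrt m))
      = 2*C * (1/Real.sqrt ((m-1:ℕ):ℝ) - 1/Real.sqrt (m:ℝ)) := by
    intro m; ring
  calc ∑ m ∈ s', Real.log m ^ γ / (m:ℝ)^2
      ≤ ∑ m ∈ s', C * (2 * (1/Real.sqrt ((m-1:ℕ):ℝ) - 1/Real.sqrt m)) := by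
        apply Finset.sum_le_sum
        intro m hmmem
        rw [hs', Finset.mem_filter] at hmmem
        exact hterm m hmmem.2
    _ ≤ ∑ m ∈ Finset.Ico M₀ (s.sup id + 1),
          C * (2 * (1/Real.sqrt ((m-1:ℕ):ℝ) - 1/Real.sqrt m)) :=
        Finset.sum_le_sum_of_subset_of_nonneg hsub (fun m hmm _ => hg m hmm)
    _ ≤ 3 * Real.log M₀ ^ γ / M₀ := by
        simp only [hrw]
        rw [← Finset.mul_sum]
        rcases le_or_gt M₀ (s.sup id + 1) with h | h
        · rw [telescoping_sqrt h]
          have hM1 : (15:ℝ) ≤ ((M₀-1:ℕ):ℝ) := by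
            have : 15 ≤ M₀ - 1 := by omega
            exact_mod_cast this
          have hMc : ((M₀-1:ℕ):ℝ) = (M₀:ℝ) - 1 := by
            have h1 : 1 ≤ M₀ := by omega
            push_cast [Nat.cast_sub h1]; ring
          have ht1 : (0:ℝ) ≤ 1/Real.sqrt (((s.sup id + 1)-1:ℕ):ℝ) := by positivity
          have hsqpos : 0 < Real.sqrt ((M₀-1:ℕ):ℝ) := Real.sqrt_pos.mpr (by linarith)
          have hsqsq : (Real.sqrt M₀ * Real.sqrt ((M₀-1:ℕ):ℝ))^2 = (M₀:ℝ) * ((M₀:ℝ)-1) := by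
            rw [mul_pow, Real.sq_sqrt hMpos.le,
              Real.sq_sqrt (by linarith : (0:ℝ) ≤ ((M₀-1:ℕ):ℝ)), hMc]
          have hprod : (2/3)*(M₀:ℝ) ≤ Real.sqrt M₀ * Real.sqrt ((M₀-1:ℕ):ℝ) := by
            nlinarith [hsqsq, mul_pos hsqM hsqpos]
          have hLpow : (0:ℝ) ≤ Real.log M₀ ^ γ := Real.rpow_nonneg hlM.le γ
          have hfinal : 2*C*(1/Real.sqrt ((M₀-1:ℕ):ℝ)) ≤ 3 * Real.log M₀ ^ γ / M₀ := by
            rw [hC]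
            have e : 2*(Real.log M₀ ^ γ/Real.sqrt M₀)*(1/Real.sqrt ((M₀-1:ℕ):ℝ))
                = 2*Real.log M₀ ^ γ/(Real.sqrt M₀*Real.sqrt ((M₀-1:ℕ):ℝ)) := by
              field_simp
            rw [e, div_le_div_iff₀ (by positivity) hMpos]
            calc 2 * Real.log M₀ ^ γ * M₀
                ≤ 2 * Real.log M₀ ^ γ * ((3/2) * (Real.sqrt M₀ * Real.sqrt ((M₀-1:ℕ):ℝ))) := by
                  apply mul_le_mul_of_nonneg_left _ (by positivity)
                  linarith
              _ = 3 * Real.log M₀ ^ γ * (Real.sqrt M₀ * Real.sqrt ((M₀-1:ℕ):ℝ)) := by ring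
          calc 2*C * (1/Real.sqrt ((M₀-1:ℕ):ℝ) - 1/Real.sqrt (((s.sup id + 1)-1:ℕ):ℝ))
              ≤ 2*C * (1/Real.sqrt ((M₀-1:ℕ):ℝ)) := by
                apply mul_le_mul_of_nonneg_left _ (by positivity)
                linarith
            _ ≤ 3 * Real.log M₀ ^ γ / M₀ := hfinal
        · rw [Finset.Ico_eq_empty (by omega)]
          simp only [Finset.sum_empty, mul_zero]
          positivity

lemma tail_sum_le {γ : ℝ} (hγ : 0 ≤ γ) {M₀ : ℕ} (hM : 16 ≤ M₀)
    (hlog : γ + γ ≤ Real.log M₀) :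
    ∑' m : ℕ, (if M₀ ≤ m then ENNReal.ofReal (Real.log m ^ γ / (m:ℝ)^2) else 0)
      ≤ ENNReal.ofReal (3 * Real.log M₀ ^ γ / M₀) := by
  rw [ENNReal.tsum_eq_iSup_sum]
  apply iSup_le
  intro s
  have heq : ∀ m : ℕ, (if M₀ ≤ m then ENNReal.ofReal (Real.log m ^ γ / (m:ℝ)^2) else 0)
      = ENNReal.ofReal (if M₀ ≤ m then Real.log m ^ γ / (m:ℝ)^2 else 0) := by
    intro m
    split <;> simp
  simp only [heq]
  rw [← ENNReal.ofReal_sum_of_nonneg]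
  · exact ENNReal.ofReal_le_ofReal (tail_real_le hγ hM hlog s)
  · intro m _
    split
    · rename_i hmem
      have hm16 : (16:ℝ) ≤ (m:ℝ) := by
        have : 16 ≤ m := le_trans hM hmem
        exact_mod_cast this
      have := one_lt_log hm16
      positivity
    · exact le_refl 0
end Tail

section MZero
open Filter

noncomputable def M0 (β : ℝ) (n : ℕ) : ℕ := max 16 ⌈Mseq β n⌉₊

noncomputable def gammaExp (α : ℝ) (n : ℕ) : ℝ := α + α + (α+1)*((n-2 : ℕ) : ℝ)

lemma M0_ge16 (β : ℝ) (n : ℕ) : 16 ≤ M0 β n := le_max_left _ _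

lemma M0_cast_ge16 (β : ℝ) (n : ℕ) : (16:ℝ) ≤ (M0 β n : ℝ) := by
  exact_mod_cast M0_ge16 β n

lemma Mseq_le_M0 (β : ℝ) (n : ℕ) : Mseq β n ≤ (M0 β n : ℝ) := by
  calc Mseq β n ≤ (⌈Mseq β n⌉₊ : ℝ) := Nat.le_ceil _
    _ ≤ (M0 β n : ℝ) := by exact_mod_cast le_max_right 16 ⌈Mseq β n⌉₊

lemma logM0_ge {β : ℝ} (hβ : 0 < β) {n : ℕ} (hn : 1 ≤ n) :
    β * n * Real.log n ≤ Real.log (M0 β n) := by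
  have hn0 : (0:ℝ) < (n:ℝ) := by exact_mod_cast hn
  have hMs : Mseq β n = (n:ℝ) ^ (β * n) := rfl
  have hlog : Real.log (Mseq β n) = β * n * Real.log n := by
    rw [hMs, Real.log_rpow hn0]
  have hMpos : 0 < Mseq β n := Real.rpow_pos_of_pos hn0 _
  calc β * n * Real.log n = Real.log (Mseq β n) := hlog.symm
    _ ≤ Real.log (M0 β n) := Real.log_le_log hMpos (Mseq_le_M0 β n)

lemma logM0_le {β : ℝ} (hβ : 1 ≤ β) {n : ℕ} (hn : 16 ≤ n) :
    Real.log (M0 β n) ≤ Real.log 2 + β * n * Real.log n := by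
  have hn0 : (0:ℝ) < (n:ℝ) := by positivity
  have hn1 : (1:ℝ) ≤ (n:ℝ) := by exact_mod_cast le_trans (by norm_num) hn
  have hn16 : (16:ℝ) ≤ (n:ℝ) := by exact_mod_cast hn
  have hMs16 : (16:ℝ) ≤ Mseq β n := by
    have h1 : (n:ℝ) ^ (1:ℝ) ≤ (n:ℝ) ^ (β * n) := by
      apply Real.rpow_le_rpow_of_exponent_le hn1
      have : (1:ℝ) ≤ (n:ℝ) := hn1
      nlinarith
    rw [Real.rpow_one] at h1
    calc (16:ℝ) ≤ (n:ℝ) := hn16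
      _ ≤ Mseq β n := h1
  have hceil : (⌈Mseq β n⌉₊ : ℝ) ≤ Mseq β n + 1 :=
    le_of_lt (Nat.ceil_lt_add_one (by linarith))
  have hcast : ((M0 β n : ℕ) : ℝ) = max (16:ℝ) (⌈Mseq β n⌉₊ : ℝ) := by
    rw [M0]
    push_cast
    rfl
  have hM0le : ((M0 β n : ℕ) : ℝ) ≤ 2 * Mseq β n := by
    rw [hcast]
    apply max_le (by linarith) (by linarith)
  have hM0pos : (0:ℝ) < (M0 β n : ℝ) := by
    have := M0_cast_ge16 β n; linarith
  calc Real.log (M0 β n) ≤ Real.log (2 * Mseq β n) :=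
        Real.log_le_log hM0pos hM0le
    _ = Real.log 2 + Real.log (Mseq β n) := Real.log_mul (by norm_num) (by positivity)
    _ = Real.log 2 + β * n * Real.log n := by
        rw [Mseq, Real.log_rpow hn0]

lemma gammaExp_nonneg {α : ℝ} (hα : 1 < α) (n : ℕ) : 0 ≤ gammaExp α n := by
  rw [gammaExp]
  have h1 : (0:ℝ) ≤ ((n-2:ℕ):ℝ) := by positivity
  nlinarith

end MZero

section Eventually
open Filter

lemma tendsto_logn : Tendsto (fun n : ℕ => Real.log n) atTop atTop :=
  Real.tendsto_log_atTop.comp tendsto_natCast_atTop_atTop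

lemma eventually_loglog (a b : ℝ) (hb : 0 < b) :
    ∀ᶠ n : ℕ in atTop, a * Real.log (Real.log n) ≤ b * Real.log n := by
  have h := Real.isLittleO_log_id_atTop.comp_tendsto tendsto_logn
  have h2 := h.bound (c := b / (|a| + 1)) (by positivity)
  filter_upwards [h2, tendsto_logn.eventually_ge_atTop 1] with n hn hn1
  simp only [Function.comp, id, Real.norm_eq_abs] at hn
  have h3 : |Real.log (Real.log n)| ≤ b / (|a| + 1) * Real.log n := by
    calc |Real.log (Real.log n)| ≤ b / (|a| + 1) * |Real.log n| := hn
      _ = b / (|a| + 1) * Real.log n := by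
        rw [abs_of_nonneg (show (0:ℝ) ≤ Real.log n by linarith)]
  have h4 : a * Real.log (Real.log n) ≤ |a| * |Real.log (Real.log n)| := by
    calc a * Real.log (Real.log n) ≤ |a * Real.log (Real.log n)| := le_abs_self _
      _ = |a| * |Real.log (Real.log n)| := abs_mul _ _
  have h5 : |a| * |Real.log (Real.log n)| ≤ |a| * (b / (|a| + 1) * Real.log n) :=
    mul_le_mul_of_nonneg_left h3 (abs_nonneg a)
  have h6 : |a| * (b / (|a| + 1) * Real.log n) ≤ b * Real.log n := by
    have habs : 0 ≤ |a| := abs_nonneg a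
    have hd : |a| * (b / (|a| + 1)) ≤ b := by
      rw [mul_div_assoc', div_le_iff₀ (by positivity : (0:ℝ) < |a| + 1)]
      nlinarith [abs_nonneg a, hb]
    calc |a| * (b / (|a| + 1) * Real.log n) = (|a| * (b / (|a| + 1))) * Real.log n := by ring
      _ ≤ b * Real.log n := mul_le_mul_of_nonneg_right hd (by linarith)
  linarith

set_option maxHeartbeats 1000000 in
/-- The main eventual bound collecting all conditions needed for large `n`. -/
lemma eventually_good {α β c : ℝ} (hα : 1 < α) (hβ : α < β) (hc : 0 < c) :
    ∀ᶠ n : ℕ in atTop, 16 ≤ n ∧ α ≤ Real.log (M0 β n) ∧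
      (gammaExp α n + gammaExp α n ≤ Real.log (M0 β n)) ∧
      (2:ℝ)^(n-1) * c^n / ((n-2).factorial : ℝ)
        * (3 * Real.log (M0 β n) ^ gammaExp α n / (M0 β n)) ≤ (1/2)^n := by
  have hβ0 : (0:ℝ) < β := by linarith
  have hβ1 : (1:ℝ) ≤ β := by linarith
  set ε := β - α with hε
  have hε0 : 0 < ε := by rw [hε]; linarith
  set K0 := 2*Real.log 2 + Real.log c + (α+1)*Real.log (2*β) + 1 with hK0
  have Fβlog : Tendsto (fun n : ℕ => β * Real.log n) atTop atTop :=
    tendsto_logn.const_mul_atTop hβ0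
  have Fεlog : Tendsto (fun n : ℕ => (ε/2) * Real.log n) atTop atTop :=
    tendsto_logn.const_mul_atTop (by positivity)
  filter_upwards [eventually_ge_atTop 16,
    Fβlog.eventually_ge_atTop (6*(α+1)),
    eventually_loglog (α+1) (ε/2) (by positivity),
    Fεlog.eventually_ge_atTop (K0 + 3),
    tendsto_logn.eventually_ge_atTop 1] with n hn16 hF2 hF4 hF5 hlogn1
  -- basic facts
  have hnR : (16:ℝ) ≤ (n:ℝ) := by exact_mod_cast hn16
  have hn0 : (0:ℝ) < (n:ℝ) := by linarith
  have hn1 : (1:ℝ) ≤ (n:ℝ) := by linarith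
  have hlognpos : (0:ℝ) < Real.log n := by linarith
  have hM016 : (16:ℝ) ≤ (M0 β n : ℝ) := M0_cast_ge16 β n
  have hM0pos : (0:ℝ) < (M0 β n : ℝ) := by linarith
  set L := Real.log (M0 β n) with hLdef
  have hL1 : β * n * Real.log n ≤ L := logM0_ge hβ0 (by omega)
  have hLpos : (0:ℝ) < L := lt_trans one_pos (one_lt_log hM016)
  have hβlogn : 6*(α+1) ≤ β * Real.log n := hF2
  have hβnlogn : (12:ℝ) ≤ β * n * Real.log n := by
    have h1 : (12:ℝ) ≤ β * Real.log n := by linarith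
    have hprod : (0:ℝ) ≤ ((n:ℝ)-1)*(β*Real.log n) :=
      mul_nonneg (by linarith) (by linarith)
    linarith only [hprod, h1, hn1, hα]
  have hlog2 : Real.log 2 ≤ 1 := by
    have := Real.log_le_sub_one_of_pos (by norm_num : (0:ℝ) < 2); linarith
  have hlog2pos : (0:ℝ) < Real.log 2 := Real.log_pos (by norm_num)
  have hL2 : L ≤ 2 * (β * n * Real.log n) := by
    have := logM0_le hβ1 hn16
    linarith
  -- cast facts for n - 2
  have hcast2 : ((n-2:ℕ):ℝ) = (n:ℝ) - 2 := by
    have h1 : 2 ≤ n := by omega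
    push_cast [Nat.cast_sub h1]; ring
  have hγval : gammaExp α n = (α+1)*(n:ℝ) - 2 := by
    rw [gammaExp, hcast2]; ring
  have hγnonneg : 0 ≤ gammaExp α n := by rw [hγval]; nlinarith
  have hγle : gammaExp α n ≤ (α+1)*(n:ℝ) := by rw [hγval]; nlinarith
  -- condition C2
  have hC2 : α ≤ L := by
    have h1 : α ≤ β * Real.log n := by linarith
    have hprod : (0:ℝ) ≤ ((n:ℝ)-1)*(β*Real.log n) :=
      mul_nonneg (by linarith) (by linarith)
    linarith only [hprod, h1, hL1, hF2, hα]
  -- condition C3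
  have hC3 : gammaExp α n + gammaExp α n ≤ L := by
    have h1 : 2*(α+1) ≤ β * Real.log n := by linarith
    have h2 := mul_le_mul_of_nonneg_left h1 hn0.le
    linarith only [h2, hγle, hL1]
  refine ⟨hn16, hC2, hC3, ?_⟩
  -- the main estimate via exponentials
  have hD : Real.log L ≤ Real.log (2*β) + Real.log n + Real.log (Real.log n) := by
    calc Real.log L ≤ Real.log (2 * (β * n * Real.log n)) := by
          apply Real.log_le_log hLpos
          nlinarith
      _ = Real.log 2 + Real.log β + Real.log n + Real.log (Real.log n) := by
          rw [Real.log_mul (by norm_num) (by positivity),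
            Real.log_mul (by positivity) (by positivity),
            Real.log_mul (by positivity) (by positivity)]
          ring
      _ = Real.log (2*β) + Real.log n + Real.log (Real.log n) := by
          rw [Real.log_mul (by norm_num) (by positivity)]
  have hDpos : 0 ≤ Real.log (2*β) + Real.log n + Real.log (Real.log n) := by
    have h1 : 0 ≤ Real.log (2*β) := Real.log_nonneg (by linarith)
    have h2 : 0 ≤ Real.log (Real.log n) := Real.log_nonneg hlogn1
    linarith
  set D := Real.log (2*β) + Real.log n + Real.log (Real.log n) with hDdef
  -- Step A : L ^ γ ≤ exp ((α+1) n D)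
  have hStepA : L ^ gammaExp α n ≤ Real.exp ((α+1)*(n:ℝ)*D) := by
    rw [Real.rpow_def_of_pos hLpos]
    apply Real.exp_le_exp.mpr
    calc Real.log L * gammaExp α n ≤ D * gammaExp α n := by
          apply mul_le_mul_of_nonneg_right hD hγnonneg
      _ ≤ D * ((α+1)*(n:ℝ)) := mul_le_mul_of_nonneg_left hγle hDpos
      _ = (α+1)*(n:ℝ)*D := by ring
  -- Step B : 2^(n-1) ≤ exp (n log 2)
  have hStepB : (2:ℝ)^(n-1) ≤ Real.exp ((n:ℝ) * Real.log 2) := by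
    have h1 : (2:ℝ)^(n-1) ≤ (2:ℝ)^n := by
      apply pow_le_pow_right₀ (by norm_num) (by omega)
    have h2 : Real.exp ((n:ℝ) * Real.log 2) = (2:ℝ)^n := by
      rw [Real.exp_nat_mul, Real.exp_log (by norm_num)]
    linarith
  -- Step C : c^n = exp (n log c)
  have hStepC : (c:ℝ)^n = Real.exp ((n:ℝ) * Real.log c) := by
    rw [Real.exp_nat_mul, Real.exp_log hc]
  -- Step D : factorial lower bound
  have hStepD : Real.exp ((n:ℝ)*Real.log n - 2*Real.log n - (n:ℝ) - 2)
      ≤ ((n-2).factorial : ℝ) := by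
    set m := n - 2 with hm
    have hmR : ((m:ℕ):ℝ) = (n:ℝ) - 2 := hcast2
    have hm14 : (14:ℝ) ≤ ((m:ℕ):ℝ) := by rw [hmR]; linarith
    have hmpos : (0:ℝ) < ((m:ℕ):ℝ) := by linarith
    have hfac : ((m:ℕ):ℝ)^m / (m.factorial : ℝ) ≤ Real.exp m :=
      Real.pow_div_factorial_le_exp _ hmpos.le m
    have hfacpos : (0:ℝ) < (m.factorial : ℝ) := by
      exact_mod_cast Nat.factorial_pos m
    have hpow : ((m:ℕ):ℝ)^m = Real.exp ((m:ℝ) * Real.log m) := by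
      rw [Real.exp_nat_mul, Real.exp_log hmpos]
    have h1 : Real.exp ((m:ℝ) * Real.log m - (m:ℝ)) ≤ (m.factorial : ℝ) := by
      rw [Real.exp_sub, ← hpow]
      rw [div_le_iff₀ hfacpos] at hfac
      rw [div_le_iff₀ (Real.exp_pos _)]
      linarith [hfac]
    have h2 : (n:ℝ)*Real.log n - 2*Real.log n - (n:ℝ) - 2
        ≤ (m:ℝ) * Real.log m - (m:ℝ) := by
      rw [hmR]
      have hsub : Real.log n - Real.log ((n:ℝ)-2) ≤ 2/((n:ℝ)-2) := by
        have hpos2 : (0:ℝ) < (n:ℝ) - 2 := by linarith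
        have hq : (0:ℝ) < (n:ℝ)/((n:ℝ)-2) := by positivity
        have h3 := Real.log_le_sub_one_of_pos hq
        have h4 : Real.log ((n:ℝ)/((n:ℝ)-2)) = Real.log n - Real.log ((n:ℝ)-2) :=
          Real.log_div (by linarith) (by linarith)
        have h5 : (n:ℝ)/((n:ℝ)-2) - 1 = 2/((n:ℝ)-2) := by field_simp; ring
        linarith [h4 ▸ h3, h5 ▸ le_refl ((n:ℝ)/((n:ℝ)-2) - 1)]
      have hpos2 : (0:ℝ) < (n:ℝ) - 2 := by linarith
      have hmul : (n:ℝ) * (Real.log n - Real.log ((n:ℝ)-2)) ≤ (n:ℝ) * (2/((n:ℝ)-2)) :=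
        mul_le_mul_of_nonneg_left hsub hn0.le
      have hfrac : (n:ℝ) * (2/((n:ℝ)-2)) ≤ 4 := by
        rw [mul_div_assoc', div_le_iff₀ hpos2]
        linarith
      have hloglt : Real.log ((n:ℝ)-2) ≤ Real.log n := Real.log_le_log hpos2 (by linarith)
      have hloglt2 : 2*Real.log ((n:ℝ)-2) ≤ 2*Real.log n := by linarith
      linarith only [hmul, hfrac, hloglt2]
    calc Real.exp ((n:ℝ)*Real.log n - 2*Real.log n - (n:ℝ) - 2)
        ≤ Real.exp ((m:ℝ) * Real.log m - (m:ℝ)) := Real.exp_le_exp.mpr h2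
      _ ≤ (m.factorial : ℝ) := h1
  -- Step E : M0 ≥ exp (β n log n)
  have hStepE : Real.exp (β * n * Real.log n) ≤ (M0 β n : ℝ) := by
    calc Real.exp (β * n * Real.log n) ≤ Real.exp L := Real.exp_le_exp.mpr hL1
      _ = (M0 β n : ℝ) := Real.exp_log hM0pos
  -- Step F : 3 ≤ exp 2
  have hStepF : (3:ℝ) ≤ Real.exp 2 := by
    have h1 : (2.7:ℝ) < Real.exp 1 := by
      have := Real.exp_one_gt_d9; linarith
    have h2 : Real.exp 2 = Real.exp 1 * Real.exp 1 := by
      rw [← Real.exp_add]; norm_num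
    nlinarith
  -- combine
  have hfacpos : (0:ℝ) < ((n-2).factorial : ℝ) := by
    exact_mod_cast Nat.factorial_pos (n-2)
  have hLγpos : (0:ℝ) ≤ L ^ gammaExp α n := Real.rpow_nonneg hLpos.le _
  have hfirst : (2:ℝ)^(n-1) * c^n / ((n-2).factorial : ℝ)
      ≤ Real.exp ((n:ℝ)*Real.log 2 + (n:ℝ)*Real.log c
          - ((n:ℝ)*Real.log n - 2*Real.log n - (n:ℝ) - 2)) := by
    rw [Real.exp_sub, Real.exp_add]
    apply div_le_div₀ (by positivity) _ (Real.exp_pos _) hStepD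
    calc (2:ℝ)^(n-1) * c^n ≤ Real.exp ((n:ℝ)*Real.log 2) * Real.exp ((n:ℝ)*Real.log c) := by
          rw [← hStepC]
          apply mul_le_mul_of_nonneg_right hStepB (by positivity)
      _ = _ := rfl
  have hsecond : 3 * L ^ gammaExp α n / (M0 β n : ℝ)
      ≤ Real.exp (2 + (α+1)*(n:ℝ)*D - β * n * Real.log n) := by
    rw [Real.exp_sub, Real.exp_add]
    apply div_le_div₀ (by positivity) _ (Real.exp_pos _) hStepE
    exact mul_le_mul hStepF hStepA hLγpos (by positivity)
  have hmulLHS : (2:ℝ)^(n-1) * c^n / ((n-2).factorial : ℝ)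
        * (3 * L ^ gammaExp α n / (M0 β n : ℝ))
      ≤ Real.exp (((n:ℝ)*Real.log 2 + (n:ℝ)*Real.log c
          - ((n:ℝ)*Real.log n - 2*Real.log n - (n:ℝ) - 2))
        + (2 + (α+1)*(n:ℝ)*D - β * n * Real.log n)) := by
    rw [Real.exp_add]
    apply mul_le_mul hfirst hsecond (by positivity) (Real.exp_pos _).le
  have hhalf : ((1:ℝ)/2)^n = Real.exp ((n:ℝ) * Real.log (1/2)) := by
    rw [Real.exp_nat_mul, Real.exp_log (by norm_num)]
  -- final log-level inequality
  have hF4n : (n:ℝ) * ((α+1) * Real.log (Real.log n)) ≤ (n:ℝ) * ((ε/2) * Real.log n) :=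
    mul_le_mul_of_nonneg_left hF4 hn0.le
  have hF5n : (n:ℝ) * (K0 + 3) ≤ (n:ℝ) * ((ε/2) * Real.log n) :=
    mul_le_mul_of_nonneg_left hF5 hn0.le
  have hlogn_le : Real.log n ≤ (n:ℝ) - 1 := by
    have := Real.log_le_sub_one_of_pos hn0; linarith
  have hexp_le : (((n:ℝ)*Real.log 2 + (n:ℝ)*Real.log c
          - ((n:ℝ)*Real.log n - 2*Real.log n - (n:ℝ) - 2))
        + (2 + (α+1)*(n:ℝ)*D - β * n * Real.log n)) ≤ (n:ℝ) * Real.log (1/2) := by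
    have hloghalf : Real.log (1/2) = -Real.log 2 := by
      rw [one_div, Real.log_inv]
    rw [hloghalf, hDdef]
    rw [hK0] at hF5n
    rw [hε] at hF4n hF5n
    linarith only [hF4n, hF5n, hlogn_le, hnR]
  calc (2:ℝ)^(n-1) * c^n / ((n-2).factorial : ℝ)
        * (3 * L ^ gammaExp α n / (M0 β n : ℝ))
      ≤ Real.exp (((n:ℝ)*Real.log 2 + (n:ℝ)*Real.log c
          - ((n:ℝ)*Real.log n - 2*Real.log n - (n:ℝ) - 2))
        + (2 + (α+1)*(n:ℝ)*D - β * n * Real.log n)) := hmulLHS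
    _ ≤ Real.exp ((n:ℝ) * Real.log (1/2)) := Real.exp_le_exp.mpr hexp_le
    _ = (1/2)^n := hhalf.symm

end Eventually

section Combinatorics

def detM (S Pv : Finset ℕ) : ℕ := (∑ k ∈ S, (if k ∈ Pv then (1:ℤ) else -1) * (k:ℤ)).natAbs

def Adm (β : ℝ) (n : ℕ) (t : ℕ × Finset ℕ × Finset ℕ) : Prop :=
  M0 β n ≤ t.1 ∧ (∀ k ∈ t.2.1, M0 β n ≤ k ∧ k < t.1) ∧ t.2.1.card = n-2 ∧
  t.2.2 ⊆ insert t.1 t.2.1 ∧ t.1 < detM (insert t.1 t.2.1) t.2.2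

lemma per_m_bound {α c : ℝ} (hα : 1 < α) (hc : 0 < c) {n m : ℕ} (hn : 4 ≤ n) (hm : 16 ≤ m) :
    (c * Real.log m ^ α / m) * ((c * Real.log m ^ α / m)
        * ((c * Real.log m ^ (α+1)) ^ (n-2) / ((n-2).factorial : ℝ)))
      ≤ (c^n / ((n-2).factorial : ℝ)) * (Real.log m ^ gammaExp α n / (m:ℝ)^2) := by
  have hm' : (16:ℝ) ≤ (m:ℝ) := by exact_mod_cast hm
  have hL : (0:ℝ) < Real.log m := lt_trans one_pos (one_lt_log hm')
  have e1 : (c * Real.log m ^ (α+1)) ^ (n-2)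
      = c^(n-2) * Real.log m ^ ((α+1) * ((n-2:ℕ):ℝ)) := by
    rw [mul_pow]
    congr 1
    rw [← Real.rpow_natCast (Real.log m ^ (α+1)) (n-2), ← Real.rpow_mul hL.le]
  have e2 : Real.log m ^ gammaExp α n
      = Real.log m ^ α * Real.log m ^ α * Real.log m ^ ((α+1) * ((n-2:ℕ):ℝ)) := by
    rw [gammaExp, Real.rpow_add hL, Real.rpow_add hL]
  have e3 : c^2 * c^(n-2) = c^n := by
    rw [← pow_add]
    congr 1
    omega
  rw [e1, e2, ← e3]
  have hmpos : (0:ℝ) < (m:ℝ) := by linarith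
  field_simp
  ring_nf
  apply le_of_eq
  ring

end Combinatorics

section SubsetLemma

lemma relation_subset_event {Ω : Type} (E : ℕ → Set Ω) (β : ℝ) (n : ℕ) (hn : 4 ≤ n)
    (A : Ω → Set ℕ) (hA : ∀ ω, A ω = {k | 16 ≤ k ∧ ω ∈ E k}) :
    {ω | HasRelationOfLength (A ω ∩ {k : ℕ | Mseq β n ≤ (k:ℝ)}) n}
      ⊆ ⋃ t : {t : ℕ × Finset ℕ × Finset ℕ // Adm β n t},
          ⋂ k ∈ insert (detM (insert t.1.1 t.1.2.1) t.1.2.2) (insert t.1.1 t.1.2.1), E k := by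
  intro ω hω
  obtain ⟨θ, hsupp, hpm, hsum0, hlen⟩ := hω
  -- every support element is ≥ M0 and in E
  have hksupp : ∀ k ∈ θ.support, M0 β n ≤ k ∧ ω ∈ E k := by
    intro k hk
    have hθk : θ k ≠ 0 := Finsupp.mem_support_iff.mp hk
    have hmem := hsupp k hθk
    rw [Set.mem_inter_iff, hA] at hmem
    obtain ⟨⟨h16, hE⟩, hM⟩ := hmem
    refine ⟨?_, hE⟩
    rw [M0]
    apply max_le h16
    exact Nat.ceil_le.mpr hM
  -- |θ k| = 1 on the support
  have habs : ∀ k ∈ θ.support, |θ k| = 1 := by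
    intro k hk
    have hθk : θ k ≠ 0 := Finsupp.mem_support_iff.mp hk
    rcases hpm k with h | h | h
    · rw [h]; rfl
    · exact absurd h hθk
    · rw [h]; rfl
  -- the support has n elements
  have hcard : θ.support.card = n := by
    have h1 : (∑ k ∈ θ.support, |θ k|) = (θ.support.card : ℤ) := by
      rw [Finset.sum_congr rfl habs]
      simp
    have h2 : (θ.support.card : ℤ) = (n:ℤ) := by rw [← h1, hlen]
    exact_mod_cast h2
  have hne : θ.support.Nonempty := by
    apply Finset.card_pos.mp
    omega
  set mtop := θ.support.max' hne with hmtop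
  have hmtopmem : mtop ∈ θ.support := θ.support.max'_mem hne
  set S₁ := θ.support.erase mtop with hS₁
  have hS₁card : S₁.card = n - 1 := by
    rw [hS₁, Finset.card_erase_of_mem hmtopmem, hcard]
  have hS₁ne : S₁.Nonempty := by
    apply Finset.card_pos.mp
    omega
  set m₂ := S₁.max' hS₁ne with hm₂
  have hm₂mem : m₂ ∈ S₁ := S₁.max'_mem hS₁ne
  set T' := S₁.erase m₂ with hT'
  set Pv := S₁.filter (fun k => θ k = 1) with hPv
  have hkey : insert m₂ T' = S₁ := Finset.insert_erase hm₂mem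
  have hm₂supp : m₂ ∈ θ.support := Finset.mem_of_mem_erase hm₂mem
  have hm₂ne : m₂ ≠ mtop := Finset.ne_of_mem_erase hm₂mem
  have hm₂lt : m₂ < mtop :=
    lt_of_le_of_ne (θ.support.le_max' m₂ hm₂supp) hm₂ne
  -- the signed sum over S₁ equals the coefficient sum
  have hsignsum : (∑ k ∈ S₁, (if k ∈ Pv then (1:ℤ) else -1) * (k:ℤ))
      = ∑ k ∈ S₁, θ k * (k:ℤ) := by
    apply Finset.sum_congr rfl
    intro k hk
    have hksup : k ∈ θ.support := Finset.mem_of_mem_erase hk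
    have hθk : θ k ≠ 0 := Finsupp.mem_support_iff.mp hksup
    rcases hpm k with h | h | h
    · have hnot : k ∉ Pv := by
        rw [hPv, Finset.mem_filter]
        push_neg
        intro _
        rw [h]; norm_num
      rw [if_neg hnot, h]
    · exact absurd h hθk
    · have hin : k ∈ Pv := by
        rw [hPv, Finset.mem_filter]
        exact ⟨hk, h⟩
      rw [if_pos hin, h]
  have hS₁sum : ∑ k ∈ S₁, θ k * (k:ℤ) = -(θ mtop * (mtop:ℤ)) := by
    have h := Finset.sum_erase_add θ.support (fun k => θ k * (k:ℤ)) hmtopmem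
    rw [hS₁]
    have h2 : ∑ k ∈ θ.support.erase mtop, θ k * (k:ℤ) + θ mtop * (mtop:ℤ) = 0 := by
      rw [h, hsum0]
    linarith [h2]
  have hdet : detM (insert m₂ T') Pv = mtop := by
    rw [hkey, detM, hsignsum, hS₁sum]
    have := habs mtop hmtopmem
    rcases abs_eq (by norm_num : (0:ℤ) ≤ 1) |>.mp this with h | h
    · rw [h]; simp
    · rw [h]; simp
  -- admissibility
  have hAdm : Adm β n (m₂, T', Pv) := by
    refine ⟨(hksupp m₂ hm₂supp).1, ?_, ?_, ?_, ?_⟩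
    · intro k hk
      have hksup : k ∈ θ.support := Finset.mem_of_mem_erase (Finset.mem_of_mem_erase hk)
      refine ⟨(hksupp k hksup).1, ?_⟩
      have h1 : k ∈ S₁ := Finset.mem_of_mem_erase hk
      have h2 : k ≠ m₂ := Finset.ne_of_mem_erase hk
      exact lt_of_le_of_ne (S₁.le_max' k h1) h2
    · rw [hT', Finset.card_erase_of_mem hm₂mem, hS₁card]
      omega
    · show Pv ⊆ insert m₂ T'
      rw [hkey, hPv]
      exact Finset.filter_subset _ _
    · show m₂ < detM (insert m₂ T') Pv
      rw [hdet]
      exact hm₂lt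
  rw [Set.mem_iUnion]
  refine ⟨⟨(m₂, T', Pv), hAdm⟩, ?_⟩
  simp only [Set.mem_iInter]
  intro k hk
  have hins : insert (detM (insert m₂ T') Pv) (insert m₂ T') = θ.support := by
    rw [hdet, hkey, hS₁, Finset.insert_erase hmtopmem]
  rw [hins] at hk
  exact (hksupp k hk).2

end SubsetLemma

section Chain

open Classical in
set_option maxHeartbeats 1000000 in
lemma chain_bound {α β c : ℝ} (hα : 1 < α) (hβ1 : 1 ≤ β) (hc : 0 < c) (δ : ℕ → ℝ)
    (hδ0 : ∀ k, 16 ≤ k → 0 ≤ δ k) (hδle : ∀ k, 16 ≤ k → δ k ≤ c * Real.log k ^ α / k)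
    {n : ℕ} (hn : 16 ≤ n)
    (hCα : α ≤ Real.log (M0 β n))
    (hCγ : gammaExp α n + gammaExp α n ≤ Real.log (M0 β n)) :
    ∑' t : ℕ × Finset ℕ × Finset ℕ,
        ({t : ℕ × Finset ℕ × Finset ℕ | Adm β n t}.indicator
          (fun t => ∏ k ∈ insert (detM (insert t.1 t.2.1) t.2.2) (insert t.1 t.2.1),
            ENNReal.ofReal (δ k)) t)
      ≤ ENNReal.ofReal ((2:ℝ)^(n-1) * c^n / ((n-2).factorial : ℝ)
          * (3 * Real.log (M0 β n) ^ gammaExp α n / (M0 β n))) := by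
  set M := M0 β n with hMdef
  have hM16 : 16 ≤ M := M0_ge16 β n
  have hM16R : (16:ℝ) ≤ (M:ℝ) := by exact_mod_cast hM16
  have hlogM : (1:ℝ) < Real.log M := one_lt_log hM16R
  have hfacpos : (0:ℝ) < ((n-2).factorial : ℝ) := by exact_mod_cast Nat.factorial_pos (n-2)
  set F : ℕ × Finset ℕ × Finset ℕ → ℝ≥0∞ :=
    fun t => ({t : ℕ × Finset ℕ × Finset ℕ | Adm β n t}.indicator
      (fun t => ∏ k ∈ insert (detM (insert t.1 t.2.1) t.2.2) (insert t.1 t.2.1),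
        ENNReal.ofReal (δ k)) t) with hF
  set G : ℕ → Finset ℕ → ℝ≥0∞ := fun m₂ T' =>
    if (M ≤ m₂ ∧ (∀ k ∈ T', M ≤ k ∧ k < m₂) ∧ T'.card = n-2) then
      (2:ℝ≥0∞)^(n-1) * (ENNReal.ofReal (c * Real.log m₂ ^ α / m₂)
        * (ENNReal.ofReal (δ m₂) * ∏ k ∈ T', ENNReal.ofReal (δ k)))
    else 0 with hG
  set H : ℕ → ℝ≥0∞ := fun m₂ =>
    if M ≤ m₂ then
      (2:ℝ≥0∞)^(n-1) * ENNReal.ofReal ((c * Real.log m₂ ^ α / m₂)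
        * ((c * Real.log m₂ ^ α / m₂)
           * ((c * Real.log m₂ ^ (α+1))^(n-2) / ((n-2).factorial : ℝ))))
    else 0 with hH
  -- Claim 1 : the inner sum over Pv
  have claim1 : ∀ m₂ : ℕ, ∀ T' : Finset ℕ, ∑' Pv : Finset ℕ, F (m₂, T', Pv) ≤ G m₂ T' := by
    intro m₂ T'
    by_cases hbase : (M ≤ m₂ ∧ (∀ k ∈ T', M ≤ k ∧ k < m₂) ∧ T'.card = n-2)
    · obtain ⟨hm₂M, hT'k, hT'card⟩ := hbase
      have hm₂16 : 16 ≤ m₂ := le_trans hM16 hm₂M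
      have hm₂R : (16:ℝ) ≤ (m₂:ℝ) := by exact_mod_cast hm₂16
      have hm₂pos : (0:ℝ) < (m₂:ℝ) := by linarith
      have hm₂nT : m₂ ∉ T' := fun h => absurd (hT'k m₂ h).2 (lt_irrefl m₂)
      set W : ℝ≥0∞ := ENNReal.ofReal (c * Real.log m₂ ^ α / m₂)
        * (ENNReal.ofReal (δ m₂) * ∏ k ∈ T', ENNReal.ofReal (δ k)) with hW
      have hpt : ∀ Pv : Finset ℕ, F (m₂, T', Pv)
          ≤ (if Pv ∈ (insert m₂ T').powerset then W else 0) := by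
        intro Pv
        simp only [hF]
        by_cases hadm : Adm β n (m₂, T', Pv)
        · rw [Set.indicator_of_mem (by exact hadm)]
          obtain ⟨h1, h2, h3, h4, h5⟩ := hadm
          have hPvmem : Pv ∈ (insert m₂ T').powerset := Finset.mem_powerset.mpr h4
          rw [if_pos hPvmem]
          set d := detM (insert m₂ T') Pv with hd
          have hdm₂ : m₂ < d := h5
          have hd16 : 16 ≤ d := by omega
          have hdR16 : (16:ℝ) ≤ (d:ℝ) := by exact_mod_cast hd16
          have hdnotmem : d ∉ insert m₂ T' := by
            rw [Finset.mem_insert]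
            push_neg
            refine ⟨by omega, fun h => ?_⟩
            have := (hT'k d h).2
            omega
          have hm₂notT : m₂ ∉ T' := hm₂nT
          rw [Finset.prod_insert hdnotmem, Finset.prod_insert hm₂notT]
          rw [hW]
          apply mul_le_mul_left
          apply ENNReal.ofReal_le_ofReal
          calc δ d ≤ c * Real.log d ^ α / d := hδle d hd16
            _ ≤ c * Real.log m₂ ^ α / m₂ := by
                have hxy : (m₂:ℝ) ≤ (d:ℝ) := by exact_mod_cast hdm₂.le
                have hγx : α ≤ Real.log (m₂:ℝ) := by
                  have hlm₂ : Real.log (M:ℝ) ≤ Real.log (m₂:ℝ) :=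
                    Real.log_le_log (by linarith) (by exact_mod_cast hm₂M)
                  linarith
                have hmono := logpow_div_mono (γ := α) (x := (m₂:ℝ)) (y := (d:ℝ))
                  (by linarith) hm₂R hxy hγx
                rw [mul_div_assoc, mul_div_assoc]
                exact mul_le_mul_of_nonneg_left hmono hc.le
        · rw [Set.indicator_of_notMem (by exact hadm)]
          exact zero_le
      calc ∑' Pv : Finset ℕ, F (m₂, T', Pv)
          ≤ ∑' Pv : Finset ℕ, (if Pv ∈ (insert m₂ T').powerset then W else 0) :=
            ENNReal.tsum_le_tsum hpt
        _ = ∑ Pv ∈ (insert m₂ T').powerset, W := by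
            rw [tsum_eq_sum (s := (insert m₂ T').powerset) (fun Pv h => if_neg h)]
            exact Finset.sum_congr rfl (fun Pv h => if_pos h)
        _ = ((insert m₂ T').powerset.card : ℝ≥0∞) * W := by
            rw [Finset.sum_const, nsmul_eq_mul]
        _ = G m₂ T' := by
            simp only [hG]
            rw [if_pos ⟨hm₂M, hT'k, hT'card⟩]
            congr 1
            rw [Finset.card_powerset, Finset.card_insert_of_notMem hm₂nT, hT'card]
            have : n - 2 + 1 = n - 1 := by omega
            rw [this]
            push_cast
            rfl
    · have hzero : ∀ Pv : Finset ℕ, F (m₂, T', Pv) = 0 := by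
        intro Pv
        simp only [hF]
        apply Set.indicator_of_notMem
        intro hadm
        exact hbase ⟨hadm.1, hadm.2.1, hadm.2.2.1⟩
      calc ∑' Pv : Finset ℕ, F (m₂, T', Pv) = ∑' _ : Finset ℕ, (0:ℝ≥0∞) := by
            exact tsum_congr hzero
        _ = 0 := tsum_zero
        _ ≤ G m₂ T' := zero_le
  -- Claim 2 : the sum over T'
  have claim2 : ∀ m₂ : ℕ, ∑' T' : Finset ℕ, G m₂ T' ≤ H m₂ := by
    intro m₂
    by_cases hm : M ≤ m₂
    · have hm₂16 : 16 ≤ m₂ := le_trans hM16 hm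
      have hm₂R : (16:ℝ) ≤ (m₂:ℝ) := by exact_mod_cast hm₂16
      have hm₂pos : (0:ℝ) < (m₂:ℝ) := by linarith
      have hlogm₂ : (0:ℝ) < Real.log m₂ := lt_trans one_pos (one_lt_log hm₂R)
      have hvanish : ∀ T' ∉ (Finset.Ico M m₂).powersetCard (n-2), G m₂ T' = 0 := by
        intro T' hT'
        simp only [hG]
        apply if_neg
        intro ⟨h1, h2, h3⟩
        apply hT'
        rw [Finset.mem_powersetCard]
        refine ⟨fun k hk => ?_, h3⟩
        rw [Finset.mem_Ico]
        exact (h2 k hk)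
      rw [tsum_eq_sum hvanish]
      have hsum_in : ∑ k ∈ Finset.Ico M m₂, ENNReal.ofReal (δ k)
          ≤ ENNReal.ofReal (c * Real.log m₂ ^ (α+1)) := by
        rw [← ENNReal.ofReal_sum_of_nonneg (fun k hk => by
          rw [Finset.mem_Ico] at hk
          exact hδ0 k (le_trans hM16 hk.1))]
        apply ENNReal.ofReal_le_ofReal
        calc ∑ k ∈ Finset.Ico M m₂, δ k
            ≤ ∑ k ∈ Finset.Ico M m₂, c * Real.log k ^ α / k := by
              apply Finset.sum_le_sum
              intro k hk
              rw [Finset.mem_Ico] at hk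
              exact hδle k (le_trans hM16 hk.1)
          _ ≤ c * Real.log m₂ ^ (α+1) := partial_sum_le hc (by linarith) hM16 hm₂16
      have hesymm : ∑ T' ∈ (Finset.Ico M m₂).powersetCard (n-2),
            ∏ k ∈ T', ENNReal.ofReal (δ k)
          ≤ ENNReal.ofReal ((c * Real.log m₂ ^ (α+1))^(n-2) / ((n-2).factorial : ℝ)) := by
        have h1 := esymm_le (fun k => ENNReal.ofReal (δ k)) (Finset.Ico M m₂) (n-2)
        have h2 : ∑ T' ∈ (Finset.Ico M m₂).powersetCard (n-2), ∏ k ∈ T', ENNReal.ofReal (δ k)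
            ≤ (∑ k ∈ Finset.Ico M m₂, ENNReal.ofReal (δ k))^(n-2)
              / (((n-2).factorial : ℕ) : ℝ≥0∞) := by
          rw [ENNReal.le_div_iff_mul_le
            (Or.inl (by exact_mod_cast (Nat.factorial_pos (n-2)).ne'))
            (Or.inl (ENNReal.natCast_ne_top _))]
          rw [mul_comm]
          exact h1
        calc ∑ T' ∈ (Finset.Ico M m₂).powersetCard (n-2), ∏ k ∈ T', ENNReal.ofReal (δ k)
            ≤ (∑ k ∈ Finset.Ico M m₂, ENNReal.ofReal (δ k))^(n-2)
              / (((n-2).factorial : ℕ) : ℝ≥0∞) := h2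
          _ ≤ (ENNReal.ofReal (c * Real.log m₂ ^ (α+1)))^(n-2)
              / (((n-2).factorial : ℕ) : ℝ≥0∞) := by
              apply ENNReal.div_le_div_right
              exact pow_le_pow_left₀ (zero_le) hsum_in _
          _ = ENNReal.ofReal ((c * Real.log m₂ ^ (α+1))^(n-2) / ((n-2).factorial : ℝ)) := by
              rw [ENNReal.ofReal_div_of_pos hfacpos, ENNReal.ofReal_pow (by positivity)]
              congr 1
              exact (ENNReal.ofReal_natCast _).symm
      calc ∑ T' ∈ (Finset.Ico M m₂).powersetCard (n-2), G m₂ T'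
          ≤ ∑ T' ∈ (Finset.Ico M m₂).powersetCard (n-2),
              (2:ℝ≥0∞)^(n-1) * (ENNReal.ofReal (c * Real.log m₂ ^ α / m₂)
                * (ENNReal.ofReal (δ m₂) * ∏ k ∈ T', ENNReal.ofReal (δ k))) := by
            apply Finset.sum_le_sum
            intro T' hT'
            simp only [hG]
            split
            · exact le_refl _
            · exact zero_le
        _ = (2:ℝ≥0∞)^(n-1) * (ENNReal.ofReal (c * Real.log m₂ ^ α / m₂)
              * (ENNReal.ofReal (δ m₂)
                * ∑ T' ∈ (Finset.Ico M m₂).powersetCard (n-2),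
                    ∏ k ∈ T', ENNReal.ofReal (δ k))) := by
            simp only [Finset.mul_sum]
        _ ≤ (2:ℝ≥0∞)^(n-1) * (ENNReal.ofReal (c * Real.log m₂ ^ α / m₂)
              * (ENNReal.ofReal (δ m₂)
                * ENNReal.ofReal ((c * Real.log m₂ ^ (α+1))^(n-2) / ((n-2).factorial : ℝ)))) := by
            apply mul_le_mul_right
            apply mul_le_mul_right
            apply mul_le_mul_right
            exact hesymm
        _ ≤ (2:ℝ≥0∞)^(n-1) * (ENNReal.ofReal (c * Real.log m₂ ^ α / m₂)
              * (ENNReal.ofReal (c * Real.log m₂ ^ α / m₂)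
                * ENNReal.ofReal ((c * Real.log m₂ ^ (α+1))^(n-2) / ((n-2).factorial : ℝ)))) := by
            apply mul_le_mul_right
            apply mul_le_mul_right
            apply mul_le_mul_left
            exact ENNReal.ofReal_le_ofReal (hδle m₂ hm₂16)
        _ = H m₂ := by
            simp only [hH]; rw [if_pos hm]
            congr 1
            rw [← ENNReal.ofReal_mul (by positivity), ← ENNReal.ofReal_mul (by positivity)]
    · have hzero : ∀ T' : Finset ℕ, G m₂ T' = 0 := by
        intro T'
        simp only [hG]
        apply if_neg
        intro ⟨h1, _, _⟩
        exact hm h1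
      calc ∑' T' : Finset ℕ, G m₂ T' = ∑' _ : Finset ℕ, (0:ℝ≥0∞) := tsum_congr hzero
        _ = 0 := tsum_zero
        _ ≤ H m₂ := zero_le
  -- Claim 3 : sum over m₂
  have hγ0 : 0 ≤ gammaExp α n := gammaExp_nonneg hα n
  have claim3 : ∀ m₂ : ℕ, H m₂ ≤ (2:ℝ≥0∞)^(n-1) * ENNReal.ofReal (c^n / ((n-2).factorial : ℝ))
      * (if M ≤ m₂ then ENNReal.ofReal (Real.log m₂ ^ gammaExp α n / (m₂:ℝ)^2) else 0) := by
    intro m₂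
    simp only [hH]
    by_cases hm : M ≤ m₂
    · rw [if_pos hm, if_pos hm]
      have hm₂16 : 16 ≤ m₂ := le_trans hM16 hm
      have hper := per_m_bound hα hc (show 4 ≤ n by omega) hm₂16
      calc (2:ℝ≥0∞)^(n-1) * ENNReal.ofReal ((c * Real.log m₂ ^ α / m₂)
            * ((c * Real.log m₂ ^ α / m₂)
               * ((c * Real.log m₂ ^ (α+1))^(n-2) / ((n-2).factorial : ℝ))))
          ≤ (2:ℝ≥0∞)^(n-1) * ENNReal.ofReal ((c^n / ((n-2).factorial : ℝ))
              * (Real.log m₂ ^ gammaExp α n / (m₂:ℝ)^2)) := by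
            apply mul_le_mul_right
            exact ENNReal.ofReal_le_ofReal hper
        _ = (2:ℝ≥0∞)^(n-1) * ENNReal.ofReal (c^n / ((n-2).factorial : ℝ))
              * ENNReal.ofReal (Real.log m₂ ^ gammaExp α n / (m₂:ℝ)^2) := by
            rw [ENNReal.ofReal_mul (by positivity), mul_assoc]
    · rw [if_neg hm, if_neg hm, mul_zero]
  have htail := tail_sum_le hγ0 hM16 hCγ
  -- assemble
  calc ∑' t : ℕ × Finset ℕ × Finset ℕ, F t
      = ∑' m₂ : ℕ, ∑' q : Finset ℕ × Finset ℕ, F (m₂, q) := ENNReal.tsum_prod'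
    _ = ∑' m₂ : ℕ, ∑' T' : Finset ℕ, ∑' Pv : Finset ℕ, F (m₂, T', Pv) :=
        tsum_congr (fun m₂ => ENNReal.tsum_prod')
    _ ≤ ∑' m₂ : ℕ, H m₂ := by
        apply ENNReal.tsum_le_tsum
        intro m₂
        calc ∑' T' : Finset ℕ, ∑' Pv : Finset ℕ, F (m₂, T', Pv)
            ≤ ∑' T' : Finset ℕ, G m₂ T' := ENNReal.tsum_le_tsum (claim1 m₂)
          _ ≤ H m₂ := claim2 m₂
    _ ≤ ∑' m₂ : ℕ, (2:ℝ≥0∞)^(n-1) * ENNReal.ofReal (c^n / ((n-2).factorial : ℝ))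
          * (if M ≤ m₂ then ENNReal.ofReal (Real.log m₂ ^ gammaExp α n / (m₂:ℝ)^2) else 0) :=
        ENNReal.tsum_le_tsum claim3
    _ = (2:ℝ≥0∞)^(n-1) * ENNReal.ofReal (c^n / ((n-2).factorial : ℝ))
          * ∑' m₂ : ℕ, (if M ≤ m₂ then ENNReal.ofReal (Real.log m₂ ^ gammaExp α n / (m₂:ℝ)^2) else 0) :=
        ENNReal.tsum_mul_left
    _ ≤ (2:ℝ≥0∞)^(n-1) * ENNReal.ofReal (c^n / ((n-2).factorial : ℝ))
          * ENNReal.ofReal (3 * Real.log M ^ gammaExp α n / M) := by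
        apply mul_le_mul_right
        exact htail
    _ = ENNReal.ofReal ((2:ℝ)^(n-1) * c^n / ((n-2).factorial : ℝ)
          * (3 * Real.log M ^ gammaExp α n / (M:ℝ))) := by
        have h2 : (2:ℝ≥0∞)^(n-1) = ENNReal.ofReal ((2:ℝ)^(n-1)) := by
          rw [ENNReal.ofReal_pow (by norm_num)]
          norm_num
        rw [h2, ← ENNReal.ofReal_mul (by positivity), ← ENNReal.ofReal_mul (by positivity)]
        congr 1
        ring
end Chain

set_option maxHeartbeats 1000000 in
/-- **Almost surely, no long relations far out.** For `α > 1`, `β > α`, `M_n = n^{βn}`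
and the random set `Λ(ω)` of selectors of mean `δ_k = c (log k)^α / (k (log log k)^{α+1})`
(`k ≥ 16`), almost surely, for all sufficiently large `n`, the set `Λ(ω) ∩ [M_n, ∞)`
contains no relation of length `n`. -/
theorem random_set_eventually_no_relation
    {Ω : Type} [MeasurableSpace Ω] {P : Measure Ω} [IsProbabilityMeasure P]
    (α β c : ℝ) (hα : 1 < α) (hβ : α < β)
    (hc : 0 < c) (hcsmall : ∀ k : ℕ, 16 ≤ k → selectorMean c α k ≤ 1)
    (ε : ℕ → Ω → ℝ) (hmeas : ∀ k, Measurable (ε k))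
    (hindep : iIndepFun (fun k : {k : ℕ // 16 ≤ k} => ε k) P)
    (hval : ∀ k : ℕ, 16 ≤ k → ∀ ω, ε k ω = 0 ∨ ε k ω = 1)
    (hmean : ∀ k : ℕ, 16 ≤ k → ∫ ω, ε k ω ∂P = selectorMean c α k)
    (Λ : Ω → Set ℕ) (hΛ : ∀ ω, Λ ω = {k : ℕ | 16 ≤ k ∧ ε k ω = 1}) :
    ∀ᵐ ω ∂P, ∃ n₀ : ℕ, ∀ n : ℕ, n₀ ≤ n →
      ¬ HasRelationOfLength (Λ ω ∩ {k : ℕ | Mseq β n ≤ (k : ℝ)}) n := by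
  classical
  set δ : ℕ → ℝ := selectorMean c α with hδdef
  set E : ℕ → Set Ω := fun k => ε k ⁻¹' {1} with hE
  have hmeasE : ∀ k, MeasurableSet (E k) := fun k => hmeas k (measurableSet_singleton 1)
  -- single-event probabilities
  have hPE : ∀ k, 16 ≤ k → P (E k) = ENNReal.ofReal (δ k) := by
    intro k hk
    have hind : ε k = (E k).indicator (fun _ => (1:ℝ)) := by
      funext ω
      rcases hval k hk ω with h | h
      · rw [h, Set.indicator_of_notMem]
        intro hmem
        rw [hE] at hmem
        simp only [Set.mem_preimage, Set.mem_singleton_iff] at hmem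
        rw [h] at hmem
        norm_num at hmem
      · have hmem : ω ∈ E k := by
          rw [hE]
          simp only [Set.mem_preimage, Set.mem_singleton_iff]
          exact h
        rw [h, Set.indicator_of_mem hmem]
    have h2 := hmean k hk
    rw [hind, MeasureTheory.integral_indicator_const (1:ℝ) (hmeasE k)] at h2
    rw [smul_eq_mul, mul_one] at h2
    rw [← h2, measureReal_def, ENNReal.ofReal_toReal (measure_ne_top P _)]
  -- product formula from independence
  have hProd : ∀ S : Finset ℕ, (∀ k ∈ S, 16 ≤ k) →
      P (⋂ k ∈ S, E k) = ∏ k ∈ S, ENNReal.ofReal (δ k) := by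
    intro S hS
    set emb : {x // x ∈ S} ↪ {k : ℕ // 16 ≤ k} :=
      ⟨fun x => ⟨x.1, hS x.1 x.2⟩, by
        intro a b hab
        simp only [Subtype.mk.injEq] at hab
        exact Subtype.ext hab⟩ with hemb
    set S' : Finset {k : ℕ // 16 ≤ k} := S.attach.map emb with hS'
    have h := hindep.measure_inter_preimage_eq_mul S'
      (sets := fun _ => ({1} : Set ℝ)) (fun i _ => measurableSet_singleton 1)
    have hset : (⋂ i ∈ S', (fun k : {k : ℕ // 16 ≤ k} => ε k.1) i ⁻¹' {1})
        = ⋂ k ∈ S, E k := by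
      ext ω
      simp only [Set.mem_iInter]
      constructor
      · intro hmem k hk
        have : (⟨k, hS k hk⟩ : {k : ℕ // 16 ≤ k}) ∈ S' := by
          rw [hS', Finset.mem_map]
          exact ⟨⟨k, hk⟩, Finset.mem_attach _ _, rfl⟩
        exact hmem _ this
      · intro hmem i hi
        rw [hS', Finset.mem_map] at hi
        obtain ⟨x, _, rfl⟩ := hi
        exact hmem x.1 x.2
    have hprodeq : ∏ i ∈ S', P ((fun k : {k : ℕ // 16 ≤ k} => ε k.1) i ⁻¹' {1})
        = ∏ k ∈ S, ENNReal.ofReal (δ k) := by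
      rw [hS', Finset.prod_map]
      rw [← Finset.prod_attach S (fun k => ENNReal.ofReal (δ k))]
      apply Finset.prod_congr rfl
      intro x _
      rw [hemb]
      simp only [Function.Embedding.coeFn_mk]
      exact hPE x.1 (hS x.1 x.2)
    rw [← hset, h, hprodeq]
  -- the bad events
  set B : ℕ → Set Ω :=
    fun n => {ω | HasRelationOfLength (Λ ω ∩ {k : ℕ | Mseq β n ≤ (k:ℝ)}) n} with hB
  -- probability bound for good n
  have hPB : ∀ n : ℕ, 16 ≤ n → α ≤ Real.log (M0 β n) →
      (gammaExp α n + gammaExp α n ≤ Real.log (M0 β n)) →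
      ((2:ℝ)^(n-1) * c^n / ((n-2).factorial : ℝ)
        * (3 * Real.log (M0 β n) ^ gammaExp α n / (M0 β n)) ≤ (1/2)^n) →
      P (B n) ≤ ENNReal.ofReal ((1/2)^n) := by
    intro n hn16 hCα hCγ hfinal
    have hsub := relation_subset_event E β n (by omega) Λ (by
      intro ω
      rw [hΛ ω]
      rfl)
    have hAdm16 : ∀ t : ℕ × Finset ℕ × Finset ℕ, Adm β n t →
        ∀ k ∈ insert (detM (insert t.1 t.2.1) t.2.2) (insert t.1 t.2.1), 16 ≤ k := by
      intro t hadm k hk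
      obtain ⟨h1, h2, h3, h4, h5⟩ := hadm
      have hM16 : 16 ≤ M0 β n := M0_ge16 β n
      rw [Finset.mem_insert, Finset.mem_insert] at hk
      rcases hk with h | h | h
      · omega
      · omega
      · have := (h2 k h).1; omega
    calc P (B n)
        ≤ P (⋃ t : {t : ℕ × Finset ℕ × Finset ℕ // Adm β n t},
            ⋂ k ∈ insert (detM (insert t.1.1 t.1.2.1) t.1.2.2) (insert t.1.1 t.1.2.1), E k) :=
          measure_mono hsub
      _ ≤ ∑' t : {t : ℕ × Finset ℕ × Finset ℕ // Adm β n t},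
            P (⋂ k ∈ insert (detM (insert t.1.1 t.1.2.1) t.1.2.2) (insert t.1.1 t.1.2.1), E k) :=
          measure_iUnion_le _
      _ = ∑' t : {t : ℕ × Finset ℕ × Finset ℕ // Adm β n t},
            (fun t : ℕ × Finset ℕ × Finset ℕ =>
              ∏ k ∈ insert (detM (insert t.1 t.2.1) t.2.2) (insert t.1 t.2.1),
                ENNReal.ofReal (δ k)) t.1 := by
          apply tsum_congr
          intro t
          exact hProd _ (hAdm16 t.1 t.2)
      _ = ∑' t : ℕ × Finset ℕ × Finset ℕ,
            ({t : ℕ × Finset ℕ × Finset ℕ | Adm β n t}.indicator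
              (fun t => ∏ k ∈ insert (detM (insert t.1 t.2.1) t.2.2) (insert t.1 t.2.1),
                ENNReal.ofReal (δ k)) t) :=
          tsum_subtype {t : ℕ × Finset ℕ × Finset ℕ | Adm β n t}
            (fun t => ∏ k ∈ insert (detM (insert t.1 t.2.1) t.2.2) (insert t.1 t.2.1),
              ENNReal.ofReal (δ k))
      _ ≤ ENNReal.ofReal ((2:ℝ)^(n-1) * c^n / ((n-2).factorial : ℝ)
            * (3 * Real.log (M0 β n) ^ gammaExp α n / (M0 β n))) :=
          chain_bound hα (by linarith) hc δ
            (fun k hk => selectorMean_nonneg hc hk)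
            (fun k hk => selectorMean_le hc (by linarith) hk)
            hn16 hCα hCγ
      _ ≤ ENNReal.ofReal ((1/2)^n) := ENNReal.ofReal_le_ofReal hfinal
  -- choose the threshold
  obtain ⟨N, hN⟩ := Filter.eventually_atTop.mp (eventually_good hα hβ hc)
  set s : ℕ → Set Ω := fun n => if N ≤ n then B n else ∅ with hs
  have h12 : ENNReal.ofReal ((1:ℝ)/2) = 2⁻¹ := by
    rw [ENNReal.ofReal_div_of_pos (by norm_num)]
    norm_num
  have hle : ∀ n, P (s n) ≤ (2⁻¹ : ℝ≥0∞)^n := by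
    intro n
    rw [hs]
    by_cases h : N ≤ n
    · simp only [if_pos h]
      obtain ⟨h16, hCα, hCγ, hfinal⟩ := hN n h
      calc P (B n) ≤ ENNReal.ofReal ((1/2)^n) := hPB n h16 hCα hCγ hfinal
        _ = (2⁻¹ : ℝ≥0∞)^n := by rw [ENNReal.ofReal_pow (by norm_num), h12]
    · simp only [if_neg h]
      simp
  have hsum : (∑' n, P (s n)) ≠ ⊤ := by
    have h1 : (∑' n, P (s n)) ≤ ∑' n : ℕ, (2⁻¹ : ℝ≥0∞)^n := ENNReal.tsum_le_tsum hle
    have h2 : (∑' n : ℕ, (2⁻¹ : ℝ≥0∞)^n) = (1 - 2⁻¹ : ℝ≥0∞)⁻¹ :=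
      ENNReal.tsum_geometric _
    have h3 : ((1 - 2⁻¹ : ℝ≥0∞))⁻¹ ≠ ⊤ := by
      rw [ENNReal.one_sub_inv_two]
      simp
    rw [h2] at h1
    exact ne_top_of_le_ne_top h3 h1
  have hae := MeasureTheory.ae_eventually_notMem hsum
  filter_upwards [hae] with ω hω
  obtain ⟨N₂, hN₂⟩ := Filter.eventually_atTop.mp hω
  refine ⟨max N N₂, fun n hn => ?_⟩
  have h1 := hN₂ n (le_trans (le_max_right _ _) hn)
  have h2 : N ≤ n := le_trans (le_max_left _ _) hn
  rw [hs] at h1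
  simp only [if_pos h2] at h1
  intro hrel
  exact h1 hrel
end
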